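/- arXiv:math/0111034 — 2 statements merged into one kernel-verified Lean document; each statement's English description precedes it below -/
import Mathlib

section
/- Iterated reduction formula: let ω_n be a nonnegative real weight function on the edges of A_n, and recursively define ω_{k−1} on A_{k−1} from ω_k on A_k by the Aztec reduction rule ω_{k−1}(e) = ω_k(opp(e)) / D_{ω_k}(c(e)) for k = n, n−1, …, 1, assuming every cell-factor D_{ω_k}(c) encountered is nonzero. Then M(A_n, ω_n) = ∏_{k=1}^{n} ∏_{c a cell of A_k} D_{ω_k}(c); in particular M(A_n, ω_n) is a product of n² + (n−1)² + ⋯ + 2² + 1² cell-factors. -/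
open scoped Classical

/-- A finset `M` of edges is a perfect matching of the graph `G` relative to the
vertex set `S`: every edge of `M` is an edge of `G`, and every vertex of `S`
belongs to exactly one edge of `M`. -/
def IsPM {V : Type} (G : SimpleGraph V) (S : Set V) (M : Finset (Sym2 V)) : Prop :=
  (∀ e ∈ M, e ∈ G.edgeSet) ∧ ∀ v ∈ S, ∃! e, e ∈ M ∧ v ∈ e

/-- `mSum G S ω` is the sum, over all perfect matchings `M` of `G` relative to the
vertex set `S`, of the product of the `ω`-weights of the edges of `M`. -/
noncomputable def mSum {V : Type} (G : SimpleGraph V) (S : Set V) (ω : Sym2 V → ℝ) : ℝ :=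
  ∑ᶠ M ∈ {M : Finset (Sym2 V) | IsPM G S M}, ∏ e ∈ M, ω e

/-- The vertex set of the Aztec diamond graph of order `n`. -/
def aztecSet (n : ℕ) : Set (ℤ × ℤ) :=
  {v | Odd (v.1 + v.2) ∧ |v.1| ≤ (n : ℤ) ∧ |v.2| ≤ (n : ℤ)}

/-- The Aztec diamond graph of order `n`, realized as a graph on `ℤ × ℤ`:
two vertices of the diamond are adjacent exactly when their Euclidean
distance is `√2`. -/
def aztec (n : ℕ) : SimpleGraph (ℤ × ℤ) where
  Adj u v := u ∈ aztecSet n ∧ v ∈ aztecSet n ∧ (u.1 - v.1) ^ 2 + (u.2 - v.2) ^ 2 = 2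
  symm := by
    constructor
    rintro u v ⟨hu, hv, h⟩
    exact ⟨hv, hu, by linear_combination h⟩
  loopless := by
    constructor
    rintro u ⟨-, -, h⟩
    simp at h

/-- `(p, q)` is the center of a cell of the Aztec diamond graph of order `n`:
`p ≡ q ≡ n + 1 (mod 2)`, `|p| ≤ n − 1` and `|q| ≤ n − 1`. -/
def IsCellCenter (n : ℕ) (p q : ℤ) : Prop :=
  (p - ((n : ℤ) + 1)) % 2 = 0 ∧ (q - ((n : ℤ) + 1)) % 2 = 0 ∧
    |p| ≤ (n : ℤ) - 1 ∧ |q| ≤ (n : ℤ) - 1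

/-- The NW edge of the cell with center `(p, q)`. -/
def nwEdge (p q : ℤ) : Sym2 (ℤ × ℤ) := s((p, q + 1), (p - 1, q))

/-- The NE edge of the cell with center `(p, q)`. -/
def neEdge (p q : ℤ) : Sym2 (ℤ × ℤ) := s((p, q + 1), (p + 1, q))

/-- The SW edge of the cell with center `(p, q)`. -/
def swEdge (p q : ℤ) : Sym2 (ℤ × ℤ) := s((p - 1, q), (p, q - 1))

/-- The SE edge of the cell with center `(p, q)`. -/
def seEdge (p q : ℤ) : Sym2 (ℤ × ℤ) := s((p + 1, q), (p, q - 1))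

/-- The cell-factor `D_ω` of the cell with center `(p, q)`:
`ω(NW)·ω(SE) + ω(NE)·ω(SW)`. -/
noncomputable def cellFactor (ω : Sym2 (ℤ × ℤ) → ℝ) (p q : ℤ) : ℝ :=
  ω (nwEdge p q) * ω (seEdge p q) + ω (neEdge p q) * ω (swEdge p q)

namespace AztecRed

noncomputable section

abbrev V := ℤ × ℤ

lemma mem_aztecSet' {k : ℕ} {v : V} :
    v ∈ aztecSet k ↔ (v.1 + v.2) % 2 = 1 ∧ |v.1| ≤ (k : ℤ) ∧ |v.2| ≤ (k : ℤ) := by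
  simp [aztecSet, Int.odd_iff, Set.mem_setOf_eq]

lemma adj_iff {k : ℕ} {u v : V} :
    (aztec k).Adj u v ↔ u ∈ aztecSet k ∧ v ∈ aztecSet k ∧
      (u.1 - v.1) ^ 2 + (u.2 - v.2) ^ 2 = 2 := Iff.rfl

lemma sq2 {a b : ℤ} (h : a ^ 2 + b ^ 2 = 2) : (a = 1 ∨ a = -1) ∧ (b = 1 ∨ b = -1) := by
  have ha : a ≤ 1 := by nlinarith [sq_nonneg b]
  have ha' : -1 ≤ a := by nlinarith [sq_nonneg b]
  have hb : b ≤ 1 := by nlinarith [sq_nonneg a]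
  have hb' : -1 ≤ b := by nlinarith [sq_nonneg a]
  interval_cases a <;> interval_cases b <;> simp_all

/-- The centers of the cells of `A_k`, as a finset. -/
def ctr (k : ℕ) : Finset V :=
  ((Finset.Icc (-(k : ℤ)) k) ×ˢ (Finset.Icc (-(k : ℤ)) k)).filter
    (fun c => IsCellCenter k c.1 c.2)

lemma mem_ctr {k : ℕ} {c : V} : c ∈ ctr k ↔ IsCellCenter k c.1 c.2 := by
  constructor
  · exact fun h => (Finset.mem_filter.mp h).2
  · intro h
    obtain ⟨h1, h2, h3, h4⟩ := h
    refine Finset.mem_filter.mpr ⟨?_, h1, h2, h3, h4⟩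
    rw [abs_le] at h3 h4
    simp only [Finset.mem_product, Finset.mem_Icc]
    constructor <;> omega

/-- The four edges of the cell with center `c`. -/
def cE (c : V) : Finset (Sym2 V) :=
  {nwEdge c.1 c.2, neEdge c.1 c.2, swEdge c.1 c.2, seEdge c.1 c.2}

/-- The `+` pair (NW,SE) of a cell. -/
def pT (c : V) : Finset (Sym2 V) := {nwEdge c.1 c.2, seEdge c.1 c.2}

/-- The `−` pair (NE,SW) of a cell. -/
def pF (c : V) : Finset (Sym2 V) := {neEdge c.1 c.2, swEdge c.1 c.2}

/-- The four vertices of the cell with center `c`. -/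
def cV (c : V) : Finset V :=
  {(c.1, c.2 + 1), (c.1 - 1, c.2), (c.1 + 1, c.2), (c.1, c.2 - 1)}

/-- Point reflection through the center of a cell; sends each cell edge to
the opposite cell edge. -/
def oppc (c : V) : Sym2 V → Sym2 V :=
  Sym2.map (fun x => (2 * c.1 - x.1, 2 * c.2 - x.2))

lemma oppc_nw (c : V) : oppc c (nwEdge c.1 c.2) = seEdge c.1 c.2 := by
  simp only [oppc, nwEdge, seEdge, Sym2.map_pair_eq, Sym2.eq_iff, Prod.ext_iff]
  right; constructor <;> constructor <;> ring

lemma oppc_se (c : V) : oppc c (seEdge c.1 c.2) = nwEdge c.1 c.2 := by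
  simp only [oppc, nwEdge, seEdge, Sym2.map_pair_eq, Sym2.eq_iff, Prod.ext_iff]
  right; constructor <;> constructor <;> ring

lemma oppc_ne (c : V) : oppc c (neEdge c.1 c.2) = swEdge c.1 c.2 := by
  simp only [oppc, neEdge, swEdge, Sym2.map_pair_eq, Sym2.eq_iff, Prod.ext_iff]
  right; constructor <;> constructor <;> ring

lemma oppc_sw (c : V) : oppc c (swEdge c.1 c.2) = neEdge c.1 c.2 := by
  simp only [oppc, neEdge, swEdge, Sym2.map_pair_eq, Sym2.eq_iff, Prod.ext_iff]
  right; constructor <;> constructor <;> ring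

end

end AztecRed
namespace AztecRed

noncomputable section

lemma ne_nw_se (c : V) : nwEdge c.1 c.2 ≠ seEdge c.1 c.2 := by
  simp only [ne_eq, nwEdge, seEdge, Sym2.eq_iff, Prod.ext_iff, not_or]
  omega

lemma ne_ne_sw (c : V) : neEdge c.1 c.2 ≠ swEdge c.1 c.2 := by
  simp only [ne_eq, neEdge, swEdge, Sym2.eq_iff, Prod.ext_iff, not_or]
  omega

lemma ne_nw_ne (c : V) : nwEdge c.1 c.2 ≠ neEdge c.1 c.2 := by
  simp only [ne_eq, nwEdge, neEdge, Sym2.eq_iff, Prod.ext_iff, not_or]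
  omega

lemma ne_nw_sw (c : V) : nwEdge c.1 c.2 ≠ swEdge c.1 c.2 := by
  simp only [ne_eq, nwEdge, swEdge, Sym2.eq_iff, Prod.ext_iff, not_or]
  omega

lemma ne_ne_se (c : V) : neEdge c.1 c.2 ≠ seEdge c.1 c.2 := by
  simp only [ne_eq, neEdge, seEdge, Sym2.eq_iff, Prod.ext_iff, not_or]
  omega

lemma ne_sw_se (c : V) : swEdge c.1 c.2 ≠ seEdge c.1 c.2 := by
  simp only [ne_eq, swEdge, seEdge, Sym2.eq_iff, Prod.ext_iff, not_or]
  omega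

lemma mem_cE {c : V} {e : Sym2 V} :
    e ∈ cE c ↔ e = nwEdge c.1 c.2 ∨ e = neEdge c.1 c.2 ∨ e = swEdge c.1 c.2 ∨
      e = seEdge c.1 c.2 := by
  simp [cE]

lemma mem_cV {c w : V} :
    w ∈ cV c ↔ w = (c.1, c.2 + 1) ∨ w = (c.1 - 1, c.2) ∨ w = (c.1 + 1, c.2) ∨
      w = (c.1, c.2 - 1) := by
  simp [cV]

lemma mem_of_mem_cE {c : V} {e : Sym2 V} (he : e ∈ cE c) {w : V} (hw : w ∈ e) :
    w ∈ cV c := by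
  rw [mem_cE] at he
  rw [mem_cV]
  rcases he with rfl | rfl | rfl | rfl <;>
    simp only [nwEdge, neEdge, swEdge, seEdge, Sym2.mem_iff] at hw <;> tauto

lemma cV_mem_aztecSet {k : ℕ} {c : V} (hc : IsCellCenter k c.1 c.2) {w : V}
    (hw : w ∈ cV c) : w ∈ aztecSet k := by
  obtain ⟨h1, h2, h3, h4⟩ := hc
  rw [abs_le] at h3 h4
  simp only [mem_aztecSet', abs_le]
  rw [mem_cV] at hw
  rcases hw with rfl | rfl | rfl | rfl <;> dsimp only <;> omega

lemma cE_mem_edgeSet {k : ℕ} {c : V} (hc : IsCellCenter k c.1 c.2) {e : Sym2 V}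
    (he : e ∈ cE c) : e ∈ (aztec k).edgeSet := by
  rw [mem_cE] at he
  have hv : ∀ w ∈ cV c, w ∈ aztecSet k := fun w hw => cV_mem_aztecSet hc hw
  rcases he with rfl | rfl | rfl | rfl <;>
    refine ((aztec k).mem_edgeSet).mpr ⟨hv _ (by rw [mem_cV]; tauto),
      hv _ (by rw [mem_cV]; tauto), by dsimp only; ring⟩

lemma mem_aztecSet_of_mem_edge {k : ℕ} {e : Sym2 V} (he : e ∈ (aztec k).edgeSet)
    {w : V} (hw : w ∈ e) : w ∈ aztecSet k := by
  induction e using Sym2.inductionOn with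
  | hf u v =>
    rw [SimpleGraph.mem_edgeSet] at he
    rw [Sym2.mem_iff] at hw
    rcases hw with rfl | rfl
    · exact he.1
    · exact he.2.1

/-- Every edge of `A_k` lies in (at least) one cell of `A_k`. -/
lemma exists_cell {k : ℕ} {e : Sym2 V} (he : e ∈ (aztec k).edgeSet) :
    ∃ c ∈ ctr k, e ∈ cE c := by
  induction e using Sym2.inductionOn with
  | hf u v =>
    rw [SimpleGraph.mem_edgeSet] at he
    obtain ⟨hu, hv, hd⟩ := he
    rw [mem_aztecSet'] at hu hv
    obtain ⟨hu1, hu2, hu3⟩ := hu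
    obtain ⟨hv1, hv2, hv3⟩ := hv
    rw [abs_le] at hu2 hu3 hv2 hv3
    obtain ⟨hx, hy⟩ := sq2 hd
    by_cases hp : (u.1 - ((k : ℤ) + 1)) % 2 = 0
    · -- u.1 has center-column parity: center x-coordinate is u.1 or v.1(= u.1∓1)±? ;
      -- center is (u.1, ·)
      rcases hx with hx | hx <;> rcases hy with hy | hy
      · -- v = u - (1,1): center (u.1, v.2), e = nwEdge
        refine ⟨(u.1, v.2), mem_ctr.mpr ⟨by dsimp only; omega, by dsimp only; omega,
          by dsimp only; rw [abs_le]; omega, by dsimp only; rw [abs_le]; omega⟩, ?_⟩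
        rw [mem_cE]; left
        rw [nwEdge, Sym2.eq_iff]; left
        constructor <;> dsimp only <;> rw [Prod.ext_iff] <;> constructor <;> omega
      · -- v = u - (1,-1): center (u.1, v.2)? v.2 = u.2+1; center (u.1, u.2)=? center (u.1, v.2 - 2)?
        -- u.2 - v.2 = -1, v = (u.1 - 1, u.2 + 1): e = swEdge (u.1) (u.2+1): sw p q = ((p-1,q),(p,q-1)):
        -- with (p,q) = (u.1, u.2+1): ((u.1-1, u.2+1), (u.1, u.2)) = (v, u) ✓
        refine ⟨(u.1, u.2 + 1), mem_ctr.mpr ⟨by dsimp only; omega, by dsimp only; omega,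
          by dsimp only; rw [abs_le]; omega, by dsimp only; rw [abs_le]; omega⟩, ?_⟩
        rw [mem_cE]; right; right; left
        rw [swEdge, Sym2.eq_iff]; right
        constructor <;> dsimp only <;> rw [Prod.ext_iff] <;> constructor <;> omega
      · -- v = u + (1, -1)?? hx : u.1 - v.1 = -1, hy: u.2 - v.2 = 1: v = (u.1+1, u.2-1)
        -- e = seEdge (u.1) (u.2 - 1)?? se p q = ((p+1, q), (p, q-1)) with (p,q)=(u.1, u.2):
        -- ((u.1+1, u.2),(u.1, u.2-1)): no. take (p,q) = (u.1, u.2-1): ((u.1+1,u.2-1),(u.1,u.2-2)) no.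
        -- u = (p, q+1), v = (p+1, q): that's neEdge p q with p = u.1, q = u.2 - 1: ne = ((p,q+1),(p+1,q))
        -- = ((u.1, u.2), (u.1+1, u.2-1)) = (u, v) ✓
        refine ⟨(u.1, u.2 - 1), mem_ctr.mpr ⟨by dsimp only; omega, by dsimp only; omega,
          by dsimp only; rw [abs_le]; omega, by dsimp only; rw [abs_le]; omega⟩, ?_⟩
        rw [mem_cE]; right; left
        rw [neEdge, Sym2.eq_iff]; left
        constructor <;> dsimp only <;> rw [Prod.ext_iff] <;> constructor <;> omega
      · -- v = u + (1,1): center (u.1, v.2 - 2)?: u = (p, q-1)?? se p q = ((p+1,q),(p,q-1)):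
        -- (p,q) = (u.1, u.2+1): ((u.1+1, u.2+1), (u.1, u.2)) = (v, u) ✓
        refine ⟨(u.1, u.2 + 1), mem_ctr.mpr ⟨by dsimp only; omega, by dsimp only; omega,
          by dsimp only; rw [abs_le]; omega, by dsimp only; rw [abs_le]; omega⟩, ?_⟩
        rw [mem_cE]; right; right; right
        rw [seEdge, Sym2.eq_iff]; right
        constructor <;> dsimp only <;> rw [Prod.ext_iff] <;> constructor <;> omega
    · -- center x-coordinate is v.1? no: center is (v.1, u.2)-style: x-coord from v, y from u
      rcases hx with hx | hx <;> rcases hy with hy | hy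
      · -- v = u - (1,1): center (v.1, u.2): ne p q = ((p,q+1),(p+1,q)) with (p,q) = (v.1, v.2)?
        -- candidates for this edge: (u.1, v.2) [done above] and (v.1, u.2):
        -- (p,q) = (v.1, u.2): se p q = ((p+1, q), (p, q-1)) = ((u.1, u.2), (v.1, u.2-1)) = (u, v) ✓
        refine ⟨(v.1, u.2), mem_ctr.mpr ⟨by dsimp only; omega, by dsimp only; omega,
          by dsimp only; rw [abs_le]; omega, by dsimp only; rw [abs_le]; omega⟩, ?_⟩
        rw [mem_cE]; right; right; right
        rw [seEdge, Sym2.eq_iff]; left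
        constructor <;> dsimp only <;> rw [Prod.ext_iff] <;> constructor <;> omega
      · -- v = (u.1 - 1, u.2 + 1): candidates (u.1, u.2+1)[done], (u.1 - 1, u.2) = (v.1, u.2):
        -- (p,q) = (v.1, u.2): ne p q = ((p, q+1), (p+1, q)) = ((v.1, u.2+1), (u.1, u.2)) = (v, u) ✓
        refine ⟨(v.1, u.2), mem_ctr.mpr ⟨by dsimp only; omega, by dsimp only; omega,
          by dsimp only; rw [abs_le]; omega, by dsimp only; rw [abs_le]; omega⟩, ?_⟩
        rw [mem_cE]; right; left
        rw [neEdge, Sym2.eq_iff]; right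
        constructor <;> dsimp only <;> rw [Prod.ext_iff] <;> constructor <;> omega
      · -- v = (u.1 + 1, u.2 - 1): candidates (u.1, u.2 - 1)[done], (u.1+1, u.2) = (v.1, u.2):
        -- (p,q) = (v.1, u.2): sw p q = ((p-1, q), (p, q-1)) = ((u.1, u.2), (v.1, u.2-1)) = (u, v) ✓
        refine ⟨(v.1, u.2), mem_ctr.mpr ⟨by dsimp only; omega, by dsimp only; omega,
          by dsimp only; rw [abs_le]; omega, by dsimp only; rw [abs_le]; omega⟩, ?_⟩
        rw [mem_cE]; right; right; left
        rw [swEdge, Sym2.eq_iff]; left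
        constructor <;> dsimp only <;> rw [Prod.ext_iff] <;> constructor <;> omega
      · -- v = (u.1 + 1, u.2 + 1): candidates (u.1, u.2+1)[done], (v.1, u.2):
        -- (p,q) = (v.1, u.2): nw p q = ((p, q+1), (p-1, q)) = ((v.1, u.2+1), (u.1, u.2)) = (v, u) ✓
        refine ⟨(v.1, u.2), mem_ctr.mpr ⟨by dsimp only; omega, by dsimp only; omega,
          by dsimp only; rw [abs_le]; omega, by dsimp only; rw [abs_le]; omega⟩, ?_⟩
        rw [mem_cE]; left
        rw [nwEdge, Sym2.eq_iff]; right
        constructor <;> dsimp only <;> rw [Prod.ext_iff] <;> constructor <;> omega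

/-- An edge lies in at most one cell. -/
lemma cell_unique {k : ℕ} {c c' : V} (hc : c ∈ ctr k) (hc' : c' ∈ ctr k)
    {e : Sym2 V} (h : e ∈ cE c) (h' : e ∈ cE c') : c = c' := by
  obtain ⟨hp1, hq1, -, -⟩ := mem_ctr.mp hc
  obtain ⟨hp2, hq2, -, -⟩ := mem_ctr.mp hc'
  rw [mem_cE] at h h'
  rcases h with rfl | rfl | rfl | rfl <;>
    simp only [nwEdge, neEdge, swEdge, seEdge, Sym2.eq_iff, Prod.ext_iff] at h' <;>
    rw [Prod.ext_iff] <;> omega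

end

end AztecRed
namespace AztecRed

noncomputable section

lemma aztecSet_mono {k : ℕ} {v : V} (h : v ∈ aztecSet k) : v ∈ aztecSet (k + 1) := by
  rw [mem_aztecSet'] at *
  obtain ⟨h1, h2, h3⟩ := h
  rw [abs_le] at h2 h3
  refine ⟨h1, abs_le.mpr ⟨?_, ?_⟩, abs_le.mpr ⟨?_, ?_⟩⟩ <;> push_cast <;> omega

lemma edgeSet_mono {k : ℕ} {e : Sym2 V} (he : e ∈ (aztec k).edgeSet) :
    e ∈ (aztec (k + 1)).edgeSet := by
  induction e using Sym2.inductionOn with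
  | hf u v =>
    rw [SimpleGraph.mem_edgeSet] at *
    exact ⟨aztecSet_mono he.1, aztecSet_mono he.2.1, he.2.2⟩

lemma not_mem_edge {k : ℕ} {e : Sym2 V} (he : e ∈ (aztec k).edgeSet) {v : V}
    (hv : v ∉ aztecSet k) : v ∉ e := fun h => hv (mem_aztecSet_of_mem_edge he h)

lemma cE_disjoint {k : ℕ} {c c' : V} (hc : c ∈ ctr k) (hc' : c' ∈ ctr k) (hne : c ≠ c') :
    Disjoint (cE c) (cE c') := by
  rw [Finset.disjoint_left]
  intro e he he'
  exact hne (cell_unique hc hc' he he')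

lemma opp_mem_cE {c : V} {e : Sym2 V} (he : e ∈ cE c) : oppc c e ∈ cE c := by
  rw [mem_cE] at he ⊢
  rcases he with rfl | rfl | rfl | rfl <;>
    simp [oppc_nw, oppc_ne, oppc_sw, oppc_se]

lemma oppc_invol {c : V} {e : Sym2 V} (he : e ∈ cE c) : oppc c (oppc c e) = e := by
  rw [mem_cE] at he
  rcases he with rfl | rfl | rfl | rfl <;>
    simp [oppc_nw, oppc_ne, oppc_sw, oppc_se]

lemma mem_opp_of_not_mem {c : V} {e : Sym2 V} (he : e ∈ cE c) {w : V} (hw : w ∈ cV c)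
    (hne : w ∉ e) : w ∈ oppc c e := by
  rw [mem_cE] at he
  rw [mem_cV] at hw
  rcases he with rfl | rfl | rfl | rfl <;>
    [rw [oppc_nw]; rw [oppc_ne]; rw [oppc_sw]; rw [oppc_se]] <;>
    rcases hw with rfl | rfl | rfl | rfl <;>
    simp [nwEdge, neEdge, swEdge, seEdge, Sym2.mem_iff, Prod.mk.injEq] at hne ⊢ <;>
    omega

lemma not_mem_opp_of_mem {c : V} {e : Sym2 V} (he : e ∈ cE c) {w : V}
    (hw : w ∈ e) : w ∉ oppc c e := by
  obtain ⟨x, y⟩ := w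
  rw [mem_cE] at he
  rcases he with rfl | rfl | rfl | rfl <;>
    [rw [oppc_nw]; rw [oppc_ne]; rw [oppc_sw]; rw [oppc_se]] <;>
    simp [nwEdge, neEdge, swEdge, seEdge, Sym2.mem_iff, Prod.mk.injEq, not_or] at hw ⊢ <;>
    omega

lemma exists_mem_pT {c w : V} (hw : w ∈ cV c) : ∃ e ∈ pT c, w ∈ e := by
  rw [mem_cV] at hw
  rcases hw with rfl | rfl | rfl | rfl
  · exact ⟨nwEdge c.1 c.2, by simp [pT], by simp [nwEdge]⟩
  · exact ⟨nwEdge c.1 c.2, by simp [pT], by simp [nwEdge]⟩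
  · exact ⟨seEdge c.1 c.2, by simp [pT], by simp [seEdge]⟩
  · exact ⟨seEdge c.1 c.2, by simp [pT], by simp [seEdge]⟩

lemma exists_mem_pF {c w : V} (hw : w ∈ cV c) : ∃ e ∈ pF c, w ∈ e := by
  rw [mem_cV] at hw
  rcases hw with rfl | rfl | rfl | rfl
  · exact ⟨neEdge c.1 c.2, by simp [pF], by simp [neEdge]⟩
  · exact ⟨swEdge c.1 c.2, by simp [pF], by simp [swEdge]⟩
  · exact ⟨neEdge c.1 c.2, by simp [pF], by simp [neEdge]⟩
  · exact ⟨swEdge c.1 c.2, by simp [pF], by simp [swEdge]⟩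

lemma not_mem_nw_se {c w : V} : ¬(w ∈ nwEdge c.1 c.2 ∧ w ∈ seEdge c.1 c.2) := by
  obtain ⟨x, y⟩ := w
  simp only [nwEdge, seEdge, Sym2.mem_iff, Prod.mk.injEq, true_and, and_true, false_and, and_false, true_or, or_true, false_or, or_false, not_and, not_or]
  omega

lemma not_mem_ne_sw {c w : V} : ¬(w ∈ neEdge c.1 c.2 ∧ w ∈ swEdge c.1 c.2) := by
  obtain ⟨x, y⟩ := w
  simp only [neEdge, swEdge, Sym2.mem_iff, Prod.mk.injEq, true_and, and_true, false_and, and_false, true_or, or_true, false_or, or_false, not_and, not_or]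
  omega

lemma pT_unique {c : V} {e₁ e₂ : Sym2 V} (h1 : e₁ ∈ pT c) (h2 : e₂ ∈ pT c) {w : V}
    (hw1 : w ∈ e₁) (hw2 : w ∈ e₂) : e₁ = e₂ := by
  simp only [pT, Finset.mem_insert, Finset.mem_singleton] at h1 h2
  rcases h1 with rfl | rfl <;> rcases h2 with rfl | rfl <;>
    first
      | rfl
      | exact absurd ⟨hw1, hw2⟩ not_mem_nw_se
      | exact absurd ⟨hw2, hw1⟩ not_mem_nw_se

lemma pF_unique {c : V} {e₁ e₂ : Sym2 V} (h1 : e₁ ∈ pF c) (h2 : e₂ ∈ pF c) {w : V}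
    (hw1 : w ∈ e₁) (hw2 : w ∈ e₂) : e₁ = e₂ := by
  simp only [pF, Finset.mem_insert, Finset.mem_singleton] at h1 h2
  rcases h1 with rfl | rfl <;> rcases h2 with rfl | rfl <;>
    first
      | rfl
      | exact absurd ⟨hw1, hw2⟩ not_mem_ne_sw
      | exact absurd ⟨hw2, hw1⟩ not_mem_ne_sw

lemma pT_subset_cE {c : V} : pT c ⊆ cE c := by
  intro e he
  simp only [pT, Finset.mem_insert, Finset.mem_singleton] at he
  rw [mem_cE]
  tauto

lemma pF_subset_cE {c : V} : pF c ⊆ cE c := by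
  intro e he
  simp only [pF, Finset.mem_insert, Finset.mem_singleton] at he
  rw [mem_cE]
  tauto

/-- Every vertex of `A_k` lies in exactly two cells of `A_{k+1}`. -/
lemma cells_inner {k : ℕ} {v : V} (hv : v ∈ aztecSet k) :
    ∃ c₁ c₂ : V, c₁ ∈ ctr (k + 1) ∧ c₂ ∈ ctr (k + 1) ∧ c₁ ≠ c₂ ∧ v ∈ cV c₁ ∧ v ∈ cV c₂ ∧
      ∀ c ∈ ctr (k + 1), v ∈ cV c → c = c₁ ∨ c = c₂ := by
  obtain ⟨x, y⟩ := v
  rw [mem_aztecSet'] at hv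
  simp only at hv
  obtain ⟨hpar, hb1, hb2⟩ := hv
  rw [abs_le] at hb1 hb2
  have uniq : ∀ c ∈ ctr (k+1), (x, y) ∈ cV c →
      ((x - ((k : ℤ) + 2)) % 2 = 0 → (c = (x, y + 1) ∨ c = (x, y - 1))) ∧
      (¬ (x - ((k : ℤ) + 2)) % 2 = 0 → (c = (x + 1, y) ∨ c = (x - 1, y))) := by
    intro c hc hvc
    obtain ⟨cx, cy⟩ := c
    obtain ⟨e1, e2, e3, e4⟩ := mem_ctr.mp hc
    simp only at e1 e2 e3 e4
    rw [abs_le] at e3 e4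
    rw [mem_cV] at hvc
    simp only [Prod.mk.injEq, true_and, and_true, false_and, and_false, true_or, or_true, false_or, or_false] at hvc ⊢
    push_cast at e1 e2 e3 e4
    omega
  by_cases hp : (x - ((k : ℤ) + 2)) % 2 = 0
  · refine ⟨(x, y + 1), (x, y - 1),
      mem_ctr.mpr ⟨by simp only; push_cast; omega, by simp only; push_cast; omega,
        by simp only; rw [abs_le]; push_cast; omega,
        by simp only; rw [abs_le]; push_cast; omega⟩,
      mem_ctr.mpr ⟨by simp only; push_cast; omega, by simp only; push_cast; omega,
        by simp only; rw [abs_le]; push_cast; omega,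
        by simp only; rw [abs_le]; push_cast; omega⟩,
      by simp only [Ne, Prod.mk.injEq, not_and]; omega,
      by rw [mem_cV]; simp only [Prod.mk.injEq, true_and, and_true, false_and, and_false, true_or, or_true, false_or, or_false]; omega,
      by rw [mem_cV]; simp only [Prod.mk.injEq, true_and, and_true, false_and, and_false, true_or, or_true, false_or, or_false]; omega, ?_⟩
    intro c hc hvc
    exact (uniq c hc hvc).1 hp
  · refine ⟨(x + 1, y), (x - 1, y),
      mem_ctr.mpr ⟨by simp only; push_cast; omega, by simp only; push_cast; omega,
        by simp only; rw [abs_le]; push_cast; omega,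
        by simp only; rw [abs_le]; push_cast; omega⟩,
      mem_ctr.mpr ⟨by simp only; push_cast; omega, by simp only; push_cast; omega,
        by simp only; rw [abs_le]; push_cast; omega,
        by simp only; rw [abs_le]; push_cast; omega⟩,
      by simp only [Ne, Prod.mk.injEq, not_and]; omega,
      by rw [mem_cV]; simp only [Prod.mk.injEq, true_and, and_true, false_and, and_false, true_or, or_true, false_or, or_false]; omega,
      by rw [mem_cV]; simp only [Prod.mk.injEq, true_and, and_true, false_and, and_false, true_or, or_true, false_or, or_false]; omega, ?_⟩
    intro c hc hvc
    exact (uniq c hc hvc).2 hp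

/-- Every vertex of `A_{k+1}` outside `A_k` lies in exactly one cell of `A_{k+1}`. -/
lemma cells_outer {k : ℕ} {v : V} (hv : v ∈ aztecSet (k + 1)) (hv' : v ∉ aztecSet k) :
    ∃ c₁, c₁ ∈ ctr (k + 1) ∧ v ∈ cV c₁ ∧ ∀ c ∈ ctr (k + 1), v ∈ cV c → c = c₁ := by
  obtain ⟨x, y⟩ := v
  rw [mem_aztecSet'] at hv
  simp only at hv
  obtain ⟨hpar, hb1, hb2⟩ := hv
  rw [abs_le] at hb1 hb2
  push_cast at hb1 hb2
  have hout : ¬(|x| ≤ (k : ℤ) ∧ |y| ≤ (k : ℤ)) := by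
    intro hcon
    exact hv' (mem_aztecSet'.mpr ⟨hpar, hcon.1, hcon.2⟩)
  rw [abs_le, abs_le] at hout
  have key : ∀ w : V, w ∈ ctr (k+1) → (x, y) ∈ cV w →
      ((x = (k : ℤ) + 1 → w = (x - 1, y)) ∧
       (x = -((k : ℤ) + 1) → w = (x + 1, y)) ∧
       (x ≠ (k : ℤ) + 1 ∧ x ≠ -((k : ℤ) + 1) ∧ y = (k : ℤ) + 1 → w = (x, y - 1)) ∧
       (x ≠ (k : ℤ) + 1 ∧ x ≠ -((k : ℤ) + 1) ∧ y = -((k : ℤ) + 1) → w = (x, y + 1))) := by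
    intro w hw hvw
    obtain ⟨cx, cy⟩ := w
    obtain ⟨e1, e2, e3, e4⟩ := mem_ctr.mp hw
    simp only at e1 e2 e3 e4
    rw [abs_le] at e3 e4
    rw [mem_cV] at hvw
    simp only [Prod.mk.injEq, true_and, and_true, false_and, and_false, true_or, or_true, false_or, or_false] at hvw ⊢
    push_cast at e1 e2 e3 e4
    omega
  have hcases : x = (k : ℤ) + 1 ∨ x = -((k : ℤ) + 1) ∨
      (x ≠ (k : ℤ) + 1 ∧ x ≠ -((k : ℤ) + 1) ∧ y = (k : ℤ) + 1) ∨
      (x ≠ (k : ℤ) + 1 ∧ x ≠ -((k : ℤ) + 1) ∧ y = -((k : ℤ) + 1)) := by omega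
  rcases hcases with h | h | h | h
  · refine ⟨(x - 1, y), mem_ctr.mpr ⟨by simp only; push_cast; omega,
      by simp only; push_cast; omega, by simp only; rw [abs_le]; push_cast; omega,
      by simp only; rw [abs_le]; push_cast; omega⟩,
      by rw [mem_cV]; simp only [Prod.mk.injEq, true_and, and_true, false_and, and_false, true_or, or_true, false_or, or_false]; omega, ?_⟩
    intro c hc hvc
    exact ((key c hc hvc).1) h
  · refine ⟨(x + 1, y), mem_ctr.mpr ⟨by simp only; push_cast; omega,
      by simp only; push_cast; omega, by simp only; rw [abs_le]; push_cast; omega,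
      by simp only; rw [abs_le]; push_cast; omega⟩,
      by rw [mem_cV]; simp only [Prod.mk.injEq, true_and, and_true, false_and, and_false, true_or, or_true, false_or, or_false]; omega, ?_⟩
    intro c hc hvc
    exact ((key c hc hvc).2.1) h
  · refine ⟨(x, y - 1), mem_ctr.mpr ⟨by simp only; push_cast; omega,
      by simp only; push_cast; omega, by simp only; rw [abs_le]; push_cast; omega,
      by simp only; rw [abs_le]; push_cast; omega⟩,
      by rw [mem_cV]; simp only [Prod.mk.injEq, true_and, and_true, false_and, and_false, true_or, or_true, false_or, or_false]; omega, ?_⟩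
    intro c hc hvc
    exact ((key c hc hvc).2.2.1) h
  · refine ⟨(x, y + 1), mem_ctr.mpr ⟨by simp only; push_cast; omega,
      by simp only; push_cast; omega, by simp only; rw [abs_le]; push_cast; omega,
      by simp only; rw [abs_le]; push_cast; omega⟩,
      by rw [mem_cV]; simp only [Prod.mk.injEq, true_and, and_true, false_and, and_false, true_or, or_true, false_or, or_false]; omega, ?_⟩
    intro c hc hvc
    exact ((key c hc hvc).2.2.2) h

end

end AztecRed
namespace AztecRed

noncomputable section

lemma disj_of_isPM {k : ℕ} {S : Set V} {M : Finset (Sym2 V)} (h : IsPM (aztec k) S M)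
    (hS : aztecSet k ⊆ S) :
    ∀ e ∈ M, ∀ f ∈ M, e ≠ f → ∀ w, w ∈ e → w ∈ f → False := by
  intro e he f hf hne w hwe hwf
  have hw : w ∈ aztecSet k := mem_aztecSet_of_mem_edge (h.1 e he) hwe
  obtain ⟨g, -, hg⟩ := h.2 w (hS hw)
  exact hne ((hg e ⟨he, hwe⟩).trans (hg f ⟨hf, hwf⟩).symm)

lemma shared_vertex_nw_ne {c : V} : (c.1, c.2 + 1) ∈ nwEdge c.1 c.2 ∧ (c.1, c.2 + 1) ∈ neEdge c.1 c.2 :=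
  ⟨by simp [nwEdge], by simp [neEdge]⟩

lemma shared_vertex_nw_sw {c : V} : (c.1 - 1, c.2) ∈ nwEdge c.1 c.2 ∧ (c.1 - 1, c.2) ∈ swEdge c.1 c.2 :=
  ⟨by simp [nwEdge], by simp [swEdge]⟩

lemma shared_vertex_ne_se {c : V} : (c.1 + 1, c.2) ∈ neEdge c.1 c.2 ∧ (c.1 + 1, c.2) ∈ seEdge c.1 c.2 :=
  ⟨by simp [neEdge], by simp [seEdge]⟩

lemma shared_vertex_sw_se {c : V} : (c.1, c.2 - 1) ∈ swEdge c.1 c.2 ∧ (c.1, c.2 - 1) ∈ seEdge c.1 c.2 :=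
  ⟨by simp [swEdge], by simp [seEdge]⟩

/-- Classification of the intersection of a matching with a cell. -/
lemma state_cases {M : Finset (Sym2 V)} {c : V}
    (hdisj : ∀ e ∈ M, ∀ f ∈ M, e ≠ f → ∀ w, w ∈ e → w ∈ f → False) :
    M ∩ cE c = ∅ ∨ (∃ e ∈ cE c, M ∩ cE c = {e}) ∨ M ∩ cE c = pT c ∨ M ∩ cE c = pF c := by
  have hA : ¬(nwEdge c.1 c.2 ∈ M ∧ neEdge c.1 c.2 ∈ M) := fun ⟨u1, u2⟩ =>
    hdisj _ u1 _ u2 (ne_nw_ne c) _ shared_vertex_nw_ne.1 shared_vertex_nw_ne.2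
  have hB : ¬(nwEdge c.1 c.2 ∈ M ∧ swEdge c.1 c.2 ∈ M) := fun ⟨u1, u2⟩ =>
    hdisj _ u1 _ u2 (ne_nw_sw c) _ shared_vertex_nw_sw.1 shared_vertex_nw_sw.2
  have hC : ¬(neEdge c.1 c.2 ∈ M ∧ seEdge c.1 c.2 ∈ M) := fun ⟨u1, u2⟩ =>
    hdisj _ u1 _ u2 (ne_ne_se c) _ shared_vertex_ne_se.1 shared_vertex_ne_se.2
  have hD : ¬(swEdge c.1 c.2 ∈ M ∧ seEdge c.1 c.2 ∈ M) := fun ⟨u1, u2⟩ =>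
    hdisj _ u1 _ u2 (ne_sw_se c) _ shared_vertex_sw_se.1 shared_vertex_sw_se.2
  by_cases h1 : nwEdge c.1 c.2 ∈ M <;> by_cases h2 : neEdge c.1 c.2 ∈ M <;>
    by_cases h3 : swEdge c.1 c.2 ∈ M <;> by_cases h4 : seEdge c.1 c.2 ∈ M
  · exact absurd ⟨h1, h2⟩ hA
  · exact absurd ⟨h1, h2⟩ hA
  · exact absurd ⟨h1, h2⟩ hA
  · exact absurd ⟨h1, h2⟩ hA
  · exact absurd ⟨h1, h3⟩ hB
  · exact absurd ⟨h1, h3⟩ hB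
  · right; right; left
    ext e
    simp only [Finset.mem_inter, mem_cE, pT, Finset.mem_insert, Finset.mem_singleton]
    constructor
    · rintro ⟨hM, rfl | rfl | rfl | rfl⟩
      · exact Or.inl rfl
      · exact absurd hM h2
      · exact absurd hM h3
      · exact Or.inr rfl
    · rintro (rfl | rfl)
      · exact ⟨h1, Or.inl rfl⟩
      · exact ⟨h4, Or.inr (Or.inr (Or.inr rfl))⟩
  · right; left
    refine ⟨nwEdge c.1 c.2, by rw [mem_cE]; tauto, ?_⟩
    ext e
    simp only [Finset.mem_inter, mem_cE, Finset.mem_singleton]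
    constructor
    · rintro ⟨hM, rfl | rfl | rfl | rfl⟩
      · rfl
      · exact absurd hM h2
      · exact absurd hM h3
      · exact absurd hM h4
    · rintro rfl
      exact ⟨h1, Or.inl rfl⟩
  · exact absurd ⟨h2, h4⟩ hC
  · right; right; right
    ext e
    simp only [Finset.mem_inter, mem_cE, pF, Finset.mem_insert, Finset.mem_singleton]
    constructor
    · rintro ⟨hM, rfl | rfl | rfl | rfl⟩
      · exact absurd hM h1
      · exact Or.inl rfl
      · exact Or.inr rfl
      · exact absurd hM h4
    · rintro (rfl | rfl)
      · exact ⟨h2, Or.inr (Or.inl rfl)⟩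
      · exact ⟨h3, Or.inr (Or.inr (Or.inl rfl))⟩
  · exact absurd ⟨h2, h4⟩ hC
  · right; left
    refine ⟨neEdge c.1 c.2, by rw [mem_cE]; tauto, ?_⟩
    ext e
    simp only [Finset.mem_inter, mem_cE, Finset.mem_singleton]
    constructor
    · rintro ⟨hM, rfl | rfl | rfl | rfl⟩
      · exact absurd hM h1
      · rfl
      · exact absurd hM h3
      · exact absurd hM h4
    · rintro rfl
      exact ⟨h2, Or.inr (Or.inl rfl)⟩
  · exact absurd ⟨h3, h4⟩ hD
  · right; left
    refine ⟨swEdge c.1 c.2, by rw [mem_cE]; tauto, ?_⟩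
    ext e
    simp only [Finset.mem_inter, mem_cE, Finset.mem_singleton]
    constructor
    · rintro ⟨hM, rfl | rfl | rfl | rfl⟩
      · exact absurd hM h1
      · exact absurd hM h2
      · rfl
      · exact absurd hM h4
    · rintro rfl
      exact ⟨h3, Or.inr (Or.inr (Or.inl rfl))⟩
  · right; left
    refine ⟨seEdge c.1 c.2, by rw [mem_cE]; tauto, ?_⟩
    ext e
    simp only [Finset.mem_inter, mem_cE, Finset.mem_singleton]
    constructor
    · rintro ⟨hM, rfl | rfl | rfl | rfl⟩
      · exact absurd hM h1
      · exact absurd hM h2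
      · exact absurd hM h3
      · rfl
    · rintro rfl
      exact ⟨h4, Or.inr (Or.inr (Or.inr rfl))⟩
  · left
    ext e
    simp only [Finset.mem_inter, mem_cE, Finset.notMem_empty, iff_false, not_and]
    rintro hM (rfl | rfl | rfl | rfl)
    · exact h1 hM
    · exact h2 hM
    · exact h3 hM
    · exact h4 hM

lemma single_mem {M : Finset (Sym2 V)} {c : V} {e : Sym2 V} (hs : M ∩ cE c = {e}) :
    e ∈ M ∧ e ∈ cE c := by
  have : e ∈ M ∩ cE c := by rw [hs]; exact Finset.mem_singleton_self e
  exact Finset.mem_inter.mp this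

lemma covered_in_cell {k : ℕ} {M : Finset (Sym2 V)}
    (hM : IsPM (aztec (k + 1)) (aztecSet (k + 1)) M) {c : V}
    (hc : c ∈ ctr (k + 1)) {w : V} (hw : w ∈ cV c) (hw' : w ∉ aztecSet k) :
    ∃ e ∈ M ∩ cE c, w ∈ e := by
  have hwk : w ∈ aztecSet (k + 1) := cV_mem_aztecSet (mem_ctr.mp hc) hw
  obtain ⟨c₁, hc₁, hvc₁, huniq⟩ := cells_outer hwk hw'
  obtain ⟨e, ⟨heM, hwe⟩, -⟩ := hM.2 w hwk
  obtain ⟨c', hc', hec'⟩ := exists_cell (hM.1 e heM)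
  have h1 : c' = c₁ := huniq c' hc' (mem_of_mem_cE hec' hwe)
  have h2 : c = c₁ := huniq c hc hw
  refine ⟨e, Finset.mem_inter.mpr ⟨heM, ?_⟩, hwe⟩
  rw [h2, ← h1]
  exact hec'

lemma empty_cell_verts_inner {k : ℕ} {M : Finset (Sym2 V)}
    (hM : IsPM (aztec (k + 1)) (aztecSet (k + 1)) M) {c : V} (hc : c ∈ ctr (k + 1))
    (hs : M ∩ cE c = ∅) : ∀ w ∈ cV c, w ∈ aztecSet k := by
  intro w hw
  by_contra hw'
  obtain ⟨e, he, -⟩ := covered_in_cell hM hc hw hw'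
  rw [hs] at he
  exact absurd he (Finset.notMem_empty e)

lemma single_cell_opp_inner {k : ℕ} {M : Finset (Sym2 V)}
    (hM : IsPM (aztec (k + 1)) (aztecSet (k + 1)) M) {c : V} (hc : c ∈ ctr (k + 1))
    {e : Sym2 V} (hs : M ∩ cE c = {e}) : ∀ w ∈ cV c, w ∉ e → w ∈ aztecSet k := by
  intro w hw hwe
  by_contra hw'
  obtain ⟨f, hf, hwf⟩ := covered_in_cell hM hc hw hw'
  rw [hs, Finset.mem_singleton] at hf
  subst hf
  exact hwe hwf

/-- The per-cell transformation: slide a single edge, erase a doubled pair,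
fill an empty cell with the pair selected by `b`. -/
def cImg (c : V) (s : Finset (Sym2 V)) (b : Prop) : Finset (Sym2 V) :=
  if s.card = 1 then s.image (oppc c)
  else if s = ∅ then (if b then pT c else pF c) else ∅

/-- The global transformation on matchings. -/
def Phi (k : ℕ) (M : Finset (Sym2 V)) (d : Finset V) : Finset (Sym2 V) :=
  (ctr k).biUnion fun c => cImg c (M ∩ cE c) (c ∈ d)

/-- The cells where the matching doubles the `+` pair. -/
def dT (k : ℕ) (M : Finset (Sym2 V)) : Finset V :=
  (ctr k).filter fun c => M ∩ cE c = pT c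

/-- The cells not meeting the matching. -/
def emptyC (k : ℕ) (M : Finset (Sym2 V)) : Finset V :=
  (ctr k).filter fun c => M ∩ cE c = ∅

lemma card_pT (c : V) : (pT c).card = 2 := Finset.card_pair (ne_nw_se c)

lemma card_pF (c : V) : (pF c).card = 2 := Finset.card_pair (ne_ne_sw c)

lemma cImg_single {c : V} {e : Sym2 V} {b : Prop} : cImg c {e} b = {oppc c e} := by
  simp [cImg]

lemma cImg_empty {c : V} {b : Prop} : cImg c ∅ b = if b then pT c else pF c := by
  simp [cImg]

lemma cImg_pT {c : V} {b : Prop} : cImg c (pT c) b = ∅ := by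
  have h2 : (pT c).card = 2 := card_pT c
  have : (pT c) ≠ ∅ := by
    intro h; rw [h] at h2; simp at h2
  simp [cImg, h2, this]

lemma cImg_pF {c : V} {b : Prop} : cImg c (pF c) b = ∅ := by
  have h2 : (pF c).card = 2 := card_pF c
  have : (pF c) ≠ ∅ := by
    intro h; rw [h] at h2; simp at h2
  simp [cImg, h2, this]

lemma cImg_subset {c : V} {s : Finset (Sym2 V)} {b : Prop} (hs : s ⊆ cE c) :
    cImg c s b ⊆ cE c := by
  unfold cImg
  split_ifs with hc1 hc2 hb
  · intro e he
    obtain ⟨f, hf, rfl⟩ := Finset.mem_image.mp he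
    exact opp_mem_cE (hs hf)
  · exact pT_subset_cE
  · exact pF_subset_cE
  · exact Finset.empty_subset _

lemma Phi_inter {k : ℕ} {M : Finset (Sym2 V)} {d : Finset V} {c : V} (hc : c ∈ ctr k) :
    Phi k M d ∩ cE c = cImg c (M ∩ cE c) (c ∈ d) := by
  ext e
  simp only [Phi, Finset.mem_inter, Finset.mem_biUnion]
  constructor
  · rintro ⟨⟨c', hc', he'⟩, hece⟩
    have hsub : e ∈ cE c' := cImg_subset Finset.inter_subset_right he'
    have : c' = c := cell_unique hc' hc hsub hece
    subst this
    exact he'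
  · intro he
    exact ⟨⟨c, hc, he⟩, cImg_subset Finset.inter_subset_right he⟩

lemma eq_biUnion {k : ℕ} {M : Finset (Sym2 V)} (hM : ∀ e ∈ M, e ∈ (aztec k).edgeSet) :
    M = (ctr k).biUnion (fun c => M ∩ cE c) := by
  ext e
  simp only [Finset.mem_biUnion, Finset.mem_inter]
  constructor
  · intro he
    obtain ⟨c, hc, hec⟩ := exists_cell (hM e he)
    exact ⟨c, hc, he, hec⟩
  · rintro ⟨c, hc, he, -⟩
    exact he

end

end AztecRed
namespace AztecRed

noncomputable section

lemma mem_Phi {k : ℕ} {M : Finset (Sym2 V)} {d : Finset V} {e : Sym2 V} :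
    e ∈ Phi k M d ↔ ∃ c ∈ ctr k, e ∈ cImg c (M ∩ cE c) (c ∈ d) := by
  simp [Phi]

lemma edge_mem_edgeSet_of_endpoints {k : ℕ} {c : V} {e : Sym2 V} (he : e ∈ cE c)
    (h : ∀ w ∈ e, w ∈ aztecSet k) : e ∈ (aztec k).edgeSet := by
  rcases mem_cE.mp he with rfl | rfl | rfl | rfl <;>
    refine ((aztec k).mem_edgeSet).mpr
      ⟨h _ (by simp [nwEdge, neEdge, swEdge, seEdge]),
       h _ (by simp [nwEdge, neEdge, swEdge, seEdge]), by dsimp only; ring⟩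

/-- Coverage of an inner vertex by the transformed matching. -/
lemma Phi_cover_inner {k : ℕ} {M : Finset (Sym2 V)} {d : Finset V}
    (hedges : ∀ e ∈ M, e ∈ (aztec (k + 1)).edgeSet)
    (hdisj : ∀ e ∈ M, ∀ f ∈ M, e ≠ f → ∀ w, w ∈ e → w ∈ f → False)
    {v : V} (hv : v ∈ aztecSet k) (hvcov : ∃! e, e ∈ M ∧ v ∈ e) :
    ∃! h, h ∈ Phi (k + 1) M d ∧ v ∈ h := by
  obtain ⟨c₁, c₂, hc₁, hc₂, hcne, hv1, hv2, huniq⟩ := cells_inner hv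
  obtain ⟨f, ⟨hfM, hvf⟩, hfuniq⟩ := hvcov
  obtain ⟨cf, hcf, hfcf⟩ := exists_cell (hedges f hfM)
  have hcf12 : cf = c₁ ∨ cf = c₂ := huniq cf hcf (mem_of_mem_cE hfcf hvf)
  clear hv
  suffices H : ∀ ca cb : V, ca ∈ ctr (k + 1) → cb ∈ ctr (k + 1) → ca ≠ cb →
      v ∈ cV ca → v ∈ cV cb →
      (∀ c ∈ ctr (k + 1), v ∈ cV c → c = ca ∨ c = cb) → f ∈ cE ca →
      ∃! h, h ∈ Phi (k + 1) M d ∧ v ∈ h by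
    rcases hcf12 with rfl | rfl
    · exact H cf c₂ hcf hc₂ hcne hv1 hv2 huniq hfcf
    · exact H cf c₁ hcf hc₁ (Ne.symm hcne) hv2 hv1
        (fun c hc hvc => (huniq c hc hvc).symm) hfcf
  intro ca cb hca hcb hne hva hvb huq hfca
  have hfnotcb : f ∉ cE cb := fun h => hne (cell_unique hca hcb hfca h)
  have hnog : ∀ g ∈ M ∩ cE cb, v ∉ g := by
    intro g hg hvg
    have hgM := (Finset.mem_inter.mp hg).1
    have hgcb := (Finset.mem_inter.mp hg).2
    have : g = f := hfuniq g ⟨hgM, hvg⟩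
    subst this
    exact hfnotcb hgcb
  -- the unique covering edge can only come from cells ca or cb
  have extract : ∀ h', h' ∈ Phi (k + 1) M d → v ∈ h' →
      ∃ c', (c' = ca ∨ c' = cb) ∧ c' ∈ ctr (k + 1) ∧
        h' ∈ cImg c' (M ∩ cE c') (c' ∈ d) := by
    intro h' hh' hvh'
    obtain ⟨c', hc', himg⟩ := mem_Phi.mp hh'
    have hcE : h' ∈ cE c' := cImg_subset Finset.inter_subset_right himg
    exact ⟨c', huq c' hc' (mem_of_mem_cE hcE hvh'), hc', himg⟩
  -- contributions from `ca` never contain `v`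
  have noca : ∀ h', h' ∈ cImg ca (M ∩ cE ca) (ca ∈ d) → v ∉ h' := by
    intro h' himg hvh'
    rcases state_cases (M := M) (c := ca) hdisj with hE | ⟨e, hecE, hS⟩ | hT | hF
    · rw [hE] at himg
      exact absurd (Finset.mem_inter.mpr ⟨hfM, hfca⟩) (by rw [hE]; exact Finset.notMem_empty f)
    · have hef : e = f := by
        have : f ∈ ({e} : Finset (Sym2 V)) := by rw [← hS]; exact Finset.mem_inter.mpr ⟨hfM, hfca⟩
        exact (Finset.mem_singleton.mp this).symm
      subst hef
      rw [hS, cImg_single] at himg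
      rw [Finset.mem_singleton] at himg
      subst himg
      exact not_mem_opp_of_mem hecE hvf hvh'
    · rw [hT, cImg_pT] at himg
      exact absurd himg (Finset.notMem_empty _)
    · rw [hF, cImg_pF] at himg
      exact absurd himg (Finset.notMem_empty _)
  rcases state_cases (M := M) (c := cb) hdisj with hE | ⟨g, hgcE, hS⟩ | hT | hF
  · -- cb empty: the fill pair covers v exactly once
    obtain ⟨g, hgP, hvg⟩ : ∃ g ∈ cImg cb (M ∩ cE cb) (cb ∈ d), v ∈ g := by
      rw [hE, cImg_empty]
      split_ifs
      · exact exists_mem_pT hvb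
      · exact exists_mem_pF hvb
    refine ⟨g, ⟨mem_Phi.mpr ⟨cb, hcb, hgP⟩, hvg⟩, ?_⟩
    rintro h' ⟨hh', hvh'⟩
    obtain ⟨c', hc'or, hc', himg⟩ := extract h' hh' hvh'
    rcases hc'or with rfl | rfl
    · exact absurd hvh' (noca h' himg)
    · rw [hE, cImg_empty] at himg hgP
      split_ifs at himg hgP
      · exact pT_unique himg hgP hvh' hvg
      · exact pF_unique himg hgP hvh' hvg
  · -- cb single: the slid edge covers v exactly once
    have hvng : v ∉ g := hnog g (by rw [hS]; exact Finset.mem_singleton_self g)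
    refine ⟨oppc cb g, ⟨mem_Phi.mpr ⟨cb, hcb, by
        rw [hS, cImg_single]; exact Finset.mem_singleton_self _⟩,
      mem_opp_of_not_mem hgcE hvb hvng⟩, ?_⟩
    rintro h' ⟨hh', hvh'⟩
    obtain ⟨c', hc'or, hc', himg⟩ := extract h' hh' hvh'
    rcases hc'or with rfl | rfl
    · exact absurd hvh' (noca h' himg)
    · rw [hS, cImg_single] at himg
      exact Finset.mem_singleton.mp himg
  · -- cb doubled (pT): impossible, some pair edge would cover v inside M
    obtain ⟨g, hgP, hvg⟩ := exists_mem_pT hvb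
    exact absurd hvg (hnog g (by rw [hT]; exact hgP))
  · obtain ⟨g, hgP, hvg⟩ := exists_mem_pF hvb
    exact absurd hvg (hnog g (by rw [hF]; exact hgP))

/-- Coverage of an outer vertex by the transformed matching (upward direction). -/
lemma Phi_cover_outer {k : ℕ} {M : Finset (Sym2 V)} {d : Finset V}
    (hedges : ∀ e ∈ M, e ∈ (aztec k).edgeSet)
    (hdisj : ∀ e ∈ M, ∀ f ∈ M, e ≠ f → ∀ w, w ∈ e → w ∈ f → False)
    {v : V} (hv : v ∈ aztecSet (k + 1)) (hv' : v ∉ aztecSet k) :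
    ∃! h, h ∈ Phi (k + 1) M d ∧ v ∈ h := by
  obtain ⟨c₁, hc₁, hvc₁, huniq⟩ := cells_outer hv hv'
  have hnov : ∀ g ∈ M, v ∉ g := fun g hg => not_mem_edge (hedges g hg) hv'
  have extract : ∀ h', h' ∈ Phi (k + 1) M d → v ∈ h' →
      h' ∈ cImg c₁ (M ∩ cE c₁) (c₁ ∈ d) := by
    intro h' hh' hvh'
    obtain ⟨c', hc', himg⟩ := mem_Phi.mp hh'
    have hcE : h' ∈ cE c' := cImg_subset Finset.inter_subset_right himg
    have : c' = c₁ := huniq c' hc' (mem_of_mem_cE hcE hvh')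
    subst this
    exact himg
  rcases state_cases (M := M) (c := c₁) hdisj with hE | ⟨g, hgcE, hS⟩ | hT | hF
  · obtain ⟨g, hgP, hvg⟩ : ∃ g ∈ cImg c₁ (M ∩ cE c₁) (c₁ ∈ d), v ∈ g := by
      rw [hE, cImg_empty]
      split_ifs
      · exact exists_mem_pT hvc₁
      · exact exists_mem_pF hvc₁
    refine ⟨g, ⟨mem_Phi.mpr ⟨c₁, hc₁, hgP⟩, hvg⟩, ?_⟩
    rintro h' ⟨hh', hvh'⟩
    have himg := extract h' hh' hvh'
    rw [hE, cImg_empty] at himg hgP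
    split_ifs at himg hgP
    · exact pT_unique himg hgP hvh' hvg
    · exact pF_unique himg hgP hvh' hvg
  · have hvng : v ∉ g := hnov g (Finset.mem_inter.mp (by
      rw [hS]; exact Finset.mem_singleton_self g)).1
    refine ⟨oppc c₁ g, ⟨mem_Phi.mpr ⟨c₁, hc₁, by
        rw [hS, cImg_single]; exact Finset.mem_singleton_self _⟩,
      mem_opp_of_not_mem hgcE hvc₁ hvng⟩, ?_⟩
    rintro h' ⟨hh', hvh'⟩
    have himg := extract h' hh' hvh'
    rw [hS, cImg_single] at himg
    exact Finset.mem_singleton.mp himg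
  · obtain ⟨g, hgP, hvg⟩ := exists_mem_pT hvc₁
    have hgM : g ∈ M := (Finset.mem_inter.mp (by rw [hT]; exact hgP : g ∈ M ∩ cE c₁)).1
    exact absurd hvg (hnov g hgM)
  · obtain ⟨g, hgP, hvg⟩ := exists_mem_pF hvc₁
    have hgM : g ∈ M := (Finset.mem_inter.mp (by rw [hF]; exact hgP : g ∈ M ∩ cE c₁)).1
    exact absurd hvg (hnov g hgM)

/-- Downward step: the transform of a perfect matching of `A_{k+1}` is a
perfect matching of `A_k`. -/
lemma Phi_down_isPM {k : ℕ} {M : Finset (Sym2 V)} {d : Finset V}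
    (hM : IsPM (aztec (k + 1)) (aztecSet (k + 1)) M) :
    IsPM (aztec k) (aztecSet k) (Phi (k + 1) M d) := by
  have hdisj := disj_of_isPM hM (le_refl _)
  constructor
  · intro h hh
    obtain ⟨c, hc, himg⟩ := mem_Phi.mp hh
    rcases state_cases (M := M) (c := c) hdisj with hE | ⟨e, hecE, hS⟩ | hT | hF
    · rw [hE, cImg_empty] at himg
      have hverts := empty_cell_verts_inner hM hc hE
      have hhcE : h ∈ cE c := by
        split_ifs at himg
        · exact pT_subset_cE himg
        · exact pF_subset_cE himg
      refine edge_mem_edgeSet_of_endpoints hhcE ?_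
      intro w hw
      exact hverts w (mem_of_mem_cE hhcE hw)
    · rw [hS, cImg_single] at himg
      rw [Finset.mem_singleton] at himg
      subst himg
      refine edge_mem_edgeSet_of_endpoints (opp_mem_cE hecE) ?_
      intro w hw
      have hwcV : w ∈ cV c := mem_of_mem_cE (opp_mem_cE hecE) hw
      have hwe : w ∉ e := fun hcon => not_mem_opp_of_mem hecE hcon hw
      exact single_cell_opp_inner hM hc hS w hwcV hwe
    · rw [hT, cImg_pT] at himg
      exact absurd himg (Finset.notMem_empty _)
    · rw [hF, cImg_pF] at himg
      exact absurd himg (Finset.notMem_empty _)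
  · intro v hv
    exact Phi_cover_inner hM.1 hdisj hv (hM.2 v (aztecSet_mono hv))

/-- Upward step: the transform of a perfect matching of `A_k` is a perfect
matching of `A_{k+1}`. -/
lemma Phi_up_isPM {k : ℕ} {M : Finset (Sym2 V)} {d : Finset V}
    (hM : IsPM (aztec k) (aztecSet k) M) :
    IsPM (aztec (k + 1)) (aztecSet (k + 1)) (Phi (k + 1) M d) := by
  have hdisj := disj_of_isPM hM (le_refl _)
  have hedges' : ∀ e ∈ M, e ∈ (aztec (k + 1)).edgeSet := fun e he => edgeSet_mono (hM.1 e he)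
  constructor
  · intro h hh
    obtain ⟨c, hc, himg⟩ := mem_Phi.mp hh
    exact cE_mem_edgeSet (mem_ctr.mp hc) (cImg_subset Finset.inter_subset_right himg)
  · intro v hv
    by_cases hvk : v ∈ aztecSet k
    · exact Phi_cover_inner hedges' hdisj hvk (hM.2 v hvk)
    · exact Phi_cover_outer hM.1 hdisj hv hvk

end

end AztecRed
namespace AztecRed

noncomputable section

lemma pT_ne_pF (c : V) : pT c ≠ pF c := by
  intro h
  have h1 : nwEdge c.1 c.2 ∈ pT c := by simp [pT]
  rw [h] at h1
  simp only [pF, Finset.mem_insert, Finset.mem_singleton] at h1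
  rcases h1 with h' | h'
  · exact ne_nw_ne c h'
  · exact ne_nw_sw c h'

lemma pT_ne_empty (c : V) : pT c ≠ ∅ := by
  intro h
  have := card_pT c
  rw [h] at this
  simp at this

lemma pF_ne_empty (c : V) : pF c ≠ ∅ := by
  intro h
  have := card_pF c
  rw [h] at this
  simp at this

lemma singleton_ne_pT {c : V} {e : Sym2 V} : ({e} : Finset (Sym2 V)) ≠ pT c := by
  intro h
  have := congrArg Finset.card h
  rw [card_pT] at this
  simp at this

lemma singleton_ne_pF {c : V} {e : Sym2 V} : ({e} : Finset (Sym2 V)) ≠ pF c := by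
  intro h
  have := congrArg Finset.card h
  rw [card_pF] at this
  simp at this

/-- `dT` recovers the choice set. -/
lemma dT_Phi {k : ℕ} {M : Finset (Sym2 V)} {d : Finset V}
    (hdisj : ∀ e ∈ M, ∀ f ∈ M, e ≠ f → ∀ w, w ∈ e → w ∈ f → False)
    (hd : d ⊆ emptyC (k + 1) M) :
    dT (k + 1) (Phi (k + 1) M d) = d := by
  ext c
  simp only [dT, Finset.mem_filter]
  constructor
  · rintro ⟨hc, hPT⟩
    rw [Phi_inter hc] at hPT
    rcases state_cases (M := M) (c := c) hdisj with hE | ⟨e, hecE, hS⟩ | hT | hF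
    · rw [hE, cImg_empty] at hPT
      by_cases hbd : c ∈ d
      · exact hbd
      · rw [if_neg hbd] at hPT
        exact absurd hPT.symm (pT_ne_pF c)
    · rw [hS, cImg_single] at hPT
      exact absurd hPT singleton_ne_pT
    · rw [hT, cImg_pT] at hPT
      exact absurd hPT.symm (pT_ne_empty c)
    · rw [hF, cImg_pF] at hPT
      exact absurd hPT.symm (pT_ne_empty c)
  · intro hbd
    have hce := hd hbd
    simp only [emptyC, Finset.mem_filter] at hce
    refine ⟨hce.1, ?_⟩
    rw [Phi_inter hce.1, hce.2, cImg_empty, if_pos hbd]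

/-- The recorded doubled cells of `M` are empty cells of the transform. -/
lemma dT_subset_emptyC_Phi {k : ℕ} {M : Finset (Sym2 V)} {d : Finset V} :
    dT (k + 1) M ⊆ emptyC (k + 1) (Phi (k + 1) M d) := by
  intro c hc
  simp only [dT, Finset.mem_filter] at hc
  simp only [emptyC, Finset.mem_filter]
  refine ⟨hc.1, ?_⟩
  rw [Phi_inter hc.1, hc.2, cImg_pT]

/-- Applying the transform twice recovers the matching. -/
lemma Phi_Phi {k : ℕ} {M : Finset (Sym2 V)} {d : Finset V}
    (hedges : ∀ e ∈ M, e ∈ (aztec (k + 1)).edgeSet)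
    (hdisj : ∀ e ∈ M, ∀ f ∈ M, e ≠ f → ∀ w, w ∈ e → w ∈ f → False)
    (hd : d ⊆ emptyC (k + 1) M) :
    Phi (k + 1) (Phi (k + 1) M d) (dT (k + 1) M) = M := by
  conv_rhs => rw [eq_biUnion (k := k + 1) hedges]
  show (ctr (k + 1)).biUnion
      (fun c => cImg c (Phi (k + 1) M d ∩ cE c) (c ∈ dT (k + 1) M)) = _
  refine Finset.biUnion_congr rfl ?_
  intro c hc
  rw [Phi_inter hc]
  rcases state_cases (M := M) (c := c) hdisj with hE | ⟨e, hecE, hS⟩ | hT | hF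
  · rw [hE, cImg_empty]
    have hcd : c ∉ dT (k + 1) M := by
      simp only [dT, Finset.mem_filter, not_and]
      intro _
      rw [hE]
      exact fun h => (pT_ne_empty c) h.symm
    split_ifs with hbd
    · rw [cImg_pT]
    · rw [cImg_pF]
  · rw [hS, cImg_single, cImg_single, oppc_invol hecE]
  · have hcd : c ∈ dT (k + 1) M := by
      simp only [dT, Finset.mem_filter]
      exact ⟨hc, hT⟩
    rw [hT, cImg_pT, cImg_empty, if_pos hcd]
  · have hcd : c ∉ dT (k + 1) M := by
      simp only [dT, Finset.mem_filter, not_and]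
      intro _
      rw [hF]
      exact fun h => (pT_ne_pF c) h.symm
    rw [hF, cImg_pF, cImg_empty, if_neg hcd]

end

end AztecRed
namespace AztecRed

noncomputable section

/-- Vertices of `A_k` as a finset. -/
def vF (k : ℕ) : Finset V :=
  ((Finset.Icc (-(k : ℤ)) k) ×ˢ (Finset.Icc (-(k : ℤ)) k)).filter fun v => Odd (v.1 + v.2)

lemma mem_vF {k : ℕ} {v : V} : v ∈ vF k ↔ v ∈ aztecSet k := by
  simp only [vF, Finset.mem_filter, Finset.mem_product, Finset.mem_Icc, mem_aztecSet',
    Int.odd_iff, abs_le]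
  tauto

/-- Edges of `A_k` as a finset. -/
def eF (k : ℕ) : Finset (Sym2 V) :=
  ((vF k ×ˢ vF k).filter fun p => (aztec k).Adj p.1 p.2).image fun p => s(p.1, p.2)

lemma mem_eF {k : ℕ} {e : Sym2 V} : e ∈ eF k ↔ e ∈ (aztec k).edgeSet := by
  induction e using Sym2.inductionOn with
  | hf u v =>
    constructor
    · intro h
      obtain ⟨p, hp, he⟩ := Finset.mem_image.mp h
      have hadj : (aztec k).Adj p.1 p.2 := (Finset.mem_filter.mp hp).2
      rw [← he]
      exact ((aztec k).mem_edgeSet).mpr hadj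
    · intro h
      have hadj : (aztec k).Adj u v := ((aztec k).mem_edgeSet).mp h
      refine Finset.mem_image.mpr ⟨(u, v), Finset.mem_filter.mpr ⟨?_, hadj⟩, rfl⟩
      exact Finset.mem_product.mpr ⟨mem_vF.mpr hadj.1, mem_vF.mpr hadj.2.1⟩

/-- Perfect matchings of `A_k` as a finset. -/
def pmF (k : ℕ) : Finset (Finset (Sym2 V)) :=
  (eF k).powerset.filter fun M => IsPM (aztec k) (aztecSet k) M

lemma mem_pmF {k : ℕ} {M : Finset (Sym2 V)} : M ∈ pmF k ↔ IsPM (aztec k) (aztecSet k) M := by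
  simp only [pmF, Finset.mem_filter, Finset.mem_powerset]
  constructor
  · exact fun h => h.2
  · intro h
    exact ⟨fun e he => mem_eF.mpr (h.1 e he), h⟩

lemma mSum_eq (k : ℕ) (ω : Sym2 V → ℝ) :
    mSum (aztec k) (aztecSet k) ω = ∑ M ∈ pmF k, ∏ e ∈ M, ω e := by
  rw [mSum, ← finsum_mem_coe_finset]
  congr 1
  ext M
  simp [mem_pmF]

end

end AztecRed
namespace AztecRed

noncomputable section

/-- Weight of the `+` pair of a cell. -/
def wT (ω : Sym2 V → ℝ) (c : V) : ℝ := ω (nwEdge c.1 c.2) * ω (seEdge c.1 c.2)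

/-- Weight of the `−` pair of a cell. -/
def wF (ω : Sym2 V → ℝ) (c : V) : ℝ := ω (neEdge c.1 c.2) * ω (swEdge c.1 c.2)

lemma cellFactor_eq (ω : Sym2 V → ℝ) (c : V) :
    cellFactor ω c.1 c.2 = wT ω c + wF ω c := rfl

lemma pairwise_inter_disjoint {k : ℕ} (M : Finset (Sym2 V)) :
    ∀ c ∈ ctr k, ∀ c' ∈ ctr k, c ≠ c' → Disjoint (M ∩ cE c) (M ∩ cE c') :=
  fun c hc c' hc' hne =>
    (cE_disjoint hc hc' hne).mono Finset.inter_subset_right Finset.inter_subset_right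

lemma prod_grouped {k : ℕ} {M : Finset (Sym2 V)} (f : Sym2 V → ℝ)
    (hedges : ∀ e ∈ M, e ∈ (aztec k).edgeSet) :
    ∏ e ∈ M, f e = ∏ c ∈ ctr k, ∏ e ∈ M ∩ cE c, f e := by
  conv_lhs => rw [eq_biUnion hedges]
  exact Finset.prod_biUnion (fun c hc c' hc' hne => pairwise_inter_disjoint M c hc c' hc' hne)

/-- The fundamental per-term weight identity. -/
lemma term_eq {k : ℕ} {ωh ωl : Sym2 V → ℝ}
    (hD : ∀ p q : ℤ, IsCellCenter (k + 1) p q → cellFactor ωh p q ≠ 0)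
    (hrec : ∀ p q : ℤ, IsCellCenter (k + 1) p q →
      (nwEdge p q ∈ (aztec k).edgeSet →
        ωl (nwEdge p q) = ωh (seEdge p q) / cellFactor ωh p q) ∧
      (neEdge p q ∈ (aztec k).edgeSet →
        ωl (neEdge p q) = ωh (swEdge p q) / cellFactor ωh p q) ∧
      (swEdge p q ∈ (aztec k).edgeSet →
        ωl (swEdge p q) = ωh (neEdge p q) / cellFactor ωh p q) ∧
      (seEdge p q ∈ (aztec k).edgeSet →
        ωl (seEdge p q) = ωh (nwEdge p q) / cellFactor ωh p q))
    {M : Finset (Sym2 V)} {d : Finset V}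
    (hM : IsPM (aztec (k + 1)) (aztecSet (k + 1)) M) (hd : d ⊆ emptyC (k + 1) M) :
    (∏ e ∈ M, ωh e) *
      ((∏ c ∈ d, wT ωh c / cellFactor ωh c.1 c.2) *
        ∏ c ∈ emptyC (k + 1) M \ d, wF ωh c / cellFactor ωh c.1 c.2)
    = (∏ c ∈ ctr (k + 1) \ emptyC (k + 1) (Phi (k + 1) M d), cellFactor ωh c.1 c.2) *
        ((∏ c ∈ dT (k + 1) M, wT ωh c) *
          ∏ c ∈ emptyC (k + 1) (Phi (k + 1) M d) \ dT (k + 1) M, wF ωh c) *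
        ∏ e ∈ Phi (k + 1) M d, ωl e := by
  have hdisj := disj_of_isPM hM (le_refl _)
  have hedges := hM.1
  have hPhiPM := Phi_down_isPM (d := d) hM
  have hd1 : (emptyC (k + 1) M).filter (fun c => c ∈ d) = d := by
    ext c
    simp only [Finset.mem_filter]
    exact ⟨fun h => h.2, fun h => ⟨hd h, h⟩⟩
  -- LHS into an if-product over all cells
  have hL : (∏ c ∈ d, wT ωh c / cellFactor ωh c.1 c.2) *
      ∏ c ∈ emptyC (k + 1) M \ d, wF ωh c / cellFactor ωh c.1 c.2
      = ∏ c ∈ ctr (k + 1), (if M ∩ cE c = ∅ then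
          (if c ∈ d then wT ωh c / cellFactor ωh c.1 c.2
            else wF ωh c / cellFactor ωh c.1 c.2) else 1) := by
    have e1 : ∏ c ∈ ctr (k + 1), (if M ∩ cE c = ∅ then
          (if c ∈ d then wT ωh c / cellFactor ωh c.1 c.2
            else wF ωh c / cellFactor ωh c.1 c.2) else 1)
        = ∏ c ∈ emptyC (k + 1) M,
            (if c ∈ d then wT ωh c / cellFactor ωh c.1 c.2
              else wF ωh c / cellFactor ωh c.1 c.2) :=
      (Finset.prod_filter _ _).symm
    rw [e1, Finset.prod_ite, hd1, ← Finset.sdiff_eq_filter]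
  -- RHS pieces
  have hsd2 : ctr (k + 1) \ emptyC (k + 1) (Phi (k + 1) M d)
      = (ctr (k + 1)).filter (fun c => ¬(Phi (k + 1) M d ∩ cE c = ∅)) := by
    ext c
    simp only [Finset.mem_sdiff, emptyC, Finset.mem_filter]
    tauto
  have hsd3 : emptyC (k + 1) (Phi (k + 1) M d) \ dT (k + 1) M
      = (ctr (k + 1)).filter
          (fun c => Phi (k + 1) M d ∩ cE c = ∅ ∧ ¬(M ∩ cE c = pT c)) := by
    ext c
    simp only [Finset.mem_sdiff, emptyC, dT, Finset.mem_filter]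
    tauto
  have pieceA : ∏ c ∈ ctr (k + 1) \ emptyC (k + 1) (Phi (k + 1) M d), cellFactor ωh c.1 c.2
      = ∏ c ∈ ctr (k + 1),
          (if ¬(Phi (k + 1) M d ∩ cE c = ∅) then cellFactor ωh c.1 c.2 else 1) := by
    rw [hsd2]
    exact Finset.prod_filter _ _
  have pieceB : ∏ c ∈ dT (k + 1) M, wT ωh c
      = ∏ c ∈ ctr (k + 1), (if M ∩ cE c = pT c then wT ωh c else 1) :=
    Finset.prod_filter _ _
  have pieceC : ∏ c ∈ emptyC (k + 1) (Phi (k + 1) M d) \ dT (k + 1) M, wF ωh c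
      = ∏ c ∈ ctr (k + 1),
          (if Phi (k + 1) M d ∩ cE c = ∅ ∧ ¬(M ∩ cE c = pT c) then wF ωh c else 1) := by
    rw [hsd3]
    exact Finset.prod_filter _ _
  rw [hL, pieceA, pieceB, pieceC, prod_grouped ωh hedges, prod_grouped (k := k + 1) ωl (fun e he => edgeSet_mono (hPhiPM.1 e he))]
  conv_lhs => rw [← Finset.prod_mul_distrib]
  conv_rhs => rw [← Finset.prod_mul_distrib]
  conv_rhs => rw [← Finset.prod_mul_distrib]
  conv_rhs => rw [← Finset.prod_mul_distrib]
  refine Finset.prod_congr rfl ?_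
  intro c hc
  have hcc := mem_ctr.mp hc
  have hDne : cellFactor ωh c.1 c.2 ≠ 0 := hD c.1 c.2 hcc
  have hMc' : Phi (k + 1) M d ∩ cE c = cImg c (M ∩ cE c) (c ∈ d) := Phi_inter hc
  have hrc := hrec c.1 c.2 hcc
  have hlo : ∀ e ∈ Phi (k + 1) M d ∩ cE c, e ∈ (aztec k).edgeSet :=
    fun e he => hPhiPM.1 e (Finset.mem_inter.mp he).1
  rcases state_cases (M := M) (c := c) hdisj with hE | ⟨e, hecE, hS⟩ | hT | hF
  · -- empty cell: filled on the other side
    rw [hE, cImg_empty] at hMc'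
    by_cases hcd : c ∈ d
    · rw [if_pos hcd] at hMc'
      have hmem : ∀ e ∈ pT c, e ∈ (aztec k).edgeSet := fun e he =>
        hlo e (by rw [hMc']; exact he)
      have h1 := hrc.1 (hmem _ (by simp [pT]))
      have h2 := hrc.2.2.2 (hmem _ (by simp [pT]))
      rw [hE, hMc', Finset.prod_empty, if_pos rfl, if_pos hcd,
        if_pos (pT_ne_empty c), if_neg (fun h : (∅ : Finset (Sym2 V)) = pT c =>
          pT_ne_empty c h.symm),
        if_neg (fun h : pT c = ∅ ∧ _ => pT_ne_empty c h.1),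
        pT, Finset.prod_pair (ne_nw_se c), h1, h2, wT]
      field_simp
    · rw [if_neg hcd] at hMc'
      have hmem : ∀ e ∈ pF c, e ∈ (aztec k).edgeSet := fun e he =>
        hlo e (by rw [hMc']; exact he)
      have h1 := hrc.2.1 (hmem _ (by simp [pF]))
      have h2 := hrc.2.2.1 (hmem _ (by simp [pF]))
      rw [hE, hMc', Finset.prod_empty, if_pos rfl, if_neg hcd,
        if_pos (pF_ne_empty c), if_neg (fun h : (∅ : Finset (Sym2 V)) = pT c =>
          pT_ne_empty c h.symm),
        if_neg (fun h : pF c = ∅ ∧ _ => pF_ne_empty c h.1),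
        pF, Finset.prod_pair (ne_ne_sw c), h1, h2, wF]
      field_simp
  · -- single cell: slid edge
    rw [hS, cImg_single] at hMc'
    have hmemopp : oppc c e ∈ (aztec k).edgeSet := by
      refine hlo _ ?_
      rw [hMc']
      exact Finset.mem_singleton_self _
    rw [hS, hMc', Finset.prod_singleton, Finset.prod_singleton,
      if_neg (Finset.singleton_ne_empty e),
      if_pos (Finset.singleton_ne_empty (oppc c e)),
      if_neg (singleton_ne_pT (c := c) (e := e)),
      if_neg (fun h : ({oppc c e} : Finset (Sym2 V)) = ∅ ∧ _ =>
        Finset.singleton_ne_empty _ h.1)]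
    rcases mem_cE.mp hecE with rfl | rfl | rfl | rfl
    · rw [oppc_nw] at hmemopp ⊢
      rw [hrc.2.2.2 hmemopp]
      field_simp
    · rw [oppc_ne] at hmemopp ⊢
      rw [hrc.2.2.1 hmemopp]
      field_simp
    · rw [oppc_sw] at hmemopp ⊢
      rw [hrc.2.1 hmemopp]
      field_simp
    · rw [oppc_se] at hmemopp ⊢
      rw [hrc.1 hmemopp]
      field_simp
  · -- doubled + cell
    rw [hT, cImg_pT] at hMc'
    rw [hT, hMc', Finset.prod_empty, if_neg (pT_ne_empty c),
      if_neg (fun h : ¬((∅ : Finset (Sym2 V)) = ∅) => h rfl),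
      if_pos rfl,
      if_neg (fun h : (∅ : Finset (Sym2 V)) = ∅ ∧ ¬(pT c = pT c) => h.2 rfl),
      pT, Finset.prod_pair (ne_nw_se c), wT]
    ring
  · -- doubled − cell
    rw [hF, cImg_pF] at hMc'
    rw [hF, hMc', Finset.prod_empty, if_neg (pF_ne_empty c),
      if_neg (fun h : ¬((∅ : Finset (Sym2 V)) = ∅) => h rfl),
      if_neg (fun h : pF c = pT c => pT_ne_pF c h.symm),
      if_pos (⟨rfl, fun h : pF c = pT c => pT_ne_pF c h.symm⟩ :
        (∅ : Finset (Sym2 V)) = ∅ ∧ ¬(pF c = pT c)),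
      pF, Finset.prod_pair (ne_ne_sw c), wF]
    ring

end

end AztecRed
namespace AztecRed

noncomputable section

/-- The one-step reduction identity. -/
lemma step (k : ℕ) (ωh ωl : Sym2 V → ℝ)
    (hD : ∀ p q : ℤ, IsCellCenter (k + 1) p q → cellFactor ωh p q ≠ 0)
    (hrec : ∀ p q : ℤ, IsCellCenter (k + 1) p q →
      (nwEdge p q ∈ (aztec k).edgeSet →
        ωl (nwEdge p q) = ωh (seEdge p q) / cellFactor ωh p q) ∧
      (neEdge p q ∈ (aztec k).edgeSet →
        ωl (neEdge p q) = ωh (swEdge p q) / cellFactor ωh p q) ∧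
      (swEdge p q ∈ (aztec k).edgeSet →
        ωl (swEdge p q) = ωh (neEdge p q) / cellFactor ωh p q) ∧
      (seEdge p q ∈ (aztec k).edgeSet →
        ωl (seEdge p q) = ωh (nwEdge p q) / cellFactor ωh p q)) :
    mSum (aztec (k + 1)) (aztecSet (k + 1)) ωh
      = (∏ c ∈ ctr (k + 1), cellFactor ωh c.1 c.2) * mSum (aztec k) (aztecSet k) ωl := by
  rw [mSum_eq, mSum_eq, Finset.mul_sum]
  have lhs_exp : ∀ M ∈ pmF (k + 1),
      (∏ e ∈ M, ωh e) = ∑ d ∈ (emptyC (k + 1) M).powerset,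
        (∏ e ∈ M, ωh e) * ((∏ c ∈ d, wT ωh c / cellFactor ωh c.1 c.2) *
          ∏ c ∈ emptyC (k + 1) M \ d, wF ωh c / cellFactor ωh c.1 c.2) := by
    intro M _
    have hone : ∏ c ∈ emptyC (k + 1) M,
        (wT ωh c / cellFactor ωh c.1 c.2 + wF ωh c / cellFactor ωh c.1 c.2) = 1 := by
      refine Finset.prod_eq_one ?_
      intro c hcE
      have hc : c ∈ ctr (k + 1) := (Finset.mem_filter.mp hcE).1
      have hDne := hD c.1 c.2 (mem_ctr.mp hc)
      rw [← add_div, ← cellFactor_eq, div_self hDne]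
    conv_lhs => rw [← mul_one (∏ e ∈ M, ωh e), ← hone, Finset.prod_add, Finset.mul_sum]
  have rhs_exp : ∀ M' ∈ pmF k,
      (∏ c ∈ ctr (k + 1), cellFactor ωh c.1 c.2) * (∏ e ∈ M', ωl e)
      = ∑ E ∈ (emptyC (k + 1) M').powerset,
          (∏ c ∈ ctr (k + 1) \ emptyC (k + 1) M', cellFactor ωh c.1 c.2) *
            ((∏ c ∈ E, wT ωh c) * ∏ c ∈ emptyC (k + 1) M' \ E, wF ωh c) *
            ∏ e ∈ M', ωl e := by
    intro M' _
    have hsplit : ∏ c ∈ ctr (k + 1), cellFactor ωh c.1 c.2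
        = (∏ c ∈ ctr (k + 1) \ emptyC (k + 1) M', cellFactor ωh c.1 c.2) *
          ∏ c ∈ emptyC (k + 1) M', cellFactor ωh c.1 c.2 :=
      (Finset.prod_sdiff (Finset.filter_subset _ _)).symm
    have hexp : ∏ c ∈ emptyC (k + 1) M', cellFactor ωh c.1 c.2
        = ∑ E ∈ (emptyC (k + 1) M').powerset,
            (∏ c ∈ E, wT ωh c) * ∏ c ∈ emptyC (k + 1) M' \ E, wF ωh c := by
      rw [Finset.prod_congr rfl (fun c _ => cellFactor_eq ωh c), Finset.prod_add]
    rw [hsplit, hexp, Finset.mul_sum, Finset.sum_mul]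
  rw [Finset.sum_congr rfl lhs_exp, Finset.sum_congr rfl rhs_exp,
    Finset.sum_sigma', Finset.sum_sigma']
  refine Finset.sum_nbij' (fun p => ⟨Phi (k + 1) p.1 p.2, dT (k + 1) p.1⟩)
    (fun p => ⟨Phi (k + 1) p.1 p.2, dT (k + 1) p.1⟩) ?_ ?_ ?_ ?_ ?_
  · rintro ⟨M, d⟩ hMd
    rw [Finset.mem_sigma] at hMd ⊢
    obtain ⟨hM, -⟩ := hMd
    exact ⟨mem_pmF.mpr (Phi_down_isPM (mem_pmF.mp hM)),
      Finset.mem_powerset.mpr dT_subset_emptyC_Phi⟩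
  · rintro ⟨M', E⟩ hME
    rw [Finset.mem_sigma] at hME ⊢
    obtain ⟨hM', -⟩ := hME
    exact ⟨mem_pmF.mpr (Phi_up_isPM (mem_pmF.mp hM')),
      Finset.mem_powerset.mpr dT_subset_emptyC_Phi⟩
  · rintro ⟨M, d⟩ hMd
    rw [Finset.mem_sigma] at hMd
    obtain ⟨hM, hd⟩ := hMd
    have hM' := mem_pmF.mp hM
    have hd' := Finset.mem_powerset.mp hd
    have hdisj := disj_of_isPM hM' (le_refl _)
    dsimp only
    rw [Phi_Phi hM'.1 hdisj hd', dT_Phi hdisj hd']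
  · rintro ⟨M', E⟩ hME
    rw [Finset.mem_sigma] at hME
    obtain ⟨hM', hE⟩ := hME
    have hM'' := mem_pmF.mp hM'
    have hE' := Finset.mem_powerset.mp hE
    have hdisj := disj_of_isPM hM'' (le_refl _)
    dsimp only
    rw [Phi_Phi (fun e he => edgeSet_mono (hM''.1 e he)) hdisj hE', dT_Phi hdisj hE']
  · rintro ⟨M, d⟩ hMd
    rw [Finset.mem_sigma] at hMd
    obtain ⟨hM, hd⟩ := hMd
    exact term_eq hD hrec (mem_pmF.mp hM) (Finset.mem_powerset.mp hd)

end

end AztecRed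
namespace AztecRed

noncomputable section

lemma edgeSet_zero : (aztec 0).edgeSet = ∅ := by
  ext e
  simp only [Set.mem_empty_iff_false, iff_false]
  induction e using Sym2.inductionOn with
  | hf u v =>
    intro h
    have hu : u ∈ aztecSet 0 := (((aztec 0).mem_edgeSet).mp h).1
    rw [mem_aztecSet'] at hu
    obtain ⟨h1, h2, h3⟩ := hu
    rw [abs_le] at h2 h3
    omega

lemma pmF_zero : pmF 0 = {∅} := by
  ext M
  rw [mem_pmF, Finset.mem_singleton]
  constructor
  · intro h
    rw [Finset.eq_empty_iff_forall_notMem]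
    intro e he
    have := h.1 e he
    rw [edgeSet_zero] at this
    exact this
  · rintro rfl
    constructor
    · intro e he
      exact absurd he (Finset.notMem_empty e)
    · intro v hv
      rw [mem_aztecSet'] at hv
      obtain ⟨h1, h2, h3⟩ := hv
      rw [abs_le] at h2 h3
      omega

lemma mSum_zero (ω : Sym2 V → ℝ) : mSum (aztec 0) (aztecSet 0) ω = 1 := by
  rw [mSum_eq, pmF_zero]
  simp

/-- The iterated reduction formula, with finset products. -/
lemma main_aux (n : ℕ) (ω : ℕ → Sym2 (ℤ × ℤ) → ℝ)
    (hD : ∀ k ∈ Finset.Icc 1 n, ∀ p q : ℤ, IsCellCenter k p q →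
      cellFactor (ω k) p q ≠ 0)
    (hrec : ∀ k ∈ Finset.Icc 1 n, ∀ p q : ℤ, IsCellCenter k p q →
      (nwEdge p q ∈ (aztec (k - 1)).edgeSet →
        ω (k - 1) (nwEdge p q) = ω k (seEdge p q) / cellFactor (ω k) p q) ∧
      (neEdge p q ∈ (aztec (k - 1)).edgeSet →
        ω (k - 1) (neEdge p q) = ω k (swEdge p q) / cellFactor (ω k) p q) ∧
      (swEdge p q ∈ (aztec (k - 1)).edgeSet →
        ω (k - 1) (swEdge p q) = ω k (neEdge p q) / cellFactor (ω k) p q) ∧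
      (seEdge p q ∈ (aztec (k - 1)).edgeSet →
        ω (k - 1) (seEdge p q) = ω k (nwEdge p q) / cellFactor (ω k) p q)) :
    mSum (aztec n) (aztecSet n) (ω n)
      = ∏ k ∈ Finset.Icc 1 n, ∏ c ∈ ctr k, cellFactor (ω k) c.1 c.2 := by
  induction n with
  | zero =>
    rw [mSum_zero]
    simp
  | succ m ih =>
    have hmem : m + 1 ∈ Finset.Icc 1 (m + 1) := by
      rw [Finset.mem_Icc]
      omega
    have hstep := step m (ω (m + 1)) (ω m)
      (fun p q h => hD (m + 1) hmem p q h)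
      (fun p q h => hrec (m + 1) hmem p q h)
    rw [hstep, Finset.prod_Icc_succ_top (by omega : 1 ≤ m + 1),
      ih (fun k hk => hD k (by rw [Finset.mem_Icc] at *; omega) )
        (fun k hk => hrec k (by rw [Finset.mem_Icc] at *; omega))]
    ring

end

end AztecRed

/-- **Iterated reduction formula**: if `ω_n, ω_{n−1}, …, ω_0` is a sequence of
weight functions in which each `ω_{k−1}` is obtained from `ω_k` by the Aztec
reduction rule `ω_{k−1}(e) = ω_k(opp e) / D_{ω_k}(c(e))` on the edges of
`A_{k−1}`, all cell-factors encountered being nonzero, then `M(A_n, ω_n)` is the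
product over `k = 1, …, n` of the products of all cell-factors of `A_k` with
respect to `ω_k` — in particular a product of `n² + (n−1)² + ⋯ + 1²` cell-factors. -/
theorem aztec_iterated_reduction (n : ℕ) (ω : ℕ → Sym2 (ℤ × ℤ) → ℝ)
    (hnonneg : ∀ e ∈ (aztec n).edgeSet, 0 ≤ ω n e)
    (hD : ∀ k ∈ Finset.Icc 1 n, ∀ p q : ℤ, IsCellCenter k p q →
      cellFactor (ω k) p q ≠ 0)
    (hrec : ∀ k ∈ Finset.Icc 1 n, ∀ p q : ℤ, IsCellCenter k p q →
      (nwEdge p q ∈ (aztec (k - 1)).edgeSet →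
        ω (k - 1) (nwEdge p q) = ω k (seEdge p q) / cellFactor (ω k) p q) ∧
      (neEdge p q ∈ (aztec (k - 1)).edgeSet →
        ω (k - 1) (neEdge p q) = ω k (swEdge p q) / cellFactor (ω k) p q) ∧
      (swEdge p q ∈ (aztec (k - 1)).edgeSet →
        ω (k - 1) (swEdge p q) = ω k (neEdge p q) / cellFactor (ω k) p q) ∧
      (seEdge p q ∈ (aztec (k - 1)).edgeSet →
        ω (k - 1) (seEdge p q) = ω k (nwEdge p q) / cellFactor (ω k) p q)) :
    mSum (aztec n) (aztecSet n) (ω n)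
      = ∏ k ∈ Finset.Icc 1 n,
          ∏ᶠ c ∈ {c : ℤ × ℤ | IsCellCenter k c.1 c.2}, cellFactor (ω k) c.1 c.2 := by
  have hconv : ∀ k : ℕ,
      ∏ᶠ c ∈ {c : ℤ × ℤ | IsCellCenter k c.1 c.2}, cellFactor (ω k) c.1 c.2
        = ∏ c ∈ AztecRed.ctr k, cellFactor (ω k) c.1 c.2 := by
    intro k
    have hset : {c : ℤ × ℤ | IsCellCenter k c.1 c.2} = ↑(AztecRed.ctr k) := by
      ext c
      rw [Finset.mem_coe, AztecRed.mem_ctr]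
      rfl
    rw [hset, finprod_mem_coe_finset]
  rw [Finset.prod_congr rfl (fun k _ => hconv k)]
  exact AztecRed.main_aux n ω hD hrec
end

section
/- Condensation identity for a cell of the Aztec diamond: let ω be a nonnegative real weight function on the edges of A_n and let c be a cell of A_n with center (p,q) and vertices N = (p,q+1), W = (p−1,q), E = (p+1,q), S = (p,q−1). For a subset T of these vertices, let A_n − T denote the weighted induced subgraph of A_n obtained by deleting the vertices of T. Then M(A_n) · M(A_n − {N,W,E,S}) = M(A_n − {N,W}) · M(A_n − {E,S}) + M(A_n − {N,E}) · M(A_n − {W,S}), where all matching sums are taken with the weights ω inherited on surviving edges. -/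
open scoped Classical
set_option linter.unusedSectionVars false

namespace AzAux

variable {V : Type} [DecidableEq V]

/-- adjacency via an edge finset -/
def adjOf (D : Finset (Sym2 V)) (u v : V) : Prop := u ≠ v ∧ s(u,v) ∈ D

lemma adjOf_symm (D : Finset (Sym2 V)) : Symmetric (adjOf D) := by
  intro u v ⟨h1, h2⟩
  exact ⟨Ne.symm h1, by rwa [Sym2.eq_swap]⟩

/-- reachability via an edge finset -/
def reach (D : Finset (Sym2 V)) (a b : V) : Prop := Relation.ReflTransGen (adjOf D) a b

lemma reach_symm {D : Finset (Sym2 V)} {a b : V} (h : reach D a b) : reach D b a :=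
  haveI : Std.Symm (adjOf D) := ⟨fun _ _ hx => adjOf_symm D hx⟩
  Std.Symm.symm (r := Relation.ReflTransGen (adjOf D)) _ _ h

lemma reach_mono {D D' : Finset (Sym2 V)} (h : D ⊆ D') {a b : V} (hr : reach D a b) :
    reach D' a b :=
  Relation.ReflTransGen.mono (r := adjOf D) (p := adjOf D') (fun _ _ hx => ⟨hx.1, h hx.2⟩) a b hr

lemma reach_split {E : Finset (Sym2 V)} {a b : V} (e : Sym2 V) (he : e = s(a,b))
    {v : V} (h : reach E a v) : reach (E.erase e) a v ∨ reach (E.erase e) b v := by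
  induction h with
  | refl => exact Or.inl Relation.ReflTransGen.refl
  | tail _ hstep ih =>
    rename_i c w _
    by_cases hce : s(c, w) = e
    · rw [he, Sym2.eq_iff] at hce
      rcases hce with ⟨h1, h2⟩ | ⟨h1, h2⟩
      · exact Or.inr (h2 ▸ Relation.ReflTransGen.refl)
      · exact Or.inl (h2 ▸ Relation.ReflTransGen.refl)
    · have hmem : s(c, w) ∈ E.erase e := Finset.mem_erase.mpr ⟨hce, hstep.2⟩
      rcases ih with h1 | h1
      · exact Or.inl (h1.tail ⟨hstep.1, hmem⟩)
      · exact Or.inr (h1.tail ⟨hstep.1, hmem⟩)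

lemma reach_restrict {E : Finset (Sym2 V)} {a v : V} (h : reach E a v) :
    reach (E.filter (fun f => ∃ u, u ∈ f ∧ reach E a u)) a v := by
  induction h with
  | refl => exact Relation.ReflTransGen.refl
  | tail hr hstep ih =>
    rename_i c w
    refine ih.tail ⟨hstep.1, Finset.mem_filter.mpr ⟨hstep.2, ⟨c, ?_, hr⟩⟩⟩
    exact Sym2.mem_mk_left c w

lemma reach_restrict2 {E' : Finset (Sym2 V)} {a b : V} (hnab : ¬ reach E' a b) {v : V}
    (h : reach E' b v) :
    reach (E'.filter (fun f => ¬ ∃ u, u ∈ f ∧ reach E' a u)) b v := by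
  induction h with
  | refl => exact Relation.ReflTransGen.refl
  | tail hr hstep ih =>
    rename_i c w
    have hcnot : ¬ reach E' a c := fun hac => hnab (hac.trans (reach_symm hr))
    have hwnot : ¬ reach E' a w := fun haw =>
      hcnot (haw.trans (Relation.ReflTransGen.single (adjOf_symm _ hstep)))
    refine ih.tail ⟨hstep.1, Finset.mem_filter.mpr ⟨hstep.2, ?_⟩⟩
    rintro ⟨u, hu, hru⟩
    rw [Sym2.mem_iff] at hu
    rcases hu with rfl | rfl
    · exact hcnot hru
    · exact hwnot hru

/-- a connected vertex set has at most (number of edges + 1) elements -/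
lemma conn_card_le : ∀ (n : ℕ) (E : Finset (Sym2 V)), E.card = n →
    ∀ (a : V) (S : Finset V), (∀ v ∈ S, reach E a v) → S.card ≤ E.card + 1 := by
  intro n
  induction n using Nat.strong_induction_on with
  | _ n IH =>
    intro E hn a S hS
    by_cases hstart : ∃ b, adjOf E a b
    · obtain ⟨b, hab⟩ := hstart
      set e : Sym2 V := s(a, b) with hedef
      have heE : e ∈ E := hab.2
      set E' : Finset (Sym2 V) := E.erase e with hE'
      have hcard' : E'.card = E.card - 1 := Finset.card_erase_of_mem heE
      have hEpos : 0 < E.card := Finset.card_pos.mpr ⟨e, heE⟩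
      by_cases hab' : reach E' a b
      · have hall : ∀ v ∈ S, reach E' a v := by
          intro v hv
          rcases reach_split e rfl (hS v hv) with h | h
          · exact h
          · exact hab'.trans h
        have := IH E'.card (by omega) E' rfl a S hall
        omega
      · set E1 : Finset (Sym2 V) := E'.filter (fun f => ∃ u, u ∈ f ∧ reach E' a u) with hE1
        set E2 : Finset (Sym2 V) := E'.filter (fun f => ¬ ∃ u, u ∈ f ∧ reach E' a u) with hE2
        have hsplitcard : E1.card + E2.card = E'.card :=
          Finset.card_filter_add_card_filter_not _
        set S1 : Finset V := S.filter (fun v => reach E' a v) with hS1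
        set S2 : Finset V := S.filter (fun v => ¬ reach E' a v) with hS2
        have hScard : S1.card + S2.card = S.card :=
          Finset.card_filter_add_card_filter_not _
        have hS1r : ∀ v ∈ S1, reach E1 a v := fun v hv =>
          reach_restrict (Finset.mem_filter.mp hv).2
        have hS2r : ∀ v ∈ S2, reach E2 b v := by
          intro v hv
          obtain ⟨hvS, hnv⟩ := Finset.mem_filter.mp hv
          have hbv : reach E' b v := by
            rcases reach_split e rfl (hS v hvS) with h | h
            · exact absurd h hnv
            · exact h
          exact reach_restrict2 hab' hbv
        have hc1 : E1.card ≤ E'.card := Finset.card_filter_le _ _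
        have hc2 : E2.card ≤ E'.card := Finset.card_filter_le _ _
        have h1 := IH E1.card (by omega) E1 rfl a S1 hS1r
        have h2 := IH E2.card (by omega) E2 rfl b S2 hS2r
        omega
    · have hsub : ∀ v ∈ S, v = a := by
        intro v hv
        rcases (hS v hv).cases_head with h | ⟨c, hc, _⟩
        · exact h.symm
        · exact absurd hc (fun h' => hstart ⟨c, h'⟩)
      have hsub' : S ⊆ {a} := fun v hv => Finset.mem_singleton.mpr (hsub v hv)
      have := Finset.card_le_card hsub'
      simp at this
      omega



variable {V : Type} [DecidableEq V]

def degf (D : Finset (Sym2 V)) (v : V) : ℕ := (D.filter (fun e => v ∈ e)).card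

lemma degf_union (D1 D2 : Finset (Sym2 V)) (h : Disjoint D1 D2) (v : V) :
    degf (D1 ∪ D2) v = degf D1 v + degf D2 v := by
  unfold degf
  rw [Finset.filter_union]
  exact Finset.card_union_of_disjoint (Finset.disjoint_filter_filter h)

/-- endpoints of an edge, as a finset -/
def evs (e : Sym2 V) : Finset V :=
  Sym2.lift ⟨fun u v => {u, v}, fun u v => by ext x; simp [or_comm]⟩ e

@[simp] lemma mem_evs {x : V} {e : Sym2 V} : x ∈ evs e ↔ x ∈ e := by
  induction e using Sym2.ind with
  | _ u v => simp [evs, Sym2.mem_iff]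

lemma evs_card {e : Sym2 V} (h : ¬ e.IsDiag) : (evs e).card = 2 := by
  induction e using Sym2.ind with
  | _ u v =>
    have : u ≠ v := by simpa [Sym2.mk_isDiag_iff] using h
    simp [evs, Finset.card_insert_of_notMem, this]

end AzAux

namespace AzAux
variable {V : Type} [DecidableEq V]

lemma sym2_exists_eq (e : Sym2 V) : ∃ u v : V, e = s(u,v) := by
  induction e using Sym2.ind with
  | _ u v => exact ⟨u, v, rfl⟩

section Component

variable (D : Finset (Sym2 V)) (a : V)

/-- the edges of the connected component of `a` -/
noncomputable def comp : Finset (Sym2 V) := D.filter (fun f => ∃ u, u ∈ f ∧ reach D a u)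

/-- the vertices of the connected component of `a` -/
noncomputable def compV : Finset V := (comp D a).biUnion evs

variable {D a}
variable (hloop : ∀ e ∈ D, ¬ e.IsDiag)

include hloop

lemma reach_of_mem_compV {v : V} (hv : v ∈ compV D a) : reach D a v := by
  obtain ⟨e, he, hve⟩ := Finset.mem_biUnion.mp hv
  obtain ⟨heD, u, hue, hru⟩ := Finset.mem_filter.mp he
  rw [mem_evs] at hve
  by_cases huv : u = v
  · exact huv ▸ hru
  · -- u and v are the two endpoints of e
    exact hru.tail ⟨huv, by
      induction e using Sym2.ind with
      | _ x y =>
        rw [Sym2.mem_iff] at hue hve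
        have hxy : x ≠ y := by simpa [Sym2.mk_isDiag_iff] using hloop _ heD
        rcases hue with rfl | rfl <;> rcases hve with rfl | rfl
        · exact absurd rfl huv
        · exact heD
        · rwa [Sym2.eq_swap]
        · exact absurd rfl huv⟩

lemma mem_compV_of_reach {v : V} (hr : reach D a v) {e : Sym2 V} (he : e ∈ D) (hve : v ∈ e) :
    v ∈ compV D a := by
  refine Finset.mem_biUnion.mpr ⟨e, Finset.mem_filter.mpr ⟨he, v, hve, hr⟩, mem_evs.mpr hve⟩

lemma comp_filter_eq_of_reach {v : V} (hr : reach D a v) :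
    (comp D a).filter (fun e => v ∈ e) = D.filter (fun e => v ∈ e) := by
  ext e
  simp only [Finset.mem_filter, comp]
  constructor
  · rintro ⟨⟨h1, _⟩, h2⟩; exact ⟨h1, h2⟩
  · rintro ⟨h1, h2⟩; exact ⟨⟨h1, v, h2, hr⟩, h2⟩

lemma degf_comp_of_reach {v : V} (hr : reach D a v) : degf (comp D a) v = degf D v := by
  unfold degf; rw [comp_filter_eq_of_reach hloop hr]

lemma degf_comp_of_not_mem {v : V} (hv : v ∉ compV D a) : degf (comp D a) v = 0 := by
  unfold degf
  rw [Finset.card_eq_zero, Finset.filter_eq_empty_iff]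
  intro e he hve
  exact hv (Finset.mem_biUnion.mpr ⟨e, he, mem_evs.mpr hve⟩)

lemma degf_comp_eq_degf {v : V} (hv : v ∈ compV D a) : degf (comp D a) v = degf D v :=
  degf_comp_of_reach hloop (reach_of_mem_compV hloop hv)

lemma mem_compV_iff_of_reach {v : V} (hr : reach D a v) (hd : 1 ≤ degf D v) :
    v ∈ compV D a := by
  obtain ⟨e, he⟩ := Finset.card_pos.mp hd
  obtain ⟨heD, hve⟩ := Finset.mem_filter.mp he
  exact mem_compV_of_reach hloop hr heD hve

lemma compV_filter_pair {e : Sym2 V} (he : e ∈ comp D a) {u v : V} (heq : e = s(u,v)) :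
    (compV D a).filter (fun w => w ∈ e) = {u, v} := by
  ext w
  simp only [Finset.mem_filter, Finset.mem_insert, Finset.mem_singleton]
  constructor
  · rintro ⟨-, hw⟩
    rw [heq, Sym2.mem_iff] at hw
    exact hw
  · intro hw
    have hm : w ∈ e := by rw [heq, Sym2.mem_iff]; tauto
    exact ⟨Finset.mem_biUnion.mpr ⟨e, he, mem_evs.mpr hm⟩, hm⟩

lemma handshake : ∑ v ∈ compV D a, degf (comp D a) v = 2 * (comp D a).card := by
  unfold degf
  have : ∀ v ∈ compV D a, ((comp D a).filter (fun e => v ∈ e)).card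
      = ∑ e ∈ comp D a, if v ∈ e then 1 else 0 := by
    intro v _
    rw [Finset.sum_boole]
    norm_num
  rw [Finset.sum_congr rfl this, Finset.sum_comm]
  have : ∀ e ∈ comp D a, (∑ v ∈ compV D a, if v ∈ e then 1 else 0) = 2 := by
    intro e he
    rw [Finset.sum_boole]
    norm_num
    have hloope : ¬ e.IsDiag := hloop e (Finset.mem_filter.mp he).1
    obtain ⟨u, v, heq⟩ : ∃ u v, e = s(u,v) := by
      induction e using Sym2.ind with
      | _ x y => exact ⟨x, y, rfl⟩
    rw [compV_filter_pair hloop he heq]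
    have huv : u ≠ v := by
      rw [heq, Sym2.mk_isDiag_iff] at hloope; exact hloope
    simp [huv]
  rw [Finset.sum_congr rfl this, Finset.sum_const, smul_eq_mul, mul_comm]

lemma compV_card_le (hD : True) : (compV D a).card ≤ (comp D a).card + 1 := by
  refine conn_card_le (comp D a).card (comp D a) rfl a (compV D a) ?_
  intro v hv
  have h1 : reach D a v := reach_of_mem_compV hloop hv
  exact reach_restrict h1

lemma degf_pos_of_mem_compV {v : V} (hv : v ∈ compV D a) : 1 ≤ degf D v := by
  obtain ⟨e, he, hve⟩ := Finset.mem_biUnion.mp hv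
  have heD : e ∈ D := (Finset.mem_filter.mp he).1
  refine Finset.card_pos.mpr ⟨e, Finset.mem_filter.mpr ⟨heD, mem_evs.mp hve⟩⟩

lemma mem_compV_self (ha : 1 ≤ degf D a) : a ∈ compV D a := by
  obtain ⟨e, he⟩ := Finset.card_pos.mp ha
  obtain ⟨heD, hae⟩ := Finset.mem_filter.mp he
  exact mem_compV_of_reach hloop Relation.ReflTransGen.refl heD hae

/-- the component of a degree-one vertex contains exactly one other odd-degree vertex -/
lemma comp_odd_pair (hdeg2 : ∀ v, degf D v ≤ 2) (ha : degf D a = 1) :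
    ∃ x, x ≠ a ∧ x ∈ compV D a ∧ Odd (degf D x) ∧
      (compV D a).filter (fun v => Odd (degf D v)) = {a, x} := by
  set O : Finset V := (compV D a).filter (fun v => Odd (degf D v)) with hO
  have haV : a ∈ compV D a := mem_compV_self hloop (by omega)
  have haO : a ∈ O := Finset.mem_filter.mpr ⟨haV, by rw [ha]; exact odd_one⟩
  -- sum of degrees over the component is even
  have hhs : ∑ v ∈ compV D a, degf D v = 2 * (comp D a).card := by
    rw [← handshake hloop]
    exact Finset.sum_congr rfl (fun v hv => (degf_comp_eq_degf hloop hv).symm)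
  -- O has even cardinality
  have hOeven : Even O.card := by
    have h2 : Even (∑ v ∈ compV D a, degf D v) := ⟨(comp D a).card, by omega⟩
    rw [Finset.even_sum_iff_even_card_odd] at h2
    exact h2
  -- O has cardinality at most 2
  have hOle : O.card ≤ 2 := by
    have hle : ∑ v ∈ compV D a, degf D v
        ≤ ∑ v ∈ compV D a, (if Odd (degf D v) then 1 else 2) := by
      refine Finset.sum_le_sum ?_
      intro v hv
      by_cases hodd : Odd (degf D v)
      · simp only [hodd, if_true]
        have := hdeg2 v
        rcases Nat.odd_iff.mp hodd with h
        omega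
      · simp only [hodd, if_false]
        exact hdeg2 v
    set O' : Finset V := (compV D a).filter (fun v => ¬ Odd (degf D v)) with hO'
    have h1 : ∑ v ∈ O, (if Odd (degf D v) then (1:ℕ) else 2) = O.card := by
      have hcongr : ∀ v ∈ O, (if Odd (degf D v) then (1:ℕ) else 2) = 1 := by
        intro v hv; simp [(Finset.mem_filter.mp hv).2]
      rw [Finset.sum_congr rfl hcongr, Finset.sum_const, smul_eq_mul, mul_one]
    have h2 : ∑ v ∈ O', (if Odd (degf D v) then (1:ℕ) else 2) = 2 * O'.card := by
      have hcongr : ∀ v ∈ O', (if Odd (degf D v) then (1:ℕ) else 2) = 2 := by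
        intro v hv; simp [(Finset.mem_filter.mp hv).2]
      rw [Finset.sum_congr rfl hcongr, Finset.sum_const, smul_eq_mul, mul_comm]
    have h3 : O.card + O'.card = (compV D a).card :=
      Finset.card_filter_add_card_filter_not _
    have h4 := Finset.sum_filter_add_sum_filter_not (compV D a)
      (fun v => Odd (degf D v)) (fun v => if Odd (degf D v) then (1:ℕ) else 2)
    rw [← hO, ← hO'] at h4
    rw [h1, h2] at h4
    have hcard := compV_card_le (a := a) hloop trivial
    omega
  -- conclude
  have hO1 : 1 ≤ O.card := Finset.card_pos.mpr ⟨a, haO⟩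
  have hO2 : O.card = 2 := by
    rcases hOeven with ⟨k, hk⟩
    omega
  obtain ⟨u, v, huv, hOuv⟩ := Finset.card_eq_two.mp hO2
  have haOuv := haO
  rw [hOuv] at haOuv
  simp only [Finset.mem_insert, Finset.mem_singleton] at haOuv
  rcases haOuv with rfl | rfl
  · refine ⟨v, fun h => huv h.symm, ?_, ?_, by rw [hOuv]⟩
    · have : v ∈ O := by rw [hOuv]; simp
      exact (Finset.mem_filter.mp this).1
    · have : v ∈ O := by rw [hOuv]; simp
      exact (Finset.mem_filter.mp this).2
  · refine ⟨u, fun h => huv h, ?_, ?_, ?_⟩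
    · have : u ∈ O := by rw [hOuv]; simp
      exact (Finset.mem_filter.mp this).1
    · have : u ∈ O := by rw [hOuv]; simp
      exact (Finset.mem_filter.mp this).2
    · rw [hOuv]
      ext w
      simp only [Finset.mem_insert, Finset.mem_singleton]
      tauto

/-- the θ-parity lemma: relation between the colours of the two odd vertices of the
component and the matchings their unique edges belong to -/
lemma comp_theta (D1 D2 : Finset (Sym2 V)) (hD : D = D1 ∪ D2) (hdisj : Disjoint D1 D2)
    (hm1 : ∀ v, degf D1 v ≤ 1) (hm2 : ∀ v, degf D2 v ≤ 1)
    (γ : V → ZMod 2) (hcol : ∀ u v : V, s(u,v) ∈ D → γ u + γ v = 1)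
    (ha : degf D a = 1)
    {x : V} (hxa : x ≠ a) (hxV : x ∈ compV D a) (hxodd : Odd (degf D x))
    (hfil : (compV D a).filter (fun v => Odd (degf D v)) = {a, x}) :
    γ a + γ x + (degf D2 a : ZMod 2) + (degf D2 x : ZMod 2) = 1 := by
  have hdegsum : ∀ v, degf D v = degf D1 v + degf D2 v := fun v => hD ▸ degf_union D1 D2 hdisj v
  have hD2sub : D2 ⊆ D := hD ▸ Finset.subset_union_right
  set P : Finset (Sym2 V) := comp D a with hP
  set VP : Finset V := compV D a with hVP
  set m : Sym2 V → ZMod 2 := fun e => if e ∈ D2 then 1 else 0 with hm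
  set F : Sym2 V → V → ZMod 2 := fun e w => if w ∈ e then γ w + m e else 0 with hF
  -- edgewise evaluation
  have hedge : ∀ e ∈ P, ∑ w ∈ VP, F e w = 1 := by
    intro e he
    obtain ⟨u, v, heq⟩ := sym2_exists_eq e
    have heD : e ∈ D := (Finset.mem_filter.mp he).1
    have huv : u ≠ v := by
      have := hloop e heD
      rw [heq, Sym2.mk_isDiag_iff] at this
      exact this
    have : ∑ w ∈ VP, F e w = ∑ w ∈ VP.filter (fun w => w ∈ e), (γ w + m e) := by
      rw [Finset.sum_filter]
    rw [this, compV_filter_pair hloop he heq, Finset.sum_pair huv]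
    have hcol' : γ u + γ v = 1 := hcol u v (heq ▸ heD)
    have : γ u + m e + (γ v + m e) = γ u + γ v + (m e + m e) := by ring
    rw [this, CharTwo.add_self_eq_zero, add_zero, hcol']
  have hT1 : ∑ e ∈ P, ∑ w ∈ VP, F e w = (P.card : ZMod 2) := by
    rw [Finset.sum_congr rfl hedge, Finset.sum_const, nsmul_eq_mul, mul_one]
  -- vertexwise evaluation
  have hvert : ∀ w ∈ VP, ∑ e ∈ P, F e w
      = (degf D w : ZMod 2) * γ w + (degf D2 w : ZMod 2) := by
    intro w hw
    have h1 : ∑ e ∈ P, F e w = ∑ e ∈ P.filter (fun e => w ∈ e), (γ w + m e) := by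
      rw [Finset.sum_filter]
    rw [h1, hP, comp_filter_eq_of_reach hloop (reach_of_mem_compV hloop hw)]
    rw [Finset.sum_add_distrib, Finset.sum_const, nsmul_eq_mul]
    congr 1
    have h2 : (D.filter (fun e => w ∈ e)).filter (fun e => e ∈ D2)
        = D2.filter (fun e => w ∈ e) := by
      ext e
      simp only [Finset.mem_filter]
      constructor
      · rintro ⟨⟨-, h2⟩, h3⟩; exact ⟨h3, h2⟩
      · rintro ⟨h2, h3⟩; exact ⟨⟨hD2sub h2, h3⟩, h2⟩
    calc ∑ e ∈ D.filter (fun e => w ∈ e), m e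
        = ((D.filter (fun e => w ∈ e)).filter (fun e => e ∈ D2)).card := by
          rw [hm]; rw [Finset.sum_boole]
      _ = (degf D2 w : ZMod 2) := by rw [h2]; rfl
  -- split the vertex sum
  have haV : a ∈ VP := mem_compV_self hloop (by omega)
  set R : Finset V := (VP.erase a).erase x with hR
  have hxV' : x ∈ VP.erase a := Finset.mem_erase.mpr ⟨hxa, hxV⟩
  have hsum_split : ∀ (g : V → ZMod 2), ∑ w ∈ VP, g w = g a + g x + ∑ w ∈ R, g w := by
    intro g
    rw [← Finset.add_sum_erase VP g haV, ← Finset.add_sum_erase _ g hxV']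
    ring
  have hRmem : ∀ w ∈ R, w ∈ VP ∧ w ≠ a ∧ w ≠ x := by
    intro w hw
    obtain ⟨hwx, hw2⟩ := Finset.mem_erase.mp hw
    obtain ⟨hwa, hw3⟩ := Finset.mem_erase.mp hw2
    exact ⟨hw3, hwa, hwx⟩
  have hRdeg : ∀ w ∈ R, degf D w = 2 ∧ degf D2 w = 1 := by
    intro w hw
    obtain ⟨hw1, hwa, hwx⟩ := hRmem w hw
    have hnotodd : ¬ Odd (degf D w) := by
      intro hodd
      have : w ∈ (compV D a).filter (fun v => Odd (degf D v)) :=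
        Finset.mem_filter.mpr ⟨hw1, hodd⟩
      rw [hfil] at this
      simp only [Finset.mem_insert, Finset.mem_singleton] at this
      tauto
    have hpos : 1 ≤ degf D w := degf_pos_of_mem_compV hloop hw1
    have hle : degf D w ≤ 2 := by
      have := hm1 w; have := hm2 w; have := hdegsum w; omega
    have hdeg2 : degf D w = 2 := by
      rcases Nat.even_or_odd (degf D w) with he | ho
      · rcases he with ⟨k, hk⟩; omega
      · exact absurd ho hnotodd
    have := hm1 w; have := hm2 w; have := hdegsum w
    exact ⟨hdeg2, by omega⟩
  have hxdeg : degf D x = 1 := by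
    have hle : degf D x ≤ 2 := by
      have := hm1 x; have := hm2 x; have := hdegsum x; omega
    rcases Nat.odd_iff.mp hxodd with h
    omega
  have hT2 : ∑ w ∈ VP, ∑ e ∈ P, F e w
      = γ a + (degf D2 a : ZMod 2) + (γ x + (degf D2 x : ZMod 2)) + (R.card : ZMod 2) := by
    rw [Finset.sum_congr rfl hvert, hsum_split]
    have hra : (degf D a : ZMod 2) * γ a = γ a := by rw [ha]; push_cast; ring
    have hrx : (degf D x : ZMod 2) * γ x = γ x := by rw [hxdeg]; push_cast; ring
    have hrest : ∀ w ∈ R, (degf D w : ZMod 2) * γ w + (degf D2 w : ZMod 2) = 1 := by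
      intro w hw
      obtain ⟨h2, h21⟩ := hRdeg w hw
      rw [h2, h21]
      have : ((2:ℕ) : ZMod 2) = 0 := by decide
      rw [this]; push_cast; ring
    rw [Finset.sum_congr rfl hrest, Finset.sum_const, nsmul_eq_mul, mul_one, hra, hrx]
  -- relate the cardinalities
  have hcards : P.card = R.card + 1 := by
    have hhs : ∑ v ∈ VP, degf D v = 2 * P.card := by
      rw [← handshake hloop]
      exact Finset.sum_congr rfl (fun v hv => (degf_comp_eq_degf hloop hv).symm)
    have hsplitN : ∑ v ∈ VP, degf D v = degf D a + degf D x + ∑ w ∈ R, degf D w := by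
      rw [← Finset.add_sum_erase VP _ haV, ← Finset.add_sum_erase _ _ hxV']
      ring
    have hrest : ∀ w ∈ R, degf D w = 2 := fun w hw => (hRdeg w hw).1
    rw [Finset.sum_congr rfl hrest, Finset.sum_const, smul_eq_mul, mul_comm] at hsplitN
    rw [hsplitN, ha, hxdeg] at hhs
    omega
  -- finish
  have hfin : (P.card : ZMod 2)
      = γ a + (degf D2 a : ZMod 2) + (γ x + (degf D2 x : ZMod 2)) + (R.card : ZMod 2) := by
    rw [← hT1, Finset.sum_comm, hT2]
  rw [hcards] at hfin
  push_cast at hfin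
  have h2 : (2 : ZMod 2) = 0 := by decide
  linear_combination hfin + (γ a + γ x + ((degf D2 a : ZMod 2)) + ((degf D2 x : ZMod 2)) - 1) * h2

end Component
end AzAux

namespace AzAux

section Crossing

/-- vertices of the integer plane -/
local notation "VV" => (ℤ × ℤ)

/-- `w` is the upper endpoint of segment `e` -/
def UpAt (e : Sym2 VV) (w : VV) : Prop := ∃ lo : VV, e = s(lo, w) ∧ w.2 = lo.2 + 1

/-- `w` is the lower endpoint of segment `e` -/
def LoAt (e : Sym2 VV) (w : VV) : Prop := ∃ up : VV, e = s(w, up) ∧ up.2 = w.2 + 1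

/-- segment `e` crosses the horizontal line at height `v.2 - 1/2` strictly to the left of `v` -/
def Crosses (e : Sym2 VV) (v : VV) : Prop :=
  ∃ lo up : VV, e = s(lo, up) ∧ up.2 = lo.2 + 1 ∧ up.2 = v.2 ∧ lo.1 + up.1 < 2 * v.1

/-- a segment finset: each member has endpoints at consecutive heights with
horizontal displacement at most 1 -/
def IsSegs (C : Finset (Sym2 VV)) : Prop :=
  ∀ e ∈ C, ∃ lo up : VV, e = s(lo, up) ∧ up.2 = lo.2 + 1 ∧ (lo.1 - up.1)^2 ≤ 1

/-- crossing number of the leftward ray from `v` -/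
noncomputable def cr (C : Finset (Sym2 VV)) (v : VV) : ℕ :=
  (C.filter (fun e => Crosses e v)).card

noncomputable def UpSet (C : Finset (Sym2 VV)) (y x : ℤ) : Finset (Sym2 VV) :=
  C.filter (fun e => ∃ w : VV, UpAt e w ∧ w.2 = y ∧ w.1 < x)

noncomputable def LowSet (C : Finset (Sym2 VV)) (y x : ℤ) : Finset (Sym2 VV) :=
  C.filter (fun e => ∃ w : VV, LoAt e w ∧ w.2 = y ∧ w.1 < x)

/-- the nodes (endpoints) of a segment finset -/
noncomputable def nodeF (C : Finset (Sym2 VV)) : Finset VV := C.biUnion evs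

lemma decomp_unique {e : Sym2 VV} {lo up lo' up' : VV} (h : e = s(lo,up))
    (h' : e = s(lo',up')) (hy : up.2 = lo.2 + 1) (hy' : up'.2 = lo'.2 + 1) :
    lo = lo' ∧ up = up' := by
  rw [h, Sym2.eq_iff] at h'
  rcases h' with ⟨h1, h2⟩ | ⟨h1, h2⟩
  · exact ⟨h1, h2⟩
  · exfalso
    rw [← h1, ← h2] at hy'
    omega

lemma not_node_iff {C : Finset (Sym2 VV)} {w : VV} :
    w ∉ nodeF C ↔ ∀ e ∈ C, w ∉ e := by
  simp [nodeF, Finset.mem_biUnion]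

variable {C : Finset (Sym2 VV)} (hseg : IsSegs C)
include hseg

lemma cr_eq_upSet {x y : ℤ} (hnode : ((x, y) : VV) ∉ nodeF C) :
    cr C (x, y) = (UpSet C y x).card := by
  unfold cr UpSet
  congr 1
  apply Finset.filter_congr
  intro e he
  obtain ⟨lo, up, heq, hy, hx⟩ := hseg e he
  have hnot := not_node_iff.mp hnode e he
  have hlon : lo ≠ (x, y) := fun h => hnot (heq ▸ h ▸ Sym2.mem_mk_left lo up)
  have hupn : up ≠ (x, y) := fun h => hnot (heq ▸ h ▸ Sym2.mem_mk_right lo up)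
  constructor
  · rintro ⟨lo', up', heq', hy', hv, hsum⟩
    obtain ⟨rfl, rfl⟩ := decomp_unique heq heq' hy hy'
    refine ⟨up, ⟨lo, heq, hy⟩, hv, ?_⟩
    by_contra hge
    push_neg at hge
    have : up.1 ≠ x := fun h => hupn (Prod.ext h hv)
    have h1 : x + 1 ≤ up.1 := by omega
    nlinarith
  · rintro ⟨w, ⟨lo', heq', hy'⟩, hw2, hw1⟩
    obtain ⟨rfl, rfl⟩ := decomp_unique heq heq' hy hy'
    refine ⟨lo, up, heq, hy, hw2, ?_⟩
    nlinarith

lemma cr_eq_lowSet {x y : ℤ} (hnode : ((x, y + 1) : VV) ∉ nodeF C)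
    (hcorner : ((x, y) : VV) ∉ nodeF C ∨ ((x - 1, y + 1) : VV) ∉ nodeF C) :
    cr C (x, y + 1) = (LowSet C y x).card := by
  unfold cr LowSet
  congr 1
  apply Finset.filter_congr
  intro e he
  obtain ⟨lo, up, heq, hy, hx⟩ := hseg e he
  have hnot := not_node_iff.mp hnode e he
  have hupn : up ≠ (x, y + 1) := fun h => hnot (heq ▸ h ▸ Sym2.mem_mk_right lo up)
  constructor
  · rintro ⟨lo', up', heq', hy', hv, hsum⟩
    obtain ⟨rfl, rfl⟩ := decomp_unique heq heq' hy hy'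
    have hlo2 : lo.2 = y := by omega
    refine ⟨lo, ⟨up, heq, hy⟩, hlo2, ?_⟩
    -- show lo.1 < x
    by_contra hge
    push_neg at hge
    have hlo1 : lo.1 = x := by nlinarith
    -- then up.1 = x - 1 and lo = (x, y), up = (x-1, y+1)
    have hup1 : up.1 = x - 1 := by nlinarith
    rcases hcorner with hc | hc
    · exact (not_node_iff.mp hc e he) (heq ▸ (by
        have : lo = ((x, y) : VV) := Prod.ext hlo1 hlo2
        rw [this] at heq ⊢
        exact Sym2.mem_mk_left _ _))
    · exact (not_node_iff.mp hc e he) (heq ▸ (by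
        have : up = ((x - 1, y + 1) : VV) := Prod.ext hup1 (by omega)
        rw [this] at heq ⊢
        exact Sym2.mem_mk_right _ _))
  · rintro ⟨w, ⟨up', heq', hy'⟩, hw2, hw1⟩
    obtain ⟨rfl, rfl⟩ := decomp_unique heq (by rw [heq']) (by omega) (by omega)
    refine ⟨lo, up, heq, hy, by omega, by nlinarith⟩

lemma lowSet_shift {y x : ℤ} (hnode : ((x, y) : VV) ∉ nodeF C) :
    LowSet C y (x + 1) = LowSet C y x := by
  unfold LowSet
  apply Finset.filter_congr
  intro e he
  constructor
  · rintro ⟨w, hlo, hw2, hw1⟩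
    refine ⟨w, hlo, hw2, ?_⟩
    have hwx : w.1 ≠ x := by
      intro h
      obtain ⟨up, heq, -⟩ := hlo
      exact (not_node_iff.mp hnode e he)
        (heq ▸ (Prod.ext h hw2 : w = ((x,y) : VV)) ▸ Sym2.mem_mk_left w up)
    omega
  · rintro ⟨w, hlo, hw2, hw1⟩
    exact ⟨w, hlo, hw2, by omega⟩

lemma degf_split_updown (w : VV) :
    degf C w = (C.filter (fun e => UpAt e w)).card + (C.filter (fun e => LoAt e w)).card := by
  unfold degf
  rw [← Finset.card_union_of_disjoint]
  · congr 1
    ext e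
    simp only [Finset.mem_union, Finset.mem_filter]
    constructor
    · rintro ⟨he, hwe⟩
      obtain ⟨lo, up, heq, hy, -⟩ := hseg e he
      rw [heq, Sym2.mem_iff] at hwe
      rcases hwe with rfl | rfl
      · exact Or.inr ⟨he, up, heq, hy⟩
      · exact Or.inl ⟨he, lo, heq, hy⟩
    · rintro (⟨he, lo, heq, hy⟩ | ⟨he, up, heq, hy⟩)
      · exact ⟨he, heq ▸ Sym2.mem_mk_right lo w⟩
      · exact ⟨he, heq ▸ Sym2.mem_mk_left w up⟩
  · rw [Finset.disjoint_left]
    rintro e he1 he2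
    obtain ⟨-, lo, heq, hy⟩ := Finset.mem_filter.mp he1
    obtain ⟨-, up, heq', hy'⟩ := Finset.mem_filter.mp he2
    obtain ⟨h1, h2⟩ := decomp_unique heq heq' hy (by omega)
    rw [h1] at hy
    omega

lemma upSet_lowSet_parity (heven : ∀ w : VV, Even (degf C w)) (y x : ℤ) :
    (UpSet C y x).card % 2 = (LowSet C y x).card % 2 := by
  set NF : Finset VV := (nodeF C).filter (fun w => w.2 = y ∧ w.1 < x) with hNF
  have hup : UpSet C y x = NF.biUnion (fun w => C.filter (fun e => UpAt e w)) := by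
    ext e
    constructor
    · intro he
      obtain ⟨heC, w, hua, hw2, hw1⟩ := Finset.mem_filter.mp he
      obtain ⟨lo, heq, hy⟩ := hua
      refine Finset.mem_biUnion.mpr ⟨w, Finset.mem_filter.mpr ⟨?_, hw2, hw1⟩,
        Finset.mem_filter.mpr ⟨heC, lo, heq, hy⟩⟩
      exact Finset.mem_biUnion.mpr ⟨e, heC, mem_evs.mpr (heq ▸ Sym2.mem_mk_right lo w)⟩
    · intro he
      obtain ⟨w, hwNF, hef⟩ := Finset.mem_biUnion.mp he
      obtain ⟨heC, hua⟩ := Finset.mem_filter.mp hef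
      obtain ⟨-, hw2, hw1⟩ := Finset.mem_filter.mp hwNF
      exact Finset.mem_filter.mpr ⟨heC, w, hua, hw2, hw1⟩
  have hlow : LowSet C y x = NF.biUnion (fun w => C.filter (fun e => LoAt e w)) := by
    ext e
    constructor
    · intro he
      obtain ⟨heC, w, hla, hw2, hw1⟩ := Finset.mem_filter.mp he
      obtain ⟨up, heq, hy⟩ := hla
      refine Finset.mem_biUnion.mpr ⟨w, Finset.mem_filter.mpr ⟨?_, hw2, hw1⟩,
        Finset.mem_filter.mpr ⟨heC, up, heq, hy⟩⟩
      exact Finset.mem_biUnion.mpr ⟨e, heC, mem_evs.mpr (heq ▸ Sym2.mem_mk_left w up)⟩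
    · intro he
      obtain ⟨w, hwNF, hef⟩ := Finset.mem_biUnion.mp he
      obtain ⟨heC, hla⟩ := Finset.mem_filter.mp hef
      obtain ⟨-, hw2, hw1⟩ := Finset.mem_filter.mp hwNF
      exact Finset.mem_filter.mpr ⟨heC, w, hla, hw2, hw1⟩
  have hupcard : (UpSet C y x).card = ∑ w ∈ NF, (C.filter (fun e => UpAt e w)).card := by
    rw [hup]
    apply Finset.card_biUnion
    intro w hw w' hw' hne
    rw [Function.onFun, Finset.disjoint_left]
    rintro e he he'
    obtain ⟨-, lo, heq, hy⟩ := Finset.mem_filter.mp he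
    obtain ⟨-, lo', heq', hy'⟩ := Finset.mem_filter.mp he'
    exact hne (decomp_unique heq heq' hy hy').2
  have hlowcard : (LowSet C y x).card = ∑ w ∈ NF, (C.filter (fun e => LoAt e w)).card := by
    rw [hlow]
    apply Finset.card_biUnion
    intro w hw w' hw' hne
    rw [Function.onFun, Finset.disjoint_left]
    rintro e he he'
    obtain ⟨-, up, heq, hy⟩ := Finset.mem_filter.mp he
    obtain ⟨-, up', heq', hy'⟩ := Finset.mem_filter.mp he'
    exact hne (decomp_unique heq heq' (by omega) (by omega)).1
  have hsum : (UpSet C y x).card + (LowSet C y x).card = ∑ w ∈ NF, degf C w := by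
    rw [hupcard, hlowcard, ← Finset.sum_add_distrib]
    exact (Finset.sum_congr rfl (fun w _ => (degf_split_updown hseg w).symm))
  have heven' : Even (∑ w ∈ NF, degf C w) := Finset.even_sum _ (fun w _ => heven w)
  obtain ⟨k, hk⟩ := heven'
  omega

lemma cr_step (heven : ∀ w : VV, Even (degf C w)) {x y ε : ℤ} (hε : ε = 1 ∨ ε = -1)
    (hv : ((x, y) : VV) ∉ nodeF C) (hv' : ((x + ε, y + 1) : VV) ∉ nodeF C)
    (hcorner : (if ε = 1 then ((x, y + 1) : VV) else ((x - 1, y) : VV)) ∉ nodeF C) :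
    cr C (x, y) % 2 = cr C (x + ε, y + 1) % 2 := by
  rcases hε with rfl | rfl
  · rw [if_pos rfl] at hcorner
    rw [cr_eq_upSet hseg hv, cr_eq_lowSet hseg hv'
      (Or.inr (by rw [show x + 1 - 1 = x from by ring]; exact hcorner)),
      lowSet_shift hseg hv]
    exact upSet_lowSet_parity hseg heven y x
  · rw [if_neg (by norm_num)] at hcorner
    rw [show x + (-1 : ℤ) = x - 1 from by ring] at hv' ⊢
    rw [cr_eq_upSet hseg hv, cr_eq_lowSet hseg hv' (Or.inl hcorner)]
    have hsh := lowSet_shift hseg (C := C) (y := y) (x := x - 1) hcorner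
    rw [show x - 1 + 1 = x from by ring] at hsh
    rw [← hsh]
    exact upSet_lowSet_parity hseg heven y x

omit hseg in
/-- Two vertex-disjoint path systems cannot connect `N`–`S` and `W`–`E`
around the cell centered at `(p, q)` (discrete Jordan curve argument). -/
lemma no_crossing (p q : ℤ) (P Q : Finset (Sym2 VV))
    (hPedge : ∀ e ∈ P, ∃ u v : VV, e = s(u,v) ∧ (u.1-v.1)^2 = 1 ∧ (u.2-v.2)^2 = 1
      ∧ Odd (u.1+u.2) ∧ Odd (v.1+v.2))
    (hQedge : ∀ e ∈ Q, ∃ u v : VV, e = s(u,v) ∧ (u.1-v.1)^2 = 1 ∧ (u.2-v.2)^2 = 1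
      ∧ Odd (u.1+u.2) ∧ Odd (v.1+v.2))
    (hPN : degf P ((p, q+1) : VV) = 1) (hPS : degf P ((p, q-1) : VV) = 1)
    (hPeven : ∀ v : VV, v ≠ (p, q+1) → v ≠ (p, q-1) → Even (degf P v))
    (hdisjPQ : ∀ v : VV, 1 ≤ degf Q v → degf P v = 0)
    (hWE : reach Q ((p-1, q) : VV) ((p+1, q) : VV)) : False := by
  -- P-incident vertices have odd coordinate sum
  have hPodd : ∀ w : VV, 1 ≤ degf P w → Odd (w.1 + w.2) := by
    intro w hw
    obtain ⟨e, he⟩ := Finset.card_pos.mp hw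
    obtain ⟨heP, hwe⟩ := Finset.mem_filter.mp he
    obtain ⟨u, v, heq, -, -, hou, hov⟩ := hPedge e heP
    rw [heq, Sym2.mem_iff] at hwe
    rcases hwe with rfl | rfl <;> assumption
  have hQodd : ∀ w : VV, 1 ≤ degf Q w → Odd (w.1 + w.2) := by
    intro w hw
    obtain ⟨e, he⟩ := Finset.card_pos.mp hw
    obtain ⟨heQ, hwe⟩ := Finset.mem_filter.mp he
    obtain ⟨u, v, heq, -, -, hou, hov⟩ := hQedge e heQ
    rw [heq, Sym2.mem_iff] at hwe
    rcases hwe with rfl | rfl <;> assumption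
  have hpq : Even (p + q) := by
    have h1 : Odd (p + (q+1)) := hPodd (p, q+1) (by omega)
    rw [Int.odd_iff] at h1
    rw [Int.even_iff]
    omega
  -- the closing vertical segments
  set v1 : Sym2 VV := s(((p, q-1) : VV), ((p, q) : VV)) with hv1
  set v2 : Sym2 VV := s(((p, q) : VV), ((p, q+1) : VV)) with hv2
  have hv1P : v1 ∉ P := by
    intro h
    have : Odd (p + q) := by
      have := hPodd (p, q) (Finset.card_pos.mpr
        ⟨v1, Finset.mem_filter.mpr ⟨h, Sym2.mem_mk_right _ _⟩⟩)
      exact this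
    rw [Int.odd_iff] at this; rw [Int.even_iff] at hpq; omega
  have hv2P : v2 ∉ P := by
    intro h
    have : Odd (p + q) := hPodd (p, q) (Finset.card_pos.mpr
      ⟨v2, Finset.mem_filter.mpr ⟨h, Sym2.mem_mk_left _ _⟩⟩)
    rw [Int.odd_iff] at this; rw [Int.even_iff] at hpq; omega
  have hv12 : v1 ≠ v2 := by
    intro h
    rw [hv1, hv2, Sym2.eq_iff] at h
    rcases h with ⟨h1, -⟩ | ⟨h2, -⟩
    · rw [Prod.mk.injEq] at h1; omega
    · rw [Prod.mk.injEq] at h2; omega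
  set C : Finset (Sym2 VV) := P ∪ {v1, v2} with hC
  have hdisjP12 : Disjoint P ({v1, v2} : Finset (Sym2 VV)) := by
    rw [Finset.disjoint_right]
    intro e he
    rw [Finset.mem_insert, Finset.mem_singleton] at he
    rcases he with rfl | rfl <;> assumption
  have sq_one : ∀ a : ℤ, a^2 = 1 → a = 1 ∨ a = -1 := by
    intro a ha
    have h3 : a ≤ 1 := by nlinarith
    have h4 : -1 ≤ a := by nlinarith
    have h5 : a ≠ 0 := by intro h; rw [h] at ha; norm_num at ha
    omega
  -- C consists of segments
  have hsegC : IsSegs C := by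
    intro e he
    rw [hC, Finset.mem_union, Finset.mem_insert, Finset.mem_singleton] at he
    rcases he with he | rfl | rfl
    · obtain ⟨u, v, heq, hx, hy, -, -⟩ := hPedge e he
      rcases sq_one _ hy with h | h
      · exact ⟨v, u, by rw [heq, Sym2.eq_swap], by omega, by nlinarith⟩
      · exact ⟨u, v, heq, by omega, by nlinarith⟩
    · exact ⟨(p, q-1), (p, q), rfl, by norm_num, by norm_num⟩
    · exact ⟨(p, q), (p, q+1), rfl, by norm_num, by norm_num⟩
  -- degrees in C are all even
  have hdegC : ∀ w : VV, degf C w = degf P w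
      + ((if w ∈ v1 then 1 else 0) + (if w ∈ v2 then 1 else 0)) := by
    intro w
    rw [hC, degf_union P {v1, v2} hdisjP12 w]
    congr 1
    unfold degf
    rw [Finset.filter_insert, Finset.filter_singleton]
    by_cases h1 : w ∈ v1 <;> by_cases h2 : w ∈ v2 <;>
      simp [h1, h2, Finset.card_insert_of_notMem, hv12]
  have hCeven : ∀ w : VV, Even (degf C w) := by
    intro w
    rw [hdegC w]
    by_cases hw1 : w = ((p, q+1) : VV)
    · subst hw1
      have e1 : ((p, q+1) : VV) ∉ v1 := by
        rw [hv1, Sym2.mem_iff]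
        rintro (h | h) <;> (rw [Prod.mk.injEq] at h; omega)
      have e2 : ((p, q+1) : VV) ∈ v2 := Sym2.mem_mk_right _ _
      rw [hPN, if_neg e1, if_pos e2]
      decide
    · by_cases hw2 : w = ((p, q-1) : VV)
      · subst hw2
        have e1 : ((p, q-1) : VV) ∈ v1 := Sym2.mem_mk_left _ _
        have e2 : ((p, q-1) : VV) ∉ v2 := by
          rw [hv2, Sym2.mem_iff]
          rintro (h | h) <;> (rw [Prod.mk.injEq] at h; omega)
        rw [hPS, if_pos e1, if_neg e2]
        decide
      · by_cases hw3 : w = ((p, q) : VV)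
        · subst hw3
          have e1 : ((p, q) : VV) ∈ v1 := Sym2.mem_mk_right _ _
          have e2 : ((p, q) : VV) ∈ v2 := Sym2.mem_mk_left _ _
          rw [if_pos e1, if_pos e2]
          have := hPeven (p, q) (by rw [ne_eq, Prod.mk.injEq]; omega)
            (by rw [ne_eq, Prod.mk.injEq]; omega)
          obtain ⟨k, hk⟩ := this
          exact ⟨k + 1, by omega⟩
        · have e1 : w ∉ v1 := by
            rw [hv1, Sym2.mem_iff]
            rintro (rfl | rfl)
            · exact hw2 rfl
            · exact hw3 rfl
          have e2 : w ∉ v2 := by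
            rw [hv2, Sym2.mem_iff]
            rintro (rfl | rfl)
            · exact hw3 rfl
            · exact hw1 rfl
          rw [if_neg e1, if_neg e2]
          have := hPeven w hw1 hw2
          obtain ⟨k, hk⟩ := this
          exact ⟨k, by omega⟩
  -- characterization of the nodes of C
  have hnode_char : ∀ w : VV, w ∈ nodeF C →
      1 ≤ degf P w ∨ w = ((p,q):VV) ∨ w = ((p,q+1):VV) ∨ w = ((p,q-1):VV) := by
    intro w hw
    obtain ⟨e, he, hwe⟩ := Finset.mem_biUnion.mp hw
    rw [mem_evs] at hwe
    rw [hC, Finset.mem_union, Finset.mem_insert, Finset.mem_singleton] at he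
    rcases he with he | rfl | rfl
    · exact Or.inl (Finset.card_pos.mpr ⟨e, Finset.mem_filter.mpr ⟨he, hwe⟩⟩)
    · rw [hv1, Sym2.mem_iff] at hwe
      rcases hwe with rfl | rfl
      · exact Or.inr (Or.inr (Or.inr rfl))
      · exact Or.inr (Or.inl rfl)
    · rw [hv2, Sym2.mem_iff] at hwe
      rcases hwe with rfl | rfl
      · exact Or.inr (Or.inl rfl)
      · exact Or.inr (Or.inr (Or.inl rfl))
  -- Q-incident vertices are not nodes of C
  have hQnotnode : ∀ w : VV, 1 ≤ degf Q w → w ∉ nodeF C := by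
    intro w hw hnode
    have hP0 : degf P w = 0 := hdisjPQ w hw
    have hodd := hQodd w hw
    rcases hnode_char w hnode with h | rfl | rfl | rfl
    · omega
    · have : Odd (p + q) := hodd
      rw [Int.odd_iff] at this; rw [Int.even_iff] at hpq; omega
    · rw [hPN] at hP0; omega
    · rw [hPS] at hP0; omega
  have hQinc : ∀ u w : VV, s(u,w) ∈ Q → 1 ≤ degf Q u ∧ 1 ≤ degf Q w := by
    intro u w h
    exact ⟨Finset.card_pos.mpr ⟨s(u,w), Finset.mem_filter.mpr ⟨h, Sym2.mem_mk_left _ _⟩⟩,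
      Finset.card_pos.mpr ⟨s(u,w), Finset.mem_filter.mpr ⟨h, Sym2.mem_mk_right _ _⟩⟩⟩
  have hcorner_h : ∀ z : VV, Even (z.1 + z.2) → z ≠ ((p,q):VV) → z ∉ nodeF C := by
    intro z hz hzpq hnode
    rcases hnode_char z hnode with h | h | h | h
    · have := hPodd z h
      rw [Int.odd_iff] at this; rw [Int.even_iff] at hz; omega
    · exact hzpq h
    · rw [h] at hz
      have : Even (p + (q+1)) := hz
      rw [Int.even_iff] at this hpq; omega
    · rw [h] at hz
      have : Even (p + (q-1)) := hz
      rw [Int.even_iff] at this hpq; omega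
  -- a single step along Q preserves crossing parity
  have hstepUp : ∀ c w : VV, 1 ≤ degf Q c → 1 ≤ degf Q w →
      (c.1 - w.1)^2 = 1 → w.2 = c.2 + 1 → cr C c % 2 = cr C w % 2 := by
    intro c w hc1 hw1 hx' hup
    have hcN := hQnotnode c hc1
    have hwN := hQnotnode w hw1
    have hcodd := hQodd c hc1
    have hε : w.1 - c.1 = 1 ∨ w.1 - c.1 = -1 := by
      rcases sq_one _ hx' with h | h
      · right; omega
      · left; omega
    have hcv : ((c.1, c.2) : VV) ∉ nodeF C := by rw [Prod.mk.eta]; exact hcN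
    have hcv' : ((c.1 + (w.1 - c.1), c.2 + 1) : VV) ∉ nodeF C := by
      have heqw : ((c.1 + (w.1 - c.1), c.2 + 1) : VV) = w := Prod.ext (by ring) (by omega)
      rw [heqw]; exact hwN
    have hcorner : (if (w.1 - c.1) = 1 then ((c.1, c.2 + 1) : VV)
        else ((c.1 - 1, c.2) : VV)) ∉ nodeF C := by
      rcases hε with h | h
      · rw [if_pos h]
        refine hcorner_h _ ?_ ?_
        · rw [Int.odd_iff] at hcodd
          rw [Int.even_iff]
          simp only []
          omega
        · intro hzz
          rw [Prod.mk.injEq] at hzz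
          have hceq : c = ((p, q - 1) : VV) := Prod.ext (by omega) (by omega)
          rw [hceq] at hc1
          have := hdisjPQ _ hc1
          rw [hPS] at this
          omega
      · rw [if_neg (by omega)]
        refine hcorner_h _ ?_ ?_
        · rw [Int.odd_iff] at hcodd
          rw [Int.even_iff]
          simp only []
          omega
        · intro hzz
          rw [Prod.mk.injEq] at hzz
          have hweq : w = ((p, q + 1) : VV) := Prod.ext (by omega) (by omega)
          rw [hweq] at hw1
          have := hdisjPQ _ hw1
          rw [hPN] at this
          omega
    have hmain := cr_step hsegC hCeven hε hcv hcv' hcorner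
    rw [Prod.mk.eta] at hmain
    have heqw : ((c.1 + (w.1 - c.1), c.2 + 1) : VV) = w := Prod.ext (by ring) (by omega)
    rw [heqw] at hmain
    exact hmain
  have hstepQ : ∀ c w : VV, s(c,w) ∈ Q → cr C c % 2 = cr C w % 2 := by
    intro c w hcw
    obtain ⟨hc1, hw1⟩ := hQinc c w hcw
    obtain ⟨u, v, heq, hx, hy, -, -⟩ := hQedge _ hcw
    have hshape : (c.1 - w.1)^2 = 1 ∧ (c.2 - w.2)^2 = 1 := by
      rw [Sym2.eq_iff] at heq
      rcases heq with ⟨h1, h2⟩ | ⟨h1, h2⟩ <;> subst h1 <;> subst h2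
      · exact ⟨hx, hy⟩
      · constructor <;> nlinarith [hx, hy]
    obtain ⟨hx', hy'⟩ := hshape
    rcases sq_one _ hy' with h | h
    · -- c.2 = w.2 + 1 : downward step
      exact (hstepUp w c hw1 hc1 (by nlinarith) (by omega)).symm
    · exact hstepUp c w hc1 hw1 hx' (by omega)
  -- walk along Q
  have hwalk : ∀ v : VV, reach Q ((p-1, q) : VV) v → cr C (p-1, q) % 2 = cr C v % 2 := by
    intro v hv
    induction hv with
    | refl => rfl
    | tail hr hstep ih =>
      rename_i c w
      exact ih.trans (hstepQ c w hstep.2)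
  have hWEcr := hwalk _ hWE
  -- base computation
  have hWne : ((p-1, q) : VV) ≠ ((p+1, q) : VV) := by
    rw [ne_eq, Prod.mk.injEq]; omega
  have hWinc : 1 ≤ degf Q ((p-1, q) : VV) := by
    rcases hWE.cases_head with h | ⟨c, hc, -⟩
    · exact absurd h hWne
    · exact (hQinc _ _ hc.2).1
  have hEinc : 1 ≤ degf Q ((p+1, q) : VV) := by
    rcases (reach_symm hWE).cases_head with h | ⟨c, hc, -⟩
    · exact absurd h.symm hWne
    · exact (hQinc _ _ hc.2).1
  have hWnot := hQnotnode _ hWinc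
  have hEnot := hQnotnode _ hEinc
  have hcrW : cr C (p-1, q) = (UpSet C q (p-1)).card := cr_eq_upSet hsegC hWnot
  have hcrE : cr C (p+1, q) = (UpSet C q (p+1)).card := cr_eq_upSet hsegC hEnot
  have hv1C : v1 ∈ C := by rw [hC]; exact Finset.mem_union_right _ (Finset.mem_insert_self _ _)
  have hkey : UpSet C q (p+1) = insert v1 (UpSet C q (p-1)) := by
    ext e
    rw [Finset.mem_insert]
    unfold UpSet
    rw [Finset.mem_filter, Finset.mem_filter]
    constructor
    · rintro ⟨heC, w, hua, hw2, hw1⟩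
      by_cases hlt : w.1 < p - 1
      · exact Or.inr ⟨heC, w, hua, hw2, hlt⟩
      · have hcases : w.1 = p - 1 ∨ w.1 = p := by omega
        rcases hcases with hcw | hcw
        · exfalso
          obtain ⟨lo, heq, hy⟩ := hua
          have hwnode : w ∈ nodeF C :=
            Finset.mem_biUnion.mpr ⟨e, heC, mem_evs.mpr (heq ▸ Sym2.mem_mk_right lo w)⟩
          have hweq : w = ((p-1, q) : VV) := Prod.ext hcw hw2
          rw [hweq] at hwnode
          exact hWnot hwnode
        · left
          have hweq : w = ((p, q) : VV) := Prod.ext hcw hw2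
          subst hweq
          obtain ⟨lo, heq, hy⟩ := hua
          rw [hC, Finset.mem_union, Finset.mem_insert, Finset.mem_singleton] at heC
          rcases heC with he | rfl | rfl
          · exfalso
            have hdg : 1 ≤ degf P ((p,q) : VV) := Finset.card_pos.mpr
              ⟨e, Finset.mem_filter.mpr ⟨he, heq ▸ Sym2.mem_mk_right lo _⟩⟩
            have := hPodd _ hdg
            rw [Int.odd_iff] at this; rw [Int.even_iff] at hpq
            omega
          · rfl
          · exfalso
            have h2 := (decomp_unique (hv2 ▸ heq : v2 = s(lo, ((p,q):VV)))
              hv2 hy (show ((p,q+1):VV).2 = ((p,q):VV).2 + 1 by omega)).2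
            rw [Prod.mk.injEq] at h2
            omega
    · rintro (rfl | ⟨heC, w, hua, hw2, hw1⟩)
      · refine ⟨hv1C, ((p,q) : VV), ⟨((p, q-1) : VV), hv1, show (q:ℤ) = q - 1 + 1 by omega⟩,
          rfl, by omega⟩
      · exact ⟨heC, w, hua, hw2, by omega⟩
  have hv1notin : v1 ∉ UpSet C q (p-1) := by
    intro h
    obtain ⟨-, w, hua, hw2, hw1⟩ := Finset.mem_filter.mp h
    obtain ⟨lo, heq, hy⟩ := hua
    have h2 := (decomp_unique hv1 heq (show ((p,q):VV).2 = ((p,q-1):VV).2 + 1 by omega) hy).2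
    rw [← h2] at hw1
    have : ((p,q):VV).1 = p := rfl
    omega
  have hcard : (UpSet C q (p+1)).card = (UpSet C q (p-1)).card + 1 := by
    rw [hkey, Finset.card_insert_of_notMem hv1notin]
  rw [hcrW, hcrE, hcard] at hWEcr
  omega

end Crossing
end AzAux

/-- The graph obtained from `G` by deleting the vertices in `T`
(together with all incident edges). -/
def delVerts {V : Type} (G : SimpleGraph V) (T : Set V) : SimpleGraph V where
  Adj u v := G.Adj u v ∧ u ∉ T ∧ v ∉ T
  symm := by
    constructor
    rintro u v ⟨h, hu, hv⟩
    exact ⟨h.symm, hv, hu⟩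
  loopless := by
    constructor
    rintro u ⟨h, -, -⟩
    exact G.irrefl h

/-- `M(A_n − T)`: the weighted sum of perfect matchings of the induced subgraph of
the Aztec diamond graph of order `n` obtained by deleting the vertices of `T`. -/
noncomputable def aztecDel (n : ℕ) (ω : Sym2 (ℤ × ℤ) → ℝ) (T : Set (ℤ × ℤ)) : ℝ :=
  mSum (delVerts (aztec n) T) (aztecSet n \ T) ω



namespace AzAux

section Swap
variable {V : Type} [DecidableEq V]

/-- symmetric difference of two edge finsets -/
def sdm (M1 M2 : Finset (Sym2 V)) : Finset (Sym2 V) := (M1 \ M2) ∪ (M2 \ M1)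

lemma mem_sdm {M1 M2 : Finset (Sym2 V)} {e : Sym2 V} :
    e ∈ sdm M1 M2 ↔ ((e ∈ M1 ∧ e ∉ M2) ∨ (e ∈ M2 ∧ e ∉ M1)) := by
  simp only [sdm, Finset.mem_union, Finset.mem_sdiff]

lemma sdm_comm (M1 M2 : Finset (Sym2 V)) : sdm M1 M2 = sdm M2 M1 := by
  ext e; rw [mem_sdm, mem_sdm]; tauto

/-- swapping `M1` towards `M2` along the edge set `P` -/
def swp (M1 M2 P : Finset (Sym2 V)) : Finset (Sym2 V) := (M1 \ P) ∪ (M2 ∩ P)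

lemma mem_swp {M1 M2 P : Finset (Sym2 V)} {e : Sym2 V} :
    e ∈ swp M1 M2 P ↔ (e ∈ M1 ∧ e ∉ P) ∨ (e ∈ M2 ∧ e ∈ P) := by
  simp only [swp, Finset.mem_union, Finset.mem_sdiff, Finset.mem_inter]

lemma sym2_eq_of_mem {e : Sym2 V} {u v : V} (hu : u ∈ e) (hv : v ∈ e) (huv : u ≠ v) :
    e = s(u,v) := by
  induction e using Sym2.ind with
  | _ a b =>
    rw [Sym2.mem_iff] at hu hv
    rw [Sym2.eq_iff]
    rcases hu with rfl | rfl <;> rcases hv with rfl | rfl <;> tauto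

lemma delVerts_mem_edgeSet {G : SimpleGraph V} {T : Set V} {e : Sym2 V} :
    e ∈ (delVerts G T).edgeSet ↔ e ∈ G.edgeSet ∧ ∀ v ∈ e, v ∉ T := by
  induction e using Sym2.ind with
  | _ a b =>
    rw [SimpleGraph.mem_edgeSet, SimpleGraph.mem_edgeSet]
    constructor
    · rintro ⟨h, ha, hb⟩
      refine ⟨h, ?_⟩
      intro v hv
      rw [Sym2.mem_iff] at hv
      rcases hv with rfl | rfl <;> assumption
    · rintro ⟨h, hT⟩
      exact ⟨h, hT a (Sym2.mem_mk_left a b), hT b (Sym2.mem_mk_right a b)⟩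

variable {G : SimpleGraph V} {V0 T : Set V} {M : Finset (Sym2 V)}

lemma isPM_deg_one (h : IsPM (delVerts G T) (V0 \ T) M) {v : V} (hv : v ∈ V0 \ T) :
    degf M v = 1 := by
  obtain ⟨e, ⟨heM, hve⟩, huniq⟩ := h.2 v hv
  rw [degf, Finset.card_eq_one]
  refine ⟨e, ?_⟩
  ext f
  rw [Finset.mem_filter, Finset.mem_singleton]
  constructor
  · rintro ⟨h1, h2⟩; exact huniq f ⟨h1, h2⟩
  · rintro rfl; exact ⟨heM, hve⟩

lemma isPM_deg_zero_T (h : IsPM (delVerts G T) (V0 \ T) M) {v : V} (hv : v ∈ T) :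
    degf M v = 0 := by
  rw [degf, Finset.card_eq_zero, Finset.filter_eq_empty_iff]
  intro e he hve
  exact (delVerts_mem_edgeSet.mp (h.1 e he)).2 v hve hv

lemma isPM_deg_zero_out (hGV0 : ∀ e ∈ G.edgeSet, ∀ v ∈ e, v ∈ V0)
    (h : IsPM (delVerts G T) (V0 \ T) M) {v : V} (hv : v ∉ V0) : degf M v = 0 := by
  rw [degf, Finset.card_eq_zero, Finset.filter_eq_empty_iff]
  intro e he hve
  exact hv (hGV0 e (delVerts_mem_edgeSet.mp (h.1 e he)).1 v hve)

lemma filter_sdm (M1 M2 : Finset (Sym2 V)) (v : V) :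
    (sdm M1 M2).filter (fun e => v ∈ e)
      = (M1.filter (fun e => v ∈ e) \ M2.filter (fun e => v ∈ e))
        ∪ (M2.filter (fun e => v ∈ e) \ M1.filter (fun e => v ∈ e)) := by
  ext e
  simp only [Finset.mem_union, Finset.mem_sdiff, Finset.mem_filter, mem_sdm]
  tauto

lemma degf_sdm_le (M1 M2 : Finset (Sym2 V)) (v : V) :
    degf (sdm M1 M2) v ≤ degf M1 v + degf M2 v := by
  rw [degf, filter_sdm]
  calc ((M1.filter (fun e => v ∈ e) \ M2.filter (fun e => v ∈ e))
        ∪ (M2.filter (fun e => v ∈ e) \ M1.filter (fun e => v ∈ e))).card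
      ≤ (M1.filter (fun e => v ∈ e) \ M2.filter (fun e => v ∈ e)).card
        + (M2.filter (fun e => v ∈ e) \ M1.filter (fun e => v ∈ e)).card :=
        Finset.card_union_le _ _
    _ ≤ degf M1 v + degf M2 v := by
        refine Nat.add_le_add ?_ ?_ <;>
          exact Finset.card_le_card (Finset.sdiff_subset.trans (le_refl _))
  
lemma degf_sdm_left_zero {M1 M2 : Finset (Sym2 V)} {v : V} (h : degf M1 v = 0) :
    degf (sdm M1 M2) v = degf M2 v := by
  rw [degf, filter_sdm]
  rw [degf, Finset.card_eq_zero] at h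
  rw [h]
  simp [degf]

lemma degf_sdm_both_one {M1 M2 : Finset (Sym2 V)} {v : V}
    (h1 : degf M1 v = 1) (h2 : degf M2 v = 1) :
    degf (sdm M1 M2) v = 0 ∨ degf (sdm M1 M2) v = 2 := by
  rw [degf, filter_sdm]
  obtain ⟨e1, he1⟩ := Finset.card_eq_one.mp h1
  obtain ⟨e2, he2⟩ := Finset.card_eq_one.mp h2
  rw [he1, he2]
  by_cases h : e1 = e2
  · subst h
    simp
  · right
    rw [Finset.sdiff_eq_self_of_disjoint (by simpa using h),
      Finset.sdiff_eq_self_of_disjoint (by simpa using (Ne.symm h))]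
    rw [Finset.card_union_of_disjoint (by simpa using h)]
    simp

end Swap
end AzAux

namespace AzAux
section Swap2
variable {V : Type} [DecidableEq V]
variable {G : SimpleGraph V} {V0 T1 T2 : Set V} {M1 M2 : Finset (Sym2 V)} {N : V}

lemma exu_filter {A B : Finset (Sym2 V)} {v : V}
    (hfil : A.filter (fun e => v ∈ e) = B.filter (fun e => v ∈ e))
    (h : ∃! e, e ∈ B ∧ v ∈ e) : ∃! e, e ∈ A ∧ v ∈ e := by
  obtain ⟨e, ⟨heB, hve⟩, huniq⟩ := h
  have heA : e ∈ A.filter (fun e => v ∈ e) := by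
    rw [hfil]; exact Finset.mem_filter.mpr ⟨heB, hve⟩
  refine ⟨e, ⟨(Finset.mem_filter.mp heA).1, hve⟩, ?_⟩
  rintro f ⟨hfA, hvf⟩
  have hfB : f ∈ B.filter (fun e => v ∈ e) := by
    rw [← hfil]; exact Finset.mem_filter.mpr ⟨hfA, hvf⟩
  exact huniq f ⟨(Finset.mem_filter.mp hfB).1, (Finset.mem_filter.mp hfB).2⟩

lemma swap_filter_reach {v : V} (hrv : reach (sdm M1 M2) N v) :
    (swp M1 M2 (comp (sdm M1 M2) N)).filter (fun e => v ∈ e)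
      = M2.filter (fun e => v ∈ e) := by
  ext e
  simp only [Finset.mem_filter, mem_swp]
  constructor
  · rintro ⟨(⟨hM1, hnP⟩ | ⟨hM2, hP⟩), hve⟩
    · refine ⟨?_, hve⟩
      by_contra hM2n
      exact hnP (Finset.mem_filter.mpr ⟨mem_sdm.mpr (Or.inl ⟨hM1, hM2n⟩), v, hve, hrv⟩)
    · exact ⟨hM2, hve⟩
  · rintro ⟨hM2, hve⟩
    by_cases hM1 : e ∈ M1
    · refine ⟨Or.inl ⟨hM1, ?_⟩, hve⟩
      intro hP
      have heD := (Finset.mem_filter.mp hP).1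
      rw [mem_sdm] at heD
      tauto
    · exact ⟨Or.inr ⟨hM2,
        Finset.mem_filter.mpr ⟨mem_sdm.mpr (Or.inr ⟨hM2, hM1⟩), v, hve, hrv⟩⟩, hve⟩

lemma swap_filter_not_reach {v : V} (hDdiag : ∀ e ∈ sdm M1 M2, ¬ e.IsDiag)
    (hnr : ¬ reach (sdm M1 M2) N v) :
    (swp M1 M2 (comp (sdm M1 M2) N)).filter (fun e => v ∈ e)
      = M1.filter (fun e => v ∈ e) := by
  have hPnot : ∀ e ∈ comp (sdm M1 M2) N, v ∉ e := by
    intro e heP hve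
    obtain ⟨heD, u, hue, hru⟩ := Finset.mem_filter.mp heP
    by_cases huv : u = v
    · exact hnr (huv ▸ hru)
    · refine hnr (hru.tail ⟨huv, ?_⟩)
      rw [← sym2_eq_of_mem hue hve huv]
      exact heD
  ext e
  simp only [Finset.mem_filter, mem_swp]
  constructor
  · rintro ⟨(⟨hM1, -⟩ | ⟨-, hP⟩), hve⟩
    · exact ⟨hM1, hve⟩
    · exact absurd hve (hPnot e hP)
  · rintro ⟨hM1, hve⟩
    refine ⟨Or.inl ⟨hM1, fun hP => hPnot e hP hve⟩, hve⟩

lemma swap_isPM (hGV0 : ∀ e ∈ G.edgeSet, ∀ v ∈ e, v ∈ V0)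
    (hDdiag : ∀ e ∈ sdm M1 M2, ¬ e.IsDiag)
    (hG1 : IsPM (delVerts G T1) (V0 \ T1) M1) (hG2 : IsPM (delVerts G T2) (V0 \ T2) M2) :
    IsPM (delVerts G ((T1 \ {v | reach (sdm M1 M2) N v}) ∪ (T2 ∩ {v | reach (sdm M1 M2) N v})))
      (V0 \ ((T1 \ {v | reach (sdm M1 M2) N v}) ∪ (T2 ∩ {v | reach (sdm M1 M2) N v})))
      (swp M1 M2 (comp (sdm M1 M2) N)) := by
  constructor
  · intro e he
    have heG : e ∈ G.edgeSet := by
      rcases mem_swp.mp he with ⟨h, -⟩ | ⟨h, -⟩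
      · exact (delVerts_mem_edgeSet.mp (hG1.1 e h)).1
      · exact (delVerts_mem_edgeSet.mp (hG2.1 e h)).1
    refine delVerts_mem_edgeSet.mpr ⟨heG, ?_⟩
    intro v hve hvT
    rcases hvT with ⟨hvT1, hvnr⟩ | ⟨hvT2, hvr⟩
    · have hfil := swap_filter_not_reach (N := N) hDdiag hvnr
      have hmem : e ∈ M1.filter (fun e => v ∈ e) := by
        rw [← hfil]; exact Finset.mem_filter.mpr ⟨he, hve⟩
      have := isPM_deg_zero_T hG1 hvT1
      rw [degf, Finset.card_eq_zero] at this
      rw [this] at hmem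
      exact absurd hmem (Finset.notMem_empty e)
    · have hfil := swap_filter_reach (M1 := M1) (M2 := M2) (N := N) hvr
      have hmem : e ∈ M2.filter (fun e => v ∈ e) := by
        rw [← hfil]; exact Finset.mem_filter.mpr ⟨he, hve⟩
      have := isPM_deg_zero_T hG2 hvT2
      rw [degf, Finset.card_eq_zero] at this
      rw [this] at hmem
      exact absurd hmem (Finset.notMem_empty e)
  · intro v hv
    by_cases hr : reach (sdm M1 M2) N v
    · have hvT2 : v ∉ T2 := fun h => hv.2 (Or.inr ⟨h, hr⟩)
      exact exu_filter (swap_filter_reach hr) (hG2.2 v ⟨hv.1, hvT2⟩)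
    · have hvT1 : v ∉ T1 := fun h => hv.2 (Or.inl ⟨h, hr⟩)
      exact exu_filter (swap_filter_not_reach hDdiag hr) (hG1.2 v ⟨hv.1, hvT1⟩)

lemma sdm_swp (P : Finset (Sym2 V)) (hsub : P ⊆ sdm M1 M2) :
    sdm (swp M1 M2 P) (swp M2 M1 P) = sdm M1 M2 := by
  ext e
  have hPD : e ∈ P → ((e ∈ M1 ∧ e ∉ M2) ∨ (e ∈ M2 ∧ e ∉ M1)) :=
    fun he => mem_sdm.mp (hsub he)
  simp only [mem_sdm, mem_swp]
  tauto

lemma swp_swp (P : Finset (Sym2 V)) :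
    swp (swp M1 M2 P) (swp M2 M1 P) P = M1 := by
  ext e
  simp only [mem_swp]
  tauto

lemma prod_swp (P : Finset (Sym2 V)) (ω : Sym2 V → ℝ) :
    (∏ e ∈ swp M1 M2 P, ω e) * ∏ e ∈ swp M2 M1 P, ω e
      = (∏ e ∈ M1, ω e) * ∏ e ∈ M2, ω e := by
  have hd1 : Disjoint (M1 \ P) (M2 ∩ P) := by
    rw [Finset.disjoint_left]
    intro e he1 he2
    exact (Finset.mem_sdiff.mp he1).2 (Finset.mem_inter.mp he2).2
  have hd2 : Disjoint (M2 \ P) (M1 ∩ P) := by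
    rw [Finset.disjoint_left]
    intro e he1 he2
    exact (Finset.mem_sdiff.mp he1).2 (Finset.mem_inter.mp he2).2
  have hd3 : Disjoint (M1 \ P) (M1 ∩ P) := by
    rw [Finset.disjoint_left]
    intro e he1 he2
    exact (Finset.mem_sdiff.mp he1).2 (Finset.mem_inter.mp he2).2
  have hd4 : Disjoint (M2 \ P) (M2 ∩ P) := by
    rw [Finset.disjoint_left]
    intro e he1 he2
    exact (Finset.mem_sdiff.mp he1).2 (Finset.mem_inter.mp he2).2
  rw [swp, swp, Finset.prod_union hd1, Finset.prod_union hd2]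
  have e1 : (∏ e ∈ M1, ω e) = (∏ e ∈ M1 \ P, ω e) * ∏ e ∈ M1 ∩ P, ω e := by
    rw [← Finset.prod_union hd3, Finset.sdiff_union_inter]
  have e2 : (∏ e ∈ M2, ω e) = (∏ e ∈ M2 \ P, ω e) * ∏ e ∈ M2 ∩ P, ω e := by
    rw [← Finset.prod_union hd4, Finset.sdiff_union_inter]
  rw [e1, e2]
  ring

end Swap2
end AzAux

namespace AzAux
section Helpers
variable {V : Type} [DecidableEq V]

lemma degf_mono {A B : Finset (Sym2 V)} (h : A ⊆ B) (v : V) : degf A v ≤ degf B v :=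
  Finset.card_le_card (Finset.filter_subset_filter _ h)

lemma isPM_deg_le_one {G : SimpleGraph V} {V0 T : Set V} {M : Finset (Sym2 V)}
    (hGV0 : ∀ e ∈ G.edgeSet, ∀ v ∈ e, v ∈ V0)
    (h : IsPM (delVerts G T) (V0 \ T) M) (v : V) : degf M v ≤ 1 := by
  by_cases hv : v ∈ V0
  · by_cases hT : v ∈ T
    · rw [isPM_deg_zero_T h hT]; omega
    · rw [isPM_deg_one h ⟨hv, hT⟩]
  · rw [isPM_deg_zero_out hGV0 h hv]; omega

lemma degf_sdiff_right_zero {M1 M2 : Finset (Sym2 V)} {v : V} (h : degf M1 v = 0) :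
    degf (M2 \ M1) v = degf M2 v := by
  unfold degf at h ⊢
  rw [Finset.card_eq_zero] at h
  congr 1
  ext e
  simp only [Finset.mem_filter, Finset.mem_sdiff]
  constructor
  · rintro ⟨⟨h1, -⟩, h2⟩; exact ⟨h1, h2⟩
  · rintro ⟨h1, h2⟩
    refine ⟨⟨h1, fun hM1 => ?_⟩, h2⟩
    have : e ∈ M1.filter (fun e => v ∈ e) := Finset.mem_filter.mpr ⟨hM1, h2⟩
    rw [h] at this
    exact absurd this (Finset.notMem_empty e)

lemma sq_eq_one_int {a : ℤ} (ha : a^2 = 1) : a = 1 ∨ a = -1 := by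
  have h3 : a ≤ 1 := by nlinarith
  have h4 : -1 ≤ a := by nlinarith
  have h5 : a ≠ 0 := by intro h; rw [h] at ha; norm_num at ha
  omega

lemma int_odd_cast {k : ℤ} (h : Odd k) : ((k : ℤ) : ZMod 2) = 1 := by
  obtain ⟨m, rfl⟩ := h
  push_cast
  rw [show ((2:ZMod 2)) = 0 from by decide]
  ring

end Helpers
end AzAux

namespace AzAux
section Master

/-- Master analysis of the superposition of two matchings around a cell. -/
lemma master {G : SimpleGraph (ℤ×ℤ)} {V0 : Set (ℤ×ℤ)} (p q : ℤ)
    (hGV0 : ∀ e ∈ G.edgeSet, ∀ v ∈ e, v ∈ V0)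
    (hGdiag : ∀ e ∈ G.edgeSet, ¬ e.IsDiag)
    (hshape : ∀ e ∈ G.edgeSet, ∃ u v : ℤ×ℤ, e = s(u,v) ∧ (u.1-v.1)^2 = 1 ∧ (u.2-v.2)^2 = 1
      ∧ Odd (u.1+u.2) ∧ Odd (v.1+v.2))
    (hNV0 : ((p,q+1) : ℤ×ℤ) ∈ V0) (hWV0 : ((p-1,q) : ℤ×ℤ) ∈ V0)
    (hEV0 : ((p+1,q) : ℤ×ℤ) ∈ V0) (hSV0 : ((p,q-1) : ℤ×ℤ) ∈ V0)
    {T1 T2 : Set (ℤ×ℤ)}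
    (hsub1 : ∀ v ∈ T1, v = ((p,q+1):ℤ×ℤ) ∨ v = (p-1,q) ∨ v = (p+1,q) ∨ v = (p,q-1))
    (hsub2 : ∀ v ∈ T2, v = ((p,q+1):ℤ×ℤ) ∨ v = (p-1,q) ∨ v = (p+1,q) ∨ v = (p,q-1))
    (hun : ∀ v : ℤ×ℤ, (v = ((p,q+1):ℤ×ℤ) ∨ v = (p-1,q) ∨ v = (p+1,q) ∨ v = (p,q-1)) →
      v ∈ T1 ∨ v ∈ T2)
    (hdisjT : ∀ v : ℤ×ℤ, v ∈ T1 → v ∈ T2 → False)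
    {M1 M2 : Finset (Sym2 (ℤ×ℤ))}
    (h1 : IsPM (delVerts G T1) (V0 \ T1) M1)
    (h2 : IsPM (delVerts G T2) (V0 \ T2) M2) :
    ∃ x : ℤ×ℤ, (x = ((p-1,q) : ℤ×ℤ) ∨ x = ((p+1,q) : ℤ×ℤ)) ∧
      (∀ v : ℤ×ℤ, (v = ((p,q+1):ℤ×ℤ) ∨ v = (p-1,q) ∨ v = (p+1,q) ∨ v = (p,q-1)) →
        (reach (sdm M1 M2) ((p,q+1) : ℤ×ℤ) v ↔ (v = ((p,q+1):ℤ×ℤ) ∨ v = x))) ∧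
      (((p : ℤ) : ZMod 2) + ((x.1 : ℤ) : ZMod 2)
        + (if ((p,q+1):ℤ×ℤ) ∈ T1 then (1 : ZMod 2) else 0)
        + (if x ∈ T1 then (1 : ZMod 2) else 0) = 1) := by
  set Nv : ℤ×ℤ := (p, q+1) with hNv
  set Wv : ℤ×ℤ := (p-1, q) with hWv
  set Ev : ℤ×ℤ := (p+1, q) with hEv
  set Sv : ℤ×ℤ := (p, q-1) with hSv
  have hdWN : Wv ≠ Nv := by rw [hWv, hNv, ne_eq, Prod.mk.injEq]; omega
  have hdEN : Ev ≠ Nv := by rw [hEv, hNv, ne_eq, Prod.mk.injEq]; omega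
  have hdSN : Sv ≠ Nv := by rw [hSv, hNv, ne_eq, Prod.mk.injEq]; omega
  have hdWE : Wv ≠ Ev := by rw [hWv, hEv, ne_eq, Prod.mk.injEq]; omega
  have hdWS : Wv ≠ Sv := by rw [hWv, hSv, ne_eq, Prod.mk.injEq]; omega
  have hdES : Ev ≠ Sv := by rw [hEv, hSv, ne_eq, Prod.mk.injEq]; omega
  set D : Finset (Sym2 (ℤ×ℤ)) := sdm M1 M2 with hD
  have hVmem : ∀ v : ℤ×ℤ, (v = Nv ∨ v = Wv ∨ v = Ev ∨ v = Sv) → v ∈ V0 := by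
    rintro v (rfl | rfl | rfl | rfl) <;> assumption
  have hDG : ∀ e ∈ D, e ∈ G.edgeSet := by
    intro e he
    rcases mem_sdm.mp he with ⟨h, -⟩ | ⟨h, -⟩
    · exact (delVerts_mem_edgeSet.mp (h1.1 e h)).1
    · exact (delVerts_mem_edgeSet.mp (h2.1 e h)).1
  have hDdiag : ∀ e ∈ D, ¬ e.IsDiag := fun e he => hGdiag e (hDG e he)
  have hd1 : ∀ v, degf M1 v ≤ 1 := isPM_deg_le_one hGV0 h1
  have hd2 : ∀ v, degf M2 v ≤ 1 := isPM_deg_le_one hGV0 h2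
  -- degrees at the special vertices
  have hspec1 : ∀ v : ℤ×ℤ, (v = Nv ∨ v = Wv ∨ v = Ev ∨ v = Sv) → degf D v = 1 := by
    intro v hv
    rcases hun v hv with hvT1 | hvT2
    · have hz : degf M1 v = 0 := isPM_deg_zero_T h1 hvT1
      have ho : degf M2 v = 1 :=
        isPM_deg_one h2 ⟨hVmem v hv, fun h => hdisjT v hvT1 h⟩
      rw [hD, degf_sdm_left_zero hz, ho]
    · have hz : degf M2 v = 0 := isPM_deg_zero_T h2 hvT2
      have ho : degf M1 v = 1 :=
        isPM_deg_one h1 ⟨hVmem v hv, fun h => hdisjT v h hvT2⟩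
      rw [hD, sdm_comm, degf_sdm_left_zero hz, ho]
  have hμ : ∀ v : ℤ×ℤ, (v = Nv ∨ v = Wv ∨ v = Ev ∨ v = Sv) →
      degf (M2 \ M1) v = (if v ∈ T1 then 1 else 0) := by
    intro v hv
    rcases hun v hv with hvT1 | hvT2
    · rw [if_pos hvT1]
      have hz : degf M1 v = 0 := isPM_deg_zero_T h1 hvT1
      rw [degf_sdiff_right_zero hz]
      exact isPM_deg_one h2 ⟨hVmem v hv, fun h => hdisjT v hvT1 h⟩
    · rw [if_neg (fun h => hdisjT v h hvT2)]
      have hz : degf M2 v = 0 := isPM_deg_zero_T h2 hvT2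
      have := degf_mono (Finset.sdiff_subset : M2 \ M1 ⊆ M2) v
      omega
  have hdeg2 : ∀ v, degf D v ≤ 2 := by
    intro v
    have hle := degf_sdm_le M1 M2 v
    rw [← hD] at hle
    have := hd1 v
    have := hd2 v
    omega
  have hoddsp : ∀ v : ℤ×ℤ, Odd (degf D v) → (v = Nv ∨ v = Wv ∨ v = Ev ∨ v = Sv) := by
    intro v hodd
    by_contra hns
    by_cases hv : v ∈ V0
    · have hnT1 : v ∉ T1 := fun h => hns (hsub1 v h)
      have hnT2 : v ∉ T2 := fun h => hns (hsub2 v h)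
      have d1 : degf M1 v = 1 := isPM_deg_one h1 ⟨hv, hnT1⟩
      have d2 : degf M2 v = 1 := isPM_deg_one h2 ⟨hv, hnT2⟩
      rcases degf_sdm_both_one d1 d2 with h | h <;> rw [hD] at hodd <;> rw [h] at hodd
      · exact (by decide : ¬ Odd 0) hodd
      · exact (by decide : ¬ Odd 2) hodd
    · have d1 : degf M1 v = 0 := isPM_deg_zero_out hGV0 h1 hv
      have d2 : degf M2 v = 0 := isPM_deg_zero_out hGV0 h2 hv
      have := degf_sdm_le M1 M2 v
      have h0 : degf D v = 0 := by rw [hD]; omega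
      rw [h0] at hodd
      exact (by decide : ¬ Odd 0) hodd
  -- the other odd vertex of the component of N
  obtain ⟨x, hxa, hxV, hxodd, hfil⟩ :=
    comp_odd_pair hDdiag hdeg2 (hspec1 Nv (Or.inl rfl))
  have hxsp := hoddsp x hxodd
  have hreach_iff : ∀ v : ℤ×ℤ, (v = Nv ∨ v = Wv ∨ v = Ev ∨ v = Sv) →
      (reach D Nv v ↔ (v = Nv ∨ v = x)) := by
    intro v hv
    constructor
    · intro hr
      have hvV : v ∈ compV D Nv :=
        mem_compV_iff_of_reach hDdiag hr (by rw [hspec1 v hv])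
      have hvfil : v ∈ (compV D Nv).filter (fun u => Odd (degf D u)) :=
        Finset.mem_filter.mpr ⟨hvV, by rw [hspec1 v hv]; exact odd_one⟩
      rw [hfil] at hvfil
      simpa using hvfil
    · rintro (rfl | rfl)
      · exact Relation.ReflTransGen.refl
      · exact reach_of_mem_compV hDdiag hxV
  -- crossing exclusion : x ≠ Sv
  have hxS : x ≠ Sv := by
    intro hxSv
    have hWnV : Wv ∉ compV D Nv := by
      intro h
      have hvfil : Wv ∈ (compV D Nv).filter (fun u => Odd (degf D u)) :=
        Finset.mem_filter.mpr ⟨h, by rw [hspec1 Wv (Or.inr (Or.inl rfl))]; exact odd_one⟩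
      rw [hfil] at hvfil
      simp only [Finset.mem_insert, Finset.mem_singleton] at hvfil
      rcases hvfil with h' | h'
      · exact hdWN h'
      · rw [hxSv] at h'; exact hdWS h'
    obtain ⟨y, hya, hyV, hyodd, hfily⟩ :=
      comp_odd_pair hDdiag hdeg2 (hspec1 Wv (Or.inr (Or.inl rfl)))
    have hWinNcomp : ∀ u : ℤ×ℤ, reach D Wv u → reach D Nv u → False := by
      intro u h1' h2'
      exact hWnV (mem_compV_iff_of_reach hDdiag (h2'.trans (reach_symm h1'))
        (by rw [hspec1 Wv (Or.inr (Or.inl rfl))]))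
    have hysp := hoddsp y hyodd
    have hyE : y = Ev := by
      rcases hysp with rfl | rfl | rfl | rfl
      · exact absurd (reach_of_mem_compV hDdiag hyV)
          (fun h => hWinNcomp Nv h Relation.ReflTransGen.refl)
      · exact absurd rfl hya
      · rfl
      · exfalso
        refine hWinNcomp Sv (reach_of_mem_compV hDdiag hyV) ?_
        rw [← hxSv]
        exact reach_of_mem_compV hDdiag hxV
    subst hyE
    -- set up the two paths and derive a contradiction
    refine no_crossing p q (comp D Nv) (comp D Wv) ?_ ?_ ?_ ?_ ?_ ?_ ?_
    · intro e he
      exact hshape e (hDG e (Finset.mem_filter.mp he).1)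
    · intro e he
      exact hshape e (hDG e (Finset.mem_filter.mp he).1)
    · rw [degf_comp_of_reach hDdiag Relation.ReflTransGen.refl]
      exact hspec1 Nv (Or.inl rfl)
    · rw [degf_comp_eq_degf hDdiag (show Sv ∈ compV D Nv by rw [← hxSv]; exact hxV)]
      exact hspec1 Sv (Or.inr (Or.inr (Or.inr rfl)))
    · intro v hvN hvS
      by_cases hvV : v ∈ compV D Nv
      · rw [degf_comp_eq_degf hDdiag hvV]
        rcases Nat.even_or_odd (degf D v) with h | h
        · exact h
        · exfalso
          have hvfil : v ∈ (compV D Nv).filter (fun u => Odd (degf D u)) :=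
            Finset.mem_filter.mpr ⟨hvV, h⟩
          rw [hfil] at hvfil
          simp only [Finset.mem_insert, Finset.mem_singleton] at hvfil
          rcases hvfil with h' | h'
          · exact hvN h'
          · rw [hxSv] at h'; exact hvS h'
      · rw [degf_comp_of_not_mem hDdiag hvV]
        exact Even.zero
    · intro v hQv
      by_contra h0
      have hPv : 1 ≤ degf (comp D Nv) v := by omega
      obtain ⟨e, he⟩ := Finset.card_pos.mp hQv
      obtain ⟨heQ, hve⟩ := Finset.mem_filter.mp he
      have hvQ : v ∈ compV D Wv := Finset.mem_biUnion.mpr ⟨e, heQ, mem_evs.mpr hve⟩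
      obtain ⟨f, hf⟩ := Finset.card_pos.mp hPv
      obtain ⟨hfP, hvf⟩ := Finset.mem_filter.mp hf
      have hvP : v ∈ compV D Nv := Finset.mem_biUnion.mpr ⟨f, hfP, mem_evs.mpr hvf⟩
      exact hWinNcomp v (reach_of_mem_compV hDdiag hvQ) (reach_of_mem_compV hDdiag hvP)
    · have hEcomp : Ev ∈ compV D Wv := by
        have : Ev ∈ (compV D Wv).filter (fun u => Odd (degf D u)) := by
          rw [hfily]
          simp
        exact (Finset.mem_filter.mp this).1
      exact reach_restrict (reach_of_mem_compV hDdiag hEcomp)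
  -- θ-parity
  have hdisjDD : Disjoint (M1 \ M2) (M2 \ M1) := by
    rw [Finset.disjoint_left]
    intro e he1 he2
    exact (Finset.mem_sdiff.mp he2).2 (Finset.mem_sdiff.mp he1).1
  have hcol : ∀ u v : ℤ×ℤ, s(u,v) ∈ D → ((u.1 : ℤ) : ZMod 2) + ((v.1 : ℤ) : ZMod 2) = 1 := by
    intro u v h
    obtain ⟨u', v', heq, hx1, -, -, -⟩ := hshape _ (hDG _ h)
    have hsq : (u.1 - v.1)^2 = 1 := by
      rw [Sym2.eq_iff] at heq
      rcases heq with ⟨h1, h2⟩ | ⟨h1, h2⟩ <;> subst h1 <;> subst h2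
      · exact hx1
      · nlinarith [hx1]
    have hodd : Odd (u.1 + v.1) := by
      rcases sq_eq_one_int hsq with h' | h'
      · exact ⟨v.1, by omega⟩
      · exact ⟨u.1, by omega⟩
    have hcast := int_odd_cast hodd
    push_cast at hcast ⊢
    linear_combination hcast
  have hθ := comp_theta hDdiag (M1 \ M2) (M2 \ M1) rfl hdisjDD
    (fun v => le_trans (degf_mono Finset.sdiff_subset v) (hd1 v))
    (fun v => le_trans (degf_mono Finset.sdiff_subset v) (hd2 v))
    (fun v : ℤ×ℤ => ((v.1 : ℤ) : ZMod 2)) hcol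
    (hspec1 Nv (Or.inl rfl)) hxa hxV hxodd hfil
  rw [hμ Nv (Or.inl rfl), hμ x hxsp] at hθ
  have hxWE : x = Wv ∨ x = Ev := by
    rcases hxsp with h | h | h | h
    · exact absurd h hxa
    · exact Or.inl h
    · exact Or.inr h
    · exact absurd h hxS
  refine ⟨x, hxWE, hreach_iff, ?_⟩
  have c1 : ((↑(if Nv ∈ T1 then 1 else 0) : ℕ) : ZMod 2) = (if Nv ∈ T1 then (1:ZMod 2) else 0) := by
    by_cases h : Nv ∈ T1 <;> simp [h]
  have c2 : ((↑(if x ∈ T1 then 1 else 0) : ℕ) : ZMod 2) = (if x ∈ T1 then (1:ZMod 2) else 0) := by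
    by_cases h : x ∈ T1 <;> simp [h]
  rw [c1, c2] at hθ
  exact hθ

end Master
end AzAux

namespace AzAux
section Fin

lemma aztecSet_finite (n : ℕ) : (aztecSet n).Finite := by
  apply Set.Finite.subset (Set.Finite.prod (Set.finite_Icc (-(n:ℤ)) n) (Set.finite_Icc (-(n:ℤ)) n))
  intro v hv
  obtain ⟨-, h1, h2⟩ := hv
  rw [abs_le] at h1 h2
  exact Set.mem_prod.mpr ⟨Set.mem_Icc.mpr h1, Set.mem_Icc.mpr h2⟩

lemma aztec_edgeSet_finite (n : ℕ) : ((aztec n).edgeSet).Finite := by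
  apply Set.Finite.subset (Set.Finite.image (fun x : (ℤ×ℤ)×(ℤ×ℤ) => s(x.1, x.2))
    ((aztecSet_finite n).prod (aztecSet_finite n)))
  intro e he
  obtain ⟨u, v, rfl⟩ := sym2_exists_eq e
  rw [SimpleGraph.mem_edgeSet] at he
  exact Set.mem_image _ _ _ |>.mpr ⟨(u,v), Set.mem_prod.mpr ⟨he.1, he.2.1⟩, rfl⟩

lemma pm_finite (n : ℕ) (T : Set (ℤ×ℤ)) :
    {M : Finset (Sym2 (ℤ×ℤ)) | IsPM (delVerts (aztec n) T) (aztecSet n \ T) M}.Finite := by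
  apply Set.Finite.subset ((aztec_edgeSet_finite n).toFinset.powerset : Finset _).finite_toSet
  intro M hM
  rw [Finset.mem_coe, Finset.mem_powerset]
  intro e he
  rw [Set.Finite.mem_toFinset]
  exact (delVerts_mem_edgeSet.mp (hM.1 e he)).1

lemma mSum_eq (n : ℕ) (ω : Sym2 (ℤ×ℤ) → ℝ) (T : Set (ℤ×ℤ)) :
    aztecDel n ω T = ∑ M ∈ (pm_finite n T).toFinset, ∏ e ∈ M, ω e := by
  rw [aztecDel, mSum]
  exact finsum_mem_eq_finite_toFinset_sum _ (pm_finite n T)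

lemma delVerts_empty (G : SimpleGraph (ℤ×ℤ)) : delVerts G (∅ : Set (ℤ×ℤ)) = G := by
  ext u v
  simp [delVerts]

lemma mSum_full_eq (n : ℕ) (ω : Sym2 (ℤ×ℤ) → ℝ) :
    mSum (aztec n) (aztecSet n) ω = aztecDel n ω ∅ := by
  rw [aztecDel, delVerts_empty, Set.diff_empty]

end Fin
end AzAux

namespace AzAux
section Gswap

/-- the swap map on pairs of matchings -/
noncomputable def gswap (N : ℤ×ℤ) (MM : Finset (Sym2 (ℤ×ℤ)) × Finset (Sym2 (ℤ×ℤ))) :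
    Finset (Sym2 (ℤ×ℤ)) × Finset (Sym2 (ℤ×ℤ)) :=
  (swp MM.1 MM.2 (comp (sdm MM.1 MM.2) N), swp MM.2 MM.1 (comp (sdm MM.1 MM.2) N))

lemma gswap_invol (N : ℤ×ℤ) (MM : Finset (Sym2 (ℤ×ℤ)) × Finset (Sym2 (ℤ×ℤ))) :
    gswap N (gswap N MM) = MM := by
  obtain ⟨M1, M2⟩ := MM
  have hP : comp (sdm M1 M2) N ⊆ sdm M1 M2 := Finset.filter_subset _ _
  have h1 : sdm (swp M1 M2 (comp (sdm M1 M2) N)) (swp M2 M1 (comp (sdm M1 M2) N))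
      = sdm M1 M2 := sdm_swp _ hP
  unfold gswap
  simp only
  rw [h1, swp_swp, swp_swp]

lemma gswap_prod (ω : Sym2 (ℤ×ℤ) → ℝ) (N : ℤ×ℤ)
    (MM : Finset (Sym2 (ℤ×ℤ)) × Finset (Sym2 (ℤ×ℤ))) :
    (∏ e ∈ (gswap N MM).1, ω e) * (∏ e ∈ (gswap N MM).2, ω e)
      = (∏ e ∈ MM.1, ω e) * ∏ e ∈ MM.2, ω e := by
  obtain ⟨M1, M2⟩ := MM
  exact prod_swp _ ω

end Gswap
end AzAux

open AzAux in
/-- **Condensation identity for a cell of the Aztec diamond**: for a cell with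
center `(p, q)` and vertices `N, W, E, S`,
`M(A_n)·M(A_n − {N,W,E,S}) = M(A_n − {N,W})·M(A_n − {E,S}) + M(A_n − {N,E})·M(A_n − {W,S})`. -/
theorem aztec_condensation (n : ℕ) (ω : Sym2 (ℤ × ℤ) → ℝ)
    (hnonneg : ∀ e ∈ (aztec n).edgeSet, 0 ≤ ω e)
    (p q : ℤ) (hc : IsCellCenter n p q) :
    mSum (aztec n) (aztecSet n) ω *
        aztecDel n ω {(p, q + 1), (p - 1, q), (p + 1, q), (p, q - 1)}
      = aztecDel n ω {(p, q + 1), (p - 1, q)} * aztecDel n ω {(p + 1, q), (p, q - 1)}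
        + aztecDel n ω {(p, q + 1), (p + 1, q)} * aztecDel n ω {(p - 1, q), (p, q - 1)} := by
  classical
  obtain ⟨hp2, hq2, hpb, hqb⟩ := hc
  rw [abs_le] at hpb hqb
  -- basic graph facts
  have hGV0 : ∀ e ∈ (aztec n).edgeSet, ∀ v ∈ e, v ∈ aztecSet n := by
    intro e he v hv
    obtain ⟨u1, u2, rfl⟩ := AzAux.sym2_exists_eq e
    rw [SimpleGraph.mem_edgeSet] at he
    rw [Sym2.mem_iff] at hv
    rcases hv with rfl | rfl
    · exact he.1
    · exact he.2.1
  have hGdiag : ∀ e ∈ (aztec n).edgeSet, ¬ e.IsDiag :=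
    fun e he => SimpleGraph.not_isDiag_of_mem_edgeSet _ he
  have hshape : ∀ e ∈ (aztec n).edgeSet, ∃ u v : ℤ×ℤ, e = s(u,v) ∧ (u.1-v.1)^2 = 1
      ∧ (u.2-v.2)^2 = 1 ∧ Odd (u.1+u.2) ∧ Odd (v.1+v.2) := by
    intro e he
    obtain ⟨u, v, rfl⟩ := AzAux.sym2_exists_eq e
    rw [SimpleGraph.mem_edgeSet] at he
    obtain ⟨hu, hv, hsum⟩ := he
    have hx : (u.1 - v.1)^2 = 1 ∧ (u.2 - v.2)^2 = 1 := by
      have h1 : -1 ≤ u.1 - v.1 ∧ u.1 - v.1 ≤ 1 := by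
        constructor <;> nlinarith [sq_nonneg (u.2 - v.2), sq_nonneg (u.1 - v.1)]
      have h2 : -1 ≤ u.2 - v.2 ∧ u.2 - v.2 ≤ 1 := by
        constructor <;> nlinarith [sq_nonneg (u.2 - v.2), sq_nonneg (u.1 - v.1)]
      have hc1 : u.1 - v.1 = -1 ∨ u.1 - v.1 = 0 ∨ u.1 - v.1 = 1 := by omega
      have hc2 : u.2 - v.2 = -1 ∨ u.2 - v.2 = 0 ∨ u.2 - v.2 = 1 := by omega
      rcases hc1 with h | h | h <;> rcases hc2 with h' | h' | h' <;>
        rw [h, h'] at hsum ⊢ <;> (norm_num at hsum) <;> norm_num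
    exact ⟨u, v, rfl, hx.1, hx.2, hu.1, hv.1⟩
  -- special vertices are in the diamond
  have hNV0 : ((p, q+1) : ℤ×ℤ) ∈ aztecSet n := by
    refine ⟨?_, ?_, ?_⟩
    · rw [Int.odd_iff]; simp only; omega
    · simp only; rw [abs_le]; omega
    · simp only; rw [abs_le]; omega
  have hWV0 : ((p-1, q) : ℤ×ℤ) ∈ aztecSet n := by
    refine ⟨?_, ?_, ?_⟩
    · rw [Int.odd_iff]; simp only; omega
    · simp only; rw [abs_le]; omega
    · simp only; rw [abs_le]; omega
  have hEV0 : ((p+1, q) : ℤ×ℤ) ∈ aztecSet n := by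
    refine ⟨?_, ?_, ?_⟩
    · rw [Int.odd_iff]; simp only; omega
    · simp only; rw [abs_le]; omega
    · simp only; rw [abs_le]; omega
  have hSV0 : ((p, q-1) : ℤ×ℤ) ∈ aztecSet n := by
    refine ⟨?_, ?_, ?_⟩
    · rw [Int.odd_iff]; simp only; omega
    · simp only; rw [abs_le]; omega
    · simp only; rw [abs_le]; omega
  -- distinctness
  have hNW : ((p,q+1):ℤ×ℤ) ≠ (p-1,q) := by rw [ne_eq, Prod.mk.injEq]; omega
  have hNE : ((p,q+1):ℤ×ℤ) ≠ (p+1,q) := by rw [ne_eq, Prod.mk.injEq]; omega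
  have hNS : ((p,q+1):ℤ×ℤ) ≠ (p,q-1) := by rw [ne_eq, Prod.mk.injEq]; omega
  have hWE : ((p-1,q):ℤ×ℤ) ≠ (p+1,q) := by rw [ne_eq, Prod.mk.injEq]; omega
  have hWS : ((p-1,q):ℤ×ℤ) ≠ (p,q-1) := by rw [ne_eq, Prod.mk.injEq]; omega
  have hES : ((p+1,q):ℤ×ℤ) ≠ (p,q-1) := by rw [ne_eq, Prod.mk.injEq]; omega
  -- set membership characterizations
  have hmem4 : ∀ v : ℤ×ℤ, v ∈ ({(p, q+1), (p-1, q), (p+1, q), (p, q-1)} : Set (ℤ×ℤ)) ↔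
      (v = (p,q+1) ∨ v = (p-1,q) ∨ v = (p+1,q) ∨ v = (p,q-1)) := by
    intro v; simp [Set.mem_insert_iff]
  have hmemNW : ∀ v : ℤ×ℤ, v ∈ ({(p, q+1), (p-1, q)} : Set (ℤ×ℤ)) ↔
      (v = (p,q+1) ∨ v = (p-1,q)) := by intro v; simp [Set.mem_insert_iff]
  have hmemES : ∀ v : ℤ×ℤ, v ∈ ({(p+1, q), (p, q-1)} : Set (ℤ×ℤ)) ↔
      (v = (p+1,q) ∨ v = (p,q-1)) := by intro v; simp [Set.mem_insert_iff]
  have hmemNE : ∀ v : ℤ×ℤ, v ∈ ({(p, q+1), (p+1, q)} : Set (ℤ×ℤ)) ↔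
      (v = (p,q+1) ∨ v = (p+1,q)) := by intro v; simp [Set.mem_insert_iff]
  have hmemWS : ∀ v : ℤ×ℤ, v ∈ ({(p-1, q), (p, q-1)} : Set (ℤ×ℤ)) ↔
      (v = (p-1,q) ∨ v = (p,q-1)) := by intro v; simp [Set.mem_insert_iff]
  -- rewrite the six matching sums as finite sums
  rw [AzAux.mSum_full_eq n ω]
  simp only [AzAux.mSum_eq n ω]
  rw [Finset.sum_mul_sum, Finset.sum_mul_sum, Finset.sum_mul_sum]
  rw [← Finset.sum_product', ← Finset.sum_product', ← Finset.sum_product']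
  -- disjointness of the two target squares
  have hdisjT : Disjoint
      ((AzAux.pm_finite n {(p, q+1), (p-1, q)}).toFinset ×ˢ
        (AzAux.pm_finite n {(p+1, q), (p, q-1)}).toFinset)
      ((AzAux.pm_finite n {(p, q+1), (p+1, q)}).toFinset ×ˢ
        (AzAux.pm_finite n {(p-1, q), (p, q-1)}).toFinset) := by
    rw [Finset.disjoint_left]
    rintro ⟨A1, A2⟩ h1 h2
    rw [Finset.mem_product] at h1 h2
    have hA1a := (Set.Finite.mem_toFinset _).mp h1.1
    have hA1b := (Set.Finite.mem_toFinset _).mp h2.1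
    obtain ⟨e, ⟨heA, hEe⟩, -⟩ := hA1a.2 (p+1,q)
      ⟨hEV0, fun hmem => by rcases (hmemNW _).mp hmem with h | h
                            · exact hNE h.symm
                            · exact hWE h.symm⟩
    exact (AzAux.delVerts_mem_edgeSet.mp (hA1b.1 e heA)).2 _ hEe
      ((hmemNE _).mpr (Or.inr rfl))
  rw [← Finset.sum_union hdisjT]
  -- the bijection
  refine Finset.sum_nbij' (AzAux.gswap (p, q+1)) (AzAux.gswap (p, q+1)) ?_ ?_
    (fun MM _ => AzAux.gswap_invol _ MM) (fun MM _ => AzAux.gswap_invol _ MM)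
    (fun MM _ => (AzAux.gswap_prod ω (p,q+1) MM).symm) 
  · -- forward typing : LHS pairs to the union
    rintro ⟨M1, M2⟩ hMM
    rw [Finset.mem_product] at hMM
    have hM1 := (Set.Finite.mem_toFinset _).mp hMM.1
    have hM2 := (Set.Finite.mem_toFinset _).mp hMM.2
    obtain ⟨x, hxWE', hreach, -⟩ := AzAux.master p q hGV0 hGdiag hshape hNV0 hWV0 hEV0 hSV0
      (T1 := (∅ : Set (ℤ×ℤ))) (T2 := {(p, q+1), (p-1, q), (p+1, q), (p, q-1)})
      (fun v hv => absurd hv (Set.notMem_empty v))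
      (fun v hv => (hmem4 v).mp hv)
      (fun v hv => Or.inr ((hmem4 v).mpr hv))
      (fun v hv _ => Set.notMem_empty v hv)
      hM1 hM2
    have hDdiag12 : ∀ e ∈ AzAux.sdm M1 M2, ¬ e.IsDiag := by
      intro e he
      rcases AzAux.mem_sdm.mp he with ⟨h, -⟩ | ⟨h, -⟩
      · exact hGdiag e (AzAux.delVerts_mem_edgeSet.mp (hM1.1 e h)).1
      · exact hGdiag e (AzAux.delVerts_mem_edgeSet.mp (hM2.1 e h)).1
    have hDdiag21 : ∀ e ∈ AzAux.sdm M2 M1, ¬ e.IsDiag := by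
      rw [AzAux.sdm_comm M2 M1]; exact hDdiag12
    have hA := AzAux.swap_isPM (N := ((p,q+1) : ℤ×ℤ)) hGV0 hDdiag12 hM1 hM2
    have hB := AzAux.swap_isPM (N := ((p,q+1) : ℤ×ℤ)) hGV0 hDdiag21 hM2 hM1
    rw [AzAux.sdm_comm M2 M1] at hB
    rcases hxWE' with rfl | rfl
    · -- x = W : result is a type-1 pair
      have hT1eq : (((∅ : Set (ℤ×ℤ)) \ {v | reach (sdm M1 M2) ((p,q+1):ℤ×ℤ) v})
          ∪ (({(p, q+1), (p-1, q), (p+1, q), (p, q-1)} : Set (ℤ×ℤ))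
              ∩ {v | reach (sdm M1 M2) ((p,q+1):ℤ×ℤ) v}))
          = ({(p, q+1), (p-1, q)} : Set (ℤ×ℤ)) := by
        ext v
        rw [Set.mem_union, Set.mem_diff, Set.mem_inter_iff, Set.mem_setOf_eq]
        constructor
        · rintro (⟨hf, -⟩ | ⟨hvT4, hr⟩)
          · exact absurd hf (Set.notMem_empty v)
          · rcases (hreach v ((hmem4 v).mp hvT4)).mp hr with rfl | rfl
            · exact (hmemNW _).mpr (Or.inl rfl)
            · exact (hmemNW _).mpr (Or.inr rfl)
        · intro hv
          rcases (hmemNW v).mp hv with rfl | rfl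
          · exact Or.inr ⟨(hmem4 _).mpr (Or.inl rfl),
              (hreach _ (Or.inl rfl)).mpr (Or.inl rfl)⟩
          · exact Or.inr ⟨(hmem4 _).mpr (Or.inr (Or.inl rfl)),
              (hreach _ (Or.inr (Or.inl rfl))).mpr (Or.inr rfl)⟩
      have hT2eq : ((({(p, q+1), (p-1, q), (p+1, q), (p, q-1)} : Set (ℤ×ℤ))
            \ {v | reach (sdm M1 M2) ((p,q+1):ℤ×ℤ) v})
          ∪ ((∅ : Set (ℤ×ℤ)) ∩ {v | reach (sdm M1 M2) ((p,q+1):ℤ×ℤ) v}))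
          = ({(p+1, q), (p, q-1)} : Set (ℤ×ℤ)) := by
        ext v
        rw [Set.mem_union, Set.mem_diff, Set.mem_inter_iff, Set.mem_setOf_eq]
        constructor
        · rintro (⟨hvT4, hnr⟩ | ⟨hf, -⟩)
          · rcases (hmem4 v).mp hvT4 with rfl | rfl | rfl | rfl
            · exact absurd ((hreach _ (Or.inl rfl)).mpr (Or.inl rfl)) hnr
            · exact absurd ((hreach _ (Or.inr (Or.inl rfl))).mpr (Or.inr rfl)) hnr
            · exact (hmemES _).mpr (Or.inl rfl)
            · exact (hmemES _).mpr (Or.inr rfl)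
          · exact absurd hf (Set.notMem_empty v)
        · intro hv
          rcases (hmemES v).mp hv with rfl | rfl
          · refine Or.inl ⟨(hmem4 _).mpr (Or.inr (Or.inr (Or.inl rfl))), fun hr => ?_⟩
            rcases (hreach _ (Or.inr (Or.inr (Or.inl rfl)))).mp hr with h | h
            · exact hNE h.symm
            · exact hWE h.symm
          · refine Or.inl ⟨(hmem4 _).mpr (Or.inr (Or.inr (Or.inr rfl))), fun hr => ?_⟩
            rcases (hreach _ (Or.inr (Or.inr (Or.inr rfl)))).mp hr with h | h
            · exact hNS h.symm
            · exact hWS h.symm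
      rw [hT1eq] at hA
      rw [hT2eq] at hB
      apply Finset.mem_union_left
      rw [Finset.mem_product]
      exact ⟨(Set.Finite.mem_toFinset _).mpr hA, (Set.Finite.mem_toFinset _).mpr hB⟩
    · -- x = E : result is a type-2 pair
      have hT1eq : (((∅ : Set (ℤ×ℤ)) \ {v | reach (sdm M1 M2) ((p,q+1):ℤ×ℤ) v})
          ∪ (({(p, q+1), (p-1, q), (p+1, q), (p, q-1)} : Set (ℤ×ℤ))
              ∩ {v | reach (sdm M1 M2) ((p,q+1):ℤ×ℤ) v}))
          = ({(p, q+1), (p+1, q)} : Set (ℤ×ℤ)) := by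
        ext v
        rw [Set.mem_union, Set.mem_diff, Set.mem_inter_iff, Set.mem_setOf_eq]
        constructor
        · rintro (⟨hf, -⟩ | ⟨hvT4, hr⟩)
          · exact absurd hf (Set.notMem_empty v)
          · rcases (hreach v ((hmem4 v).mp hvT4)).mp hr with rfl | rfl
            · exact (hmemNE _).mpr (Or.inl rfl)
            · exact (hmemNE _).mpr (Or.inr rfl)
        · intro hv
          rcases (hmemNE v).mp hv with rfl | rfl
          · exact Or.inr ⟨(hmem4 _).mpr (Or.inl rfl),
              (hreach _ (Or.inl rfl)).mpr (Or.inl rfl)⟩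
          · exact Or.inr ⟨(hmem4 _).mpr (Or.inr (Or.inr (Or.inl rfl))),
              (hreach _ (Or.inr (Or.inr (Or.inl rfl)))).mpr (Or.inr rfl)⟩
      have hT2eq : ((({(p, q+1), (p-1, q), (p+1, q), (p, q-1)} : Set (ℤ×ℤ))
            \ {v | reach (sdm M1 M2) ((p,q+1):ℤ×ℤ) v})
          ∪ ((∅ : Set (ℤ×ℤ)) ∩ {v | reach (sdm M1 M2) ((p,q+1):ℤ×ℤ) v}))
          = ({(p-1, q), (p, q-1)} : Set (ℤ×ℤ)) := by
        ext v
        rw [Set.mem_union, Set.mem_diff, Set.mem_inter_iff, Set.mem_setOf_eq]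
        constructor
        · rintro (⟨hvT4, hnr⟩ | ⟨hf, -⟩)
          · rcases (hmem4 v).mp hvT4 with rfl | rfl | rfl | rfl
            · exact absurd ((hreach _ (Or.inl rfl)).mpr (Or.inl rfl)) hnr
            · exact (hmemWS _).mpr (Or.inl rfl)
            · exact absurd ((hreach _ (Or.inr (Or.inr (Or.inl rfl)))).mpr (Or.inr rfl)) hnr
            · exact (hmemWS _).mpr (Or.inr rfl)
          · exact absurd hf (Set.notMem_empty v)
        · intro hv
          rcases (hmemWS v).mp hv with rfl | rfl
          · refine Or.inl ⟨(hmem4 _).mpr (Or.inr (Or.inl rfl)), fun hr => ?_⟩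
            rcases (hreach _ (Or.inr (Or.inl rfl))).mp hr with h | h
            · exact hNW h.symm
            · exact hWE h
          · refine Or.inl ⟨(hmem4 _).mpr (Or.inr (Or.inr (Or.inr rfl))), fun hr => ?_⟩
            rcases (hreach _ (Or.inr (Or.inr (Or.inr rfl)))).mp hr with h | h
            · exact hNS h.symm
            · exact hES h.symm
      rw [hT1eq] at hA
      rw [hT2eq] at hB
      apply Finset.mem_union_right
      rw [Finset.mem_product]
      exact ⟨(Set.Finite.mem_toFinset _).mpr hA, (Set.Finite.mem_toFinset _).mpr hB⟩
  · -- backward typing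
    rintro ⟨M1, M2⟩ hMM
    rw [Finset.mem_union] at hMM
    have htwo : ((2:ℤ) : ZMod 2) = 0 := by decide
    rcases hMM with hMM | hMM
    · -- type-1 pair : T1 = {N,W}, T2 = {E,S}
      rw [Finset.mem_product] at hMM
      have hM1 := (Set.Finite.mem_toFinset _).mp hMM.1
      have hM2 := (Set.Finite.mem_toFinset _).mp hMM.2
      obtain ⟨x, hxWE', hreach, hθ⟩ := AzAux.master p q hGV0 hGdiag hshape hNV0 hWV0 hEV0 hSV0
        (T1 := ({(p, q+1), (p-1, q)} : Set (ℤ×ℤ)))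
        (T2 := ({(p+1, q), (p, q-1)} : Set (ℤ×ℤ)))
        (fun v hv => by
          rcases (hmemNW v).mp hv with rfl | rfl
          · exact Or.inl rfl
          · exact Or.inr (Or.inl rfl))
        (fun v hv => by
          rcases (hmemES v).mp hv with rfl | rfl
          · exact Or.inr (Or.inr (Or.inl rfl))
          · exact Or.inr (Or.inr (Or.inr rfl)))
        (fun v hv => by
          rcases hv with rfl | rfl | rfl | rfl
          · exact Or.inl ((hmemNW _).mpr (Or.inl rfl))
          · exact Or.inl ((hmemNW _).mpr (Or.inr rfl))
          · exact Or.inr ((hmemES _).mpr (Or.inl rfl))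
          · exact Or.inr ((hmemES _).mpr (Or.inr rfl)))
        (fun v hv1 hv2 => by
          rcases (hmemNW v).mp hv1 with h1 | h1 <;> rcases (hmemES v).mp hv2 with h2 | h2
          · exact hNE (h1.symm.trans h2)
          · exact hNS (h1.symm.trans h2)
          · exact hWE (h1.symm.trans h2)
          · exact hWS (h1.symm.trans h2))
        hM1 hM2
      have hx : x = ((p-1,q) : ℤ×ℤ) := by
        rcases hxWE' with h | h
        · exact h
        · exfalso
          subst h
          rw [if_pos ((hmemNW _).mpr (Or.inl rfl)),
            if_neg (fun hmem => by
              rcases (hmemNW _).mp hmem with h' | h'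
              · exact hNE h'.symm
              · exact hWE h'.symm)] at hθ
          have hθ' : ((p:ℤ) : ZMod 2) + (((p+1 : ℤ)) : ZMod 2) + 1 + 0 = 1 := hθ
          push_cast at hθ'
          have hone : (1 : ZMod 2) = 0 := by
            linear_combination (((p:ℤ):ZMod 2) + 1) * htwo - hθ'
          exact one_ne_zero hone
      subst hx
      have hDdiag12 : ∀ e ∈ AzAux.sdm M1 M2, ¬ e.IsDiag := by
        intro e he
        rcases AzAux.mem_sdm.mp he with ⟨h, -⟩ | ⟨h, -⟩
        · exact hGdiag e (AzAux.delVerts_mem_edgeSet.mp (hM1.1 e h)).1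
        · exact hGdiag e (AzAux.delVerts_mem_edgeSet.mp (hM2.1 e h)).1
      have hDdiag21 : ∀ e ∈ AzAux.sdm M2 M1, ¬ e.IsDiag := by
        rw [AzAux.sdm_comm M2 M1]; exact hDdiag12
      have hA := AzAux.swap_isPM (N := ((p,q+1) : ℤ×ℤ)) hGV0 hDdiag12 hM1 hM2
      have hB := AzAux.swap_isPM (N := ((p,q+1) : ℤ×ℤ)) hGV0 hDdiag21 hM2 hM1
      rw [AzAux.sdm_comm M2 M1] at hB
      have hT1eq : ((({(p, q+1), (p-1, q)} : Set (ℤ×ℤ))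
            \ {v | reach (sdm M1 M2) ((p,q+1):ℤ×ℤ) v})
          ∪ (({(p+1, q), (p, q-1)} : Set (ℤ×ℤ))
              ∩ {v | reach (sdm M1 M2) ((p,q+1):ℤ×ℤ) v}))
          = (∅ : Set (ℤ×ℤ)) := by
        ext v
        rw [Set.mem_union, Set.mem_diff, Set.mem_inter_iff, Set.mem_setOf_eq]
        constructor
        · rintro (⟨hvT1, hnr⟩ | ⟨hvT2, hr⟩)
          · rcases (hmemNW v).mp hvT1 with rfl | rfl
            · exact absurd ((hreach _ (Or.inl rfl)).mpr (Or.inl rfl)) hnr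
            · exact absurd ((hreach _ (Or.inr (Or.inl rfl))).mpr (Or.inr rfl)) hnr
          · rcases (hmemES v).mp hvT2 with rfl | rfl
            · rcases (hreach _ (Or.inr (Or.inr (Or.inl rfl)))).mp hr with h | h
              · exact absurd h.symm hNE
              · exact absurd h.symm hWE
            · rcases (hreach _ (Or.inr (Or.inr (Or.inr rfl)))).mp hr with h | h
              · exact absurd h.symm hNS
              · exact absurd h.symm hWS
        · intro hv
          exact absurd hv (Set.notMem_empty v)
      have hT2eq : ((({(p+1, q), (p, q-1)} : Set (ℤ×ℤ))
            \ {v | reach (sdm M1 M2) ((p,q+1):ℤ×ℤ) v})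
          ∪ (({(p, q+1), (p-1, q)} : Set (ℤ×ℤ))
              ∩ {v | reach (sdm M1 M2) ((p,q+1):ℤ×ℤ) v}))
          = ({(p, q+1), (p-1, q), (p+1, q), (p, q-1)} : Set (ℤ×ℤ)) := by
        ext v
        rw [Set.mem_union, Set.mem_diff, Set.mem_inter_iff, Set.mem_setOf_eq]
        constructor
        · rintro (⟨hvT2, -⟩ | ⟨hvT1, -⟩)
          · rcases (hmemES v).mp hvT2 with rfl | rfl
            · exact (hmem4 _).mpr (Or.inr (Or.inr (Or.inl rfl)))
            · exact (hmem4 _).mpr (Or.inr (Or.inr (Or.inr rfl)))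
          · rcases (hmemNW v).mp hvT1 with rfl | rfl
            · exact (hmem4 _).mpr (Or.inl rfl)
            · exact (hmem4 _).mpr (Or.inr (Or.inl rfl))
        · intro hv
          rcases (hmem4 v).mp hv with rfl | rfl | rfl | rfl
          · exact Or.inr ⟨(hmemNW _).mpr (Or.inl rfl),
              (hreach _ (Or.inl rfl)).mpr (Or.inl rfl)⟩
          · exact Or.inr ⟨(hmemNW _).mpr (Or.inr rfl),
              (hreach _ (Or.inr (Or.inl rfl))).mpr (Or.inr rfl)⟩
          · refine Or.inl ⟨(hmemES _).mpr (Or.inl rfl), fun hr => ?_⟩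
            rcases (hreach _ (Or.inr (Or.inr (Or.inl rfl)))).mp hr with h | h
            · exact hNE h.symm
            · exact hWE h.symm
          · refine Or.inl ⟨(hmemES _).mpr (Or.inr rfl), fun hr => ?_⟩
            rcases (hreach _ (Or.inr (Or.inr (Or.inr rfl)))).mp hr with h | h
            · exact hNS h.symm
            · exact hWS h.symm
      rw [hT1eq] at hA
      rw [hT2eq] at hB
      rw [Finset.mem_product]
      exact ⟨(Set.Finite.mem_toFinset _).mpr hA, (Set.Finite.mem_toFinset _).mpr hB⟩
    · -- type-2 pair : T1 = {N,E}, T2 = {W,S}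
      rw [Finset.mem_product] at hMM
      have hM1 := (Set.Finite.mem_toFinset _).mp hMM.1
      have hM2 := (Set.Finite.mem_toFinset _).mp hMM.2
      obtain ⟨x, hxWE', hreach, hθ⟩ := AzAux.master p q hGV0 hGdiag hshape hNV0 hWV0 hEV0 hSV0
        (T1 := ({(p, q+1), (p+1, q)} : Set (ℤ×ℤ)))
        (T2 := ({(p-1, q), (p, q-1)} : Set (ℤ×ℤ)))
        (fun v hv => by
          rcases (hmemNE v).mp hv with rfl | rfl
          · exact Or.inl rfl
          · exact Or.inr (Or.inr (Or.inl rfl)))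
        (fun v hv => by
          rcases (hmemWS v).mp hv with rfl | rfl
          · exact Or.inr (Or.inl rfl)
          · exact Or.inr (Or.inr (Or.inr rfl)))
        (fun v hv => by
          rcases hv with rfl | rfl | rfl | rfl
          · exact Or.inl ((hmemNE _).mpr (Or.inl rfl))
          · exact Or.inr ((hmemWS _).mpr (Or.inl rfl))
          · exact Or.inl ((hmemNE _).mpr (Or.inr rfl))
          · exact Or.inr ((hmemWS _).mpr (Or.inr rfl)))
        (fun v hv1 hv2 => by
          rcases (hmemNE v).mp hv1 with h1 | h1 <;> rcases (hmemWS v).mp hv2 with h2 | h2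
          · exact hNW (h1.symm.trans h2)
          · exact hNS (h1.symm.trans h2)
          · exact hWE (h2.symm.trans h1)
          · exact hES (h1.symm.trans h2))
        hM1 hM2
      have hx : x = ((p+1,q) : ℤ×ℤ) := by
        rcases hxWE' with h | h
        · exfalso
          subst h
          rw [if_pos ((hmemNE _).mpr (Or.inl rfl)),
            if_neg (fun hmem => by
              rcases (hmemNE _).mp hmem with h' | h'
              · exact hNW h'.symm
              · exact hWE h')] at hθ
          have hθ' : ((p:ℤ) : ZMod 2) + (((p-1 : ℤ)) : ZMod 2) + 1 + 0 = 1 := hθ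
          push_cast at hθ'
          have hone : (1 : ZMod 2) = 0 := by
            linear_combination ((p:ℤ):ZMod 2) * htwo - hθ'
          exact one_ne_zero hone
        · exact h
      subst hx
      have hDdiag12 : ∀ e ∈ AzAux.sdm M1 M2, ¬ e.IsDiag := by
        intro e he
        rcases AzAux.mem_sdm.mp he with ⟨h, -⟩ | ⟨h, -⟩
        · exact hGdiag e (AzAux.delVerts_mem_edgeSet.mp (hM1.1 e h)).1
        · exact hGdiag e (AzAux.delVerts_mem_edgeSet.mp (hM2.1 e h)).1
      have hDdiag21 : ∀ e ∈ AzAux.sdm M2 M1, ¬ e.IsDiag := by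
        rw [AzAux.sdm_comm M2 M1]; exact hDdiag12
      have hA := AzAux.swap_isPM (N := ((p,q+1) : ℤ×ℤ)) hGV0 hDdiag12 hM1 hM2
      have hB := AzAux.swap_isPM (N := ((p,q+1) : ℤ×ℤ)) hGV0 hDdiag21 hM2 hM1
      rw [AzAux.sdm_comm M2 M1] at hB
      have hT1eq : ((({(p, q+1), (p+1, q)} : Set (ℤ×ℤ))
            \ {v | reach (sdm M1 M2) ((p,q+1):ℤ×ℤ) v})
          ∪ (({(p-1, q), (p, q-1)} : Set (ℤ×ℤ))
              ∩ {v | reach (sdm M1 M2) ((p,q+1):ℤ×ℤ) v}))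
          = (∅ : Set (ℤ×ℤ)) := by
        ext v
        rw [Set.mem_union, Set.mem_diff, Set.mem_inter_iff, Set.mem_setOf_eq]
        constructor
        · rintro (⟨hvT1, hnr⟩ | ⟨hvT2, hr⟩)
          · rcases (hmemNE v).mp hvT1 with rfl | rfl
            · exact absurd ((hreach _ (Or.inl rfl)).mpr (Or.inl rfl)) hnr
            · exact absurd ((hreach _ (Or.inr (Or.inr (Or.inl rfl)))).mpr (Or.inr rfl)) hnr
          · rcases (hmemWS v).mp hvT2 with rfl | rfl
            · rcases (hreach _ (Or.inr (Or.inl rfl))).mp hr with h | h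
              · exact absurd h.symm hNW
              · exact absurd h hWE
            · rcases (hreach _ (Or.inr (Or.inr (Or.inr rfl)))).mp hr with h | h
              · exact absurd h.symm hNS
              · exact absurd h.symm hES
        · intro hv
          exact absurd hv (Set.notMem_empty v)
      have hT2eq : ((({(p-1, q), (p, q-1)} : Set (ℤ×ℤ))
            \ {v | reach (sdm M1 M2) ((p,q+1):ℤ×ℤ) v})
          ∪ (({(p, q+1), (p+1, q)} : Set (ℤ×ℤ))
              ∩ {v | reach (sdm M1 M2) ((p,q+1):ℤ×ℤ) v}))
          = ({(p, q+1), (p-1, q), (p+1, q), (p, q-1)} : Set (ℤ×ℤ)) := by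
        ext v
        rw [Set.mem_union, Set.mem_diff, Set.mem_inter_iff, Set.mem_setOf_eq]
        constructor
        · rintro (⟨hvT2, -⟩ | ⟨hvT1, -⟩)
          · rcases (hmemWS v).mp hvT2 with rfl | rfl
            · exact (hmem4 _).mpr (Or.inr (Or.inl rfl))
            · exact (hmem4 _).mpr (Or.inr (Or.inr (Or.inr rfl)))
          · rcases (hmemNE v).mp hvT1 with rfl | rfl
            · exact (hmem4 _).mpr (Or.inl rfl)
            · exact (hmem4 _).mpr (Or.inr (Or.inr (Or.inl rfl)))
        · intro hv
          rcases (hmem4 v).mp hv with rfl | rfl | rfl | rfl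
          · exact Or.inr ⟨(hmemNE _).mpr (Or.inl rfl),
              (hreach _ (Or.inl rfl)).mpr (Or.inl rfl)⟩
          · refine Or.inl ⟨(hmemWS _).mpr (Or.inl rfl), fun hr => ?_⟩
            rcases (hreach _ (Or.inr (Or.inl rfl))).mp hr with h | h
            · exact hNW h.symm
            · exact hWE h
          · exact Or.inr ⟨(hmemNE _).mpr (Or.inr rfl),
              (hreach _ (Or.inr (Or.inr (Or.inl rfl)))).mpr (Or.inr rfl)⟩
          · refine Or.inl ⟨(hmemWS _).mpr (Or.inr rfl), fun hr => ?_⟩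
            rcases (hreach _ (Or.inr (Or.inr (Or.inr rfl)))).mp hr with h | h
            · exact hNS h.symm
            · exact hES h.symm
      rw [hT1eq] at hA
      rw [hT2eq] at hB
      rw [Finset.mem_product]
      exact ⟨(Set.Finite.mem_toFinset _).mpr hA, (Set.Finite.mem_toFinset _).mpr hB⟩
end
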